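/- arXiv:0708.2347 — 14 statements merged into one kernel-verified Lean document; each statement's English description precedes it below -/
import Mathlib

section
/- For all integers r, s and all natural numbers n, the following identity holds: p·Δ·(Σ_{i=0}^{n} U_{r+2i}·U_{s+2i}) = U_{4n+r+s+2} − U_{r+s−2} − (n+1)·p·q^r·V_{s−r}. (This is the denominator-cleared form of S_n^{(r,s)}(U) = p^{-1}Δ^{-1}[U_{4n+r+s+2} − U_{r+s−2}] − (n+1)Δ^{-1}q^r·V_{s−r}.) -/
private lemma lemA (p q : ℤ) (hq2 : q * q = 1) (f : ℤ → ℤ)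
    (hf : ∀ n : ℤ, f (n + 2) = p * f (n + 1) - q * f n)
    (h0 : f 0 = 0) (h1 : f 1 = 0) : ∀ n : ℤ, f n = 0 := by
  have key : ∀ n : ℤ, f n = 0 ∧ f (n + 1) = 0 := by
    intro n
    induction n using Int.induction_on with
    | zero => exact ⟨h0, by simpa using h1⟩
    | succ i ih =>
        refine ⟨ih.2, ?_⟩
        have h2 := hf i
        rw [ih.1, ih.2] at h2
        rw [show ((i : ℤ) + 1 + 1) = (i : ℤ) + 2 by ring, h2]; ring
    | pred i ih =>
        have h2 := hf (-(i : ℤ) - 1)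
        rw [show (-(i:ℤ) - 1 + 2) = -(i:ℤ) + 1 by ring,
            show (-(i:ℤ) - 1 + 1) = -(i:ℤ) by ring] at h2
        rw [ih.1, ih.2] at h2
        have h3 : q * f (-(i:ℤ) - 1) = 0 := by linarith
        have h4 : f (-(i:ℤ) - 1) = q * (q * f (-(i:ℤ) - 1)) := by
          rw [← mul_assoc, hq2, one_mul]
        refine ⟨by rw [h4, h3, mul_zero], ?_⟩
        rw [show (-(i:ℤ) - 1 + 1) = -(i:ℤ) by ring]; exact ih.1
  exact fun n => (key n).1

private lemma lemE (q : ℤ) (hq : q = 1 ∨ q = -1) (a : ℤ) :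
    q ^ (a + 1).natAbs = q * q ^ a.natAbs := by
  rcases hq with h | h
  · subst h; simp
  · subst h
    rcases Int.even_or_odd a with he | ho
    · have h1 : Even a.natAbs := Int.natAbs_even.mpr he
      have h2 : Odd (a + 1).natAbs := Int.natAbs_odd.mpr (Even.add_one he)
      rw [h1.neg_one_pow, h2.neg_one_pow]; ring
    · have h1 : Odd a.natAbs := Int.natAbs_odd.mpr ho
      have h2 : Even (a + 1).natAbs := Int.natAbs_even.mpr (Odd.add_one ho)
      rw [h1.neg_one_pow, h2.neg_one_pow]; ring

private lemma lemE2 (q : ℤ) (hq : q = 1 ∨ q = -1) (a : ℤ) :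
    q ^ (a + 2).natAbs = q ^ a.natAbs := by
  have hq2 : q * q = 1 := by rcases hq with h | h <;> subst h <;> norm_num
  have h1 := lemE q hq (a + 1)
  have h2 := lemE q hq a
  rw [show a + 2 = a + 1 + 1 by ring, h1, h2, ← mul_assoc, hq2, one_mul]

theorem stmt_0 (p q : ℤ) (hp : p ≠ 0) (hq : q = 1 ∨ q = -1)
    (hΔ : p ^ 2 - 4 * q ≠ 0)
    (U V : ℤ → ℤ)
    (hU0 : U 0 = 0) (hU1 : U 1 = 1)
    (hUrec : ∀ n : ℤ, U n = p * U (n - 1) - q * U (n - 2))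
    (hV0 : V 0 = 2) (hV1 : V 1 = p)
    (hVrec : ∀ n : ℤ, V n = p * V (n - 1) - q * V (n - 2))
    (r s : ℤ) (n : ℕ) :
    p * (p ^ 2 - 4 * q) * (∑ i ∈ Finset.range (n + 1), U (r + 2 * i) * U (s + 2 * i)) =
      U (4 * n + r + s + 2) - U (r + s - 2) - ((n : ℤ) + 1) * p * q ^ r.natAbs * V (s - r) := by
  have hq2 : q * q = 1 := by rcases hq with h | h <;> subst h <;> norm_num
  have hU : ∀ m : ℤ, U (m + 2) = p * U (m + 1) - q * U m := by
    intro m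
    have h := hUrec (m + 2)
    rw [show m + 2 - 1 = m + 1 by ring, show m + 2 - 2 = m by ring] at h
    exact h
  have hV : ∀ m : ℤ, V (m + 2) = p * V (m + 1) - q * V m := by
    intro m
    have h := hVrec (m + 2)
    rw [show m + 2 - 1 = m + 1 by ring, show m + 2 - 2 = m by ring] at h
    exact h
  -- small values
  have hUm1 : U (-1) = -q := by
    have h := hU (-1)
    norm_num [hU0, hU1] at h
    linear_combination q * h - U (-1) * hq2
  have hUm2 : U (-2) = -p := by
    have h := hU (-2)
    rw [show (-2 : ℤ) + 2 = 0 by ring, show (-2:ℤ) + 1 = -1 by ring, hU0, hUm1] at h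
    linear_combination q * h - (U (-2) + p) * hq2
  have hVm1 : V (-1) = q * p := by
    have h := hV (-1)
    rw [show (-1 : ℤ) + 2 = 1 by ring, show (-1:ℤ) + 1 = 0 by ring, hV0, hV1] at h
    linear_combination q * h - V (-1) * hq2
  -- L2 : p * V m = U (m+2) - U (m-2)
  have L2 : ∀ m : ℤ, U (m + 2) - U (m - 2) - p * V m = 0 := by
    refine lemA p q hq2 (fun m => U (m + 2) - U (m - 2) - p * V m) ?_ ?_ ?_
    · intro m
      have a1 := hU (m + 2)
      have a2 := hU (m - 2)
      have a3 := hV m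
      linear_combination (norm := ring_nf) a1 - a2 - p * a3
    · norm_num [hV0]
      have h := hU 0
      norm_num [hU0, hU1] at h
      rw [h, hUm2]; ring
    · norm_num [hV1]
      have h2 := hU 0
      norm_num [hU0, hU1] at h2
      have h3 := hU 1
      rw [show (1:ℤ) + 2 = 3 by ring, show (1:ℤ) + 1 = 2 by ring, h2, hU1] at h3
      rw [h3, hUm1]; ring
  -- B1 : V a = q^a * V (-a)
  have B1 : ∀ a : ℤ, V a - q ^ a.natAbs * V (-a) = 0 := by
    refine lemA p q hq2 (fun a => V a - q ^ a.natAbs * V (-a)) ?_ ?_ ?_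
    · intro a
      rw [lemE2 q hq a, lemE q hq a]
      have a3 := hV a
      have b3 := hV (-(a + 2))
      rw [show -(a+2) + 2 = -a by ring, show -(a+2) + 1 = -a - 1 by ring] at b3
      rw [show -(a+1) = -a - 1 by ring]
      linear_combination (norm := ring_nf) a3 - q * q ^ a.natAbs * b3 +
        q ^ a.natAbs * V (-(a + 2)) * hq2
    · norm_num
    · rw [show ((1:ℤ)).natAbs = 1 from rfl, pow_one, hV1, hVm1]
      linear_combination -p * hq2
  -- B2 : Δ U a = V (a+1) - q^a V (1-a)
  have B2 : ∀ a : ℤ, (p ^ 2 - 4 * q) * U a - V (a + 1) + q ^ a.natAbs * V (1 - a) = 0 := by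
    refine lemA p q hq2 (fun a => (p ^ 2 - 4 * q) * U a - V (a + 1) + q ^ a.natAbs * V (1 - a)) ?_ ?_ ?_
    · intro a
      rw [lemE2 q hq a, lemE q hq a]
      have a1 := hU a
      have a3 := hV (a + 1)
      have b3 := hV (1 - (a + 2))
      rw [show 1 - (a+2) + 2 = 1 - a by ring, show 1 - (a+2) + 1 = -a by ring] at b3
      linear_combination (norm := ring_nf) (p ^ 2 - 4 * q) * a1 - a3 + q * q ^ a.natAbs * b3 -
        q ^ a.natAbs * V (1 - (a + 2)) * hq2
    · norm_num [hU0]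
    · have hV2 := hV 0
      norm_num [hV0, hV1] at hV2
      rw [show ((1:ℤ)).natAbs = 1 from rfl, pow_one, hU1, show (1:ℤ) + 1 = 2 by ring,
        show (1:ℤ) - 1 = 0 by ring, hV0, hV2]
      ring
  -- L1 : Δ U a U b = V (a+b) - q^a V (b-a)
  have L1 : ∀ a b : ℤ,
      (p ^ 2 - 4 * q) * (U a * U b) - V (a + b) + q ^ a.natAbs * V (b - a) = 0 := by
    intro a
    refine lemA p q hq2
      (fun b => (p ^ 2 - 4 * q) * (U a * U b) - V (a + b) + q ^ a.natAbs * V (b - a)) ?_ ?_ ?_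
    · intro b
      have a1 := hU b
      have a3 := hV (a + b)
      have b3 := hV (b - a)
      linear_combination (norm := ring_nf) (p ^ 2 - 4 * q) * U a * a1 - a3 +
        q ^ a.natAbs * b3
    · linear_combination (norm := ring_nf) (-1 : ℤ) * B1 a + (p ^ 2 - 4 * q) * U a * hU0
    · linear_combination (norm := ring_nf) B2 a + (p ^ 2 - 4 * q) * U a * hU1
  -- per-term identity
  have T : ∀ a b : ℤ,
      p * (p ^ 2 - 4 * q) * (U a * U b) =
        U (a + b + 2) - U (a + b - 2) - p * q ^ a.natAbs * V (b - a) := by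
    intro a b
    linear_combination (norm := ring_nf) p * L1 a b - L2 (a + b)
  -- q-power stability under +2 shifts
  have hEshift : ∀ i : ℕ, q ^ (r + 2 * (i : ℤ)).natAbs = q ^ r.natAbs := by
    intro i
    induction i with
    | zero => norm_num
    | succ k ih =>
        push_cast
        rw [show r + 2 * ((k : ℤ) + 1) = (r + 2 * (k : ℤ)) + 2 by ring,
          lemE2 q hq, ih]
  -- main induction
  induction n with
  | zero =>
      rw [Finset.sum_range_one]
      push_cast
      linear_combination (norm := ring_nf) T r s
  | succ k ih =>
      rw [Finset.sum_range_succ]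
      have eE := hEshift (k + 1)
      push_cast at ih eE ⊢
      have tt := T (r + 2 * ((k : ℤ) + 1)) (s + 2 * ((k : ℤ) + 1))
      rw [show r + 2 * ((k : ℤ) + 1) + (s + 2 * ((k : ℤ) + 1)) + 2
            = 4 * ((k : ℤ) + 1) + r + s + 2 by ring,
        show r + 2 * ((k : ℤ) + 1) + (s + 2 * ((k : ℤ) + 1)) - 2
            = 4 * (k : ℤ) + r + s + 2 by ring,
        show s + 2 * ((k : ℤ) + 1) - (r + 2 * ((k : ℤ) + 1)) = s - r by ring,
        eE] at tt
      linear_combination ih + tt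
end

section
/- For all integers r, s and all natural numbers n, the following identity holds: p·(Σ_{i=0}^{n} V_{r+2i}·V_{s+2i}) = U_{4n+r+s+2} − U_{r+s−2} + (n+1)·p·q^r·V_{s−r}. -/
/-- parity-power: `QQ q m = q ^ m` when `q ^ 2 = 1`. -/
def QQ (q m : ℤ) : ℤ := if Even m then 1 else q

/-- Uniqueness for two-sided second order recurrences with invertible second coefficient. -/
lemma uniq_rec (A B : ℤ) (hB : B ^ 2 = 1) (f g : ℤ → ℤ)
    (hf : ∀ n : ℤ, f n = A * f (n - 1) - B * f (n - 2))
    (hg : ∀ n : ℤ, g n = A * g (n - 1) - B * g (n - 2))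
    (h0 : f 0 = g 0) (h1 : f 1 = g 1) : ∀ n : ℤ, f n = g n := by
  have key : ∀ n : ℤ, f n = g n ∧ f (n + 1) = g (n + 1) := by
    intro n
    induction n using Int.induction_on with
    | zero => exact ⟨h0, by norm_num [h1]⟩
    | succ k ih =>
        refine ⟨ih.2, ?_⟩
        have hfk := hf ((k : ℤ) + 1 + 1)
        have hgk := hg ((k : ℤ) + 1 + 1)
        rw [show ((k:ℤ) + 1 + 1 - 1) = (k:ℤ) + 1 by ring,
            show ((k:ℤ) + 1 + 1 - 2) = (k:ℤ) by ring] at hfk hgk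
        rw [hfk, hgk, ih.1, ih.2]
    | pred k ih =>
        have hfk := hf (-(k : ℤ) + 1)
        have hgk := hg (-(k : ℤ) + 1)
        rw [show (-(k:ℤ) + 1 - 1) = -(k:ℤ) by ring,
            show (-(k:ℤ) + 1 - 2) = -(k:ℤ) - 1 by ring] at hfk hgk
        rw [ih.1, ih.2] at hfk
        constructor
        · have hB0 : B ≠ 0 := by intro h; simp [h] at hB
          have hBe : B * f (-(k:ℤ) - 1) = B * g (-(k:ℤ) - 1) := by linarith [hfk, hgk]
          exact mul_left_cancel₀ hB0 hBe
        · rw [show (-(k:ℤ) - 1 + 1) = -(k:ℤ) by ring]; exact ih.1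
  exact fun n => (key n).1

theorem stmt_1 (p q : ℤ) (hp : p ≠ 0) (hq : q = 1 ∨ q = -1)
    (hΔ : p ^ 2 - 4 * q ≠ 0)
    (U V : ℤ → ℤ)
    (hU0 : U 0 = 0) (hU1 : U 1 = 1)
    (hUrec : ∀ n : ℤ, U n = p * U (n - 1) - q * U (n - 2))
    (hV0 : V 0 = 2) (hV1 : V 1 = p)
    (hVrec : ∀ n : ℤ, V n = p * V (n - 1) - q * V (n - 2))
    (r s : ℤ) (n : ℕ) :
    p * (∑ i ∈ Finset.range (n + 1), V (r + 2 * i) * V (s + 2 * i)) =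
      U (4 * n + r + s + 2) - U (r + s - 2) + ((n : ℤ) + 1) * p * q ^ r.natAbs * V (s - r) := by
  have q2 : q ^ 2 = 1 := by rcases hq with h | h <;> simp [h]
  -- small values
  have hU2 : U 2 = p := by
    have h := hUrec 2
    rw [show (2:ℤ) - 1 = 1 by norm_num, show (2:ℤ) - 2 = 0 by norm_num, hU0, hU1] at h
    linarith
  have hU3 : U 3 = p ^ 2 - q := by
    have h := hUrec 3
    rw [show (3:ℤ) - 1 = 2 by norm_num, show (3:ℤ) - 2 = 1 by norm_num, hU2, hU1] at h
    linarith [h]; 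
  have hUm1 : U (-1) = -q := by
    have h := hUrec 1
    rw [show (1:ℤ) - 1 = 0 by norm_num, show (1:ℤ) - 2 = -1 by norm_num, hU0, hU1] at h
    linear_combination q * h - U (-1) * q2
  have hUm2 : U (-2) = -p := by
    have h := hUrec 0
    rw [show (0:ℤ) - 1 = -1 by norm_num, show (0:ℤ) - 2 = -2 by norm_num, hU0, hUm1] at h
    linear_combination q * h - (U (-2) + p) * q2
  have hVm1 : V (-1) = p * q := by
    have h := hVrec 1
    rw [show (1:ℤ) - 1 = 0 by norm_num, show (1:ℤ) - 2 = -1 by norm_num, hV0, hV1] at h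
    linear_combination q * h - V (-1) * q2
  -- p * V m = U (m+2) - U (m-2)
  have pV : ∀ m : ℤ, p * V m = U (m + 2) - U (m - 2) := by
    have hf : ∀ n : ℤ, p * V n = p * (p * V (n - 1)) - q * (p * V (n - 2)) := by
      intro n; linear_combination p * hVrec n
    have hg : ∀ n : ℤ, U (n + 2) - U (n - 2)
        = p * (U (n - 1 + 2) - U (n - 1 - 2)) - q * (U (n - 2 + 2) - U (n - 2 - 2)) := by
      intro n
      have h1 := hUrec (n + 2)
      have h2 := hUrec (n - 2)
      rw [show n + 2 - 1 = n - 1 + 2 by ring, show n + 2 - 2 = n - 2 + 2 by ring] at h1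
      rw [show n - 2 - 1 = n - 1 - 2 by ring] at h2
      linear_combination h1 - h2
    exact uniq_rec p q q2 (fun m => p * V m) (fun m => U (m + 2) - U (m - 2)) hf hg
      (by show p * V 0 = U (0 + 2) - U (0 - 2)
          rw [hV0, show (0:ℤ) + 2 = 2 by norm_num, show (0:ℤ) - 2 = -2 by norm_num, hU2, hUm2]; ring)
      (by show p * V 1 = U (1 + 2) - U (1 - 2)
          rw [hV1, show (1:ℤ) + 2 = 3 by norm_num, show (1:ℤ) - 2 = -1 by norm_num, hU3, hUm1]; ring)
  -- V (-m) = QQ q m * V m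
  have Vneg : ∀ m : ℤ, V (-m) = QQ q m * V m := by
    have hf : ∀ n : ℤ, V (-n) = p * q * V (-(n - 1)) - q * V (-(n - 2)) := by
      intro n
      have h := hVrec (-n + 2)
      rw [show -n + 2 - 1 = -(n - 1) by ring, show -n + 2 - 2 = -n by ring] at h
      rw [show -(n - 2) = -n + 2 by ring]
      linear_combination q * h - V (-n) * q2
    have hg : ∀ n : ℤ, QQ q n * V n
        = p * q * (QQ q (n - 1) * V (n - 1)) - q * (QQ q (n - 2) * V (n - 2)) := by
      intro n
      by_cases he : Even n
      · have e1 : QQ q n = 1 := by simp [QQ, he]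
        have e2 : QQ q (n - 1) = q := by simp [QQ, Int.even_sub_one, he]
        have e3 : QQ q (n - 2) = 1 := by simp [QQ, Int.even_sub, he]
        rw [e1, e2, e3]
        linear_combination hVrec n - p * V (n - 1) * q2
      · have e1 : QQ q n = q := by simp [QQ, he]
        have e2 : QQ q (n - 1) = 1 := by simp [QQ, Int.even_sub_one, he]
        have e3 : QQ q (n - 2) = q := by simp [QQ, Int.even_sub, he]
        rw [e1, e2, e3]
        linear_combination q * hVrec n
    exact uniq_rec (p * q) q q2 (fun m => V (-m)) (fun m => QQ q m * V m) hf hg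
      (by show V (-0) = QQ q 0 * V 0; norm_num [QQ])
      (by show V (-1) = QQ q 1 * V 1
          rw [hVm1, hV1]; norm_num [QQ]; ring)
  -- product formula
  have Vmul : ∀ b a : ℤ, V a * V b = V (a + b) + QQ q b * V (a - b) := by
    intro b
    have hf : ∀ n : ℤ, V n * V b = p * (V (n - 1) * V b) - q * (V (n - 2) * V b) := by
      intro n; linear_combination V b * hVrec n
    have hg : ∀ n : ℤ, V (n + b) + QQ q b * V (n - b)
        = p * (V (n - 1 + b) + QQ q b * V (n - 1 - b))
          - q * (V (n - 2 + b) + QQ q b * V (n - 2 - b)) := by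
      intro n
      have h1 := hVrec (n + b)
      have h2 := hVrec (n - b)
      rw [show n + b - 1 = n - 1 + b by ring, show n + b - 2 = n - 2 + b by ring] at h1
      rw [show n - b - 1 = n - 1 - b by ring, show n - b - 2 = n - 2 - b by ring] at h2
      linear_combination h1 + QQ q b * h2
    refine uniq_rec p q q2 (fun a => V a * V b) (fun a => V (a + b) + QQ q b * V (a - b)) hf hg ?_ ?_
    · show V 0 * V b = V (0 + b) + QQ q b * V (0 - b)
      rw [hV0, show (0:ℤ) + b = b by ring, show (0:ℤ) - b = -b by ring, Vneg b]
      have e0 : QQ q b * QQ q b = 1 := by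
        by_cases heb : Even b
        · simp [QQ, heb]
        · simp only [QQ, if_neg heb]; linear_combination q2
      linear_combination (-(V b)) * e0
    · show V 1 * V b = V (1 + b) + QQ q b * V (1 - b)
      rw [hV1, show (1:ℤ) - b = -(b - 1) by ring, Vneg (b - 1), show (1:ℤ) + b = b + 1 by ring]
      have h := hVrec (b + 1)
      rw [show b + 1 - 1 = b by ring, show b + 1 - 2 = b - 1 by ring] at h
      have e : QQ q b * QQ q (b - 1) = q := by
        by_cases heb : Even b
        · rw [show QQ q b = 1 from by simp [QQ, heb],
            show QQ q (b - 1) = q from by simp [QQ, Int.even_sub_one, heb]]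
          ring
        · rw [show QQ q b = q from by simp [QQ, heb],
            show QQ q (b - 1) = 1 from by simp [QQ, Int.even_sub_one, heb]]
          ring
      linear_combination -h - V (b - 1) * e
  -- key per-term identity
  have key : ∀ a b : ℤ, p * (V a * V b) = U (a + b + 2) - U (a + b - 2) + p * QQ q b * V (a - b) := by
    intro a b
    rw [Vmul b a]
    linear_combination pV (a + b)
  have hQr : q ^ r.natAbs = QQ q r := by
    rcases hq with h | h <;> subst h
    · simp [QQ]
    · by_cases he : Even r
      · rw [show QQ (-1) r = 1 from if_pos he, Even.neg_one_pow (Int.natAbs_even.mpr he)]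
      · rw [show QQ (-1) r = -1 from if_neg he,
          Odd.neg_one_pow (Int.natAbs_odd.mpr (Int.not_even_iff_odd.mp he))]
  have hQper : ∀ i : ℤ, QQ q (r + 2 * i) = QQ q r := by
    intro i
    have : Even (r + 2 * i) ↔ Even r := by
      constructor
      · intro h; simpa using h.sub (even_two_mul i)
      · intro h; exact h.add (even_two_mul i)
    simp only [QQ, this]
  induction n with
  | zero =>
      have k := key s r
      rw [show s + r + 2 = r + s + 2 by ring, show s + r - 2 = r + s - 2 by ring] at k
      rw [hQr]
      simp only [show (0:ℕ) + 1 = 1 from rfl, Finset.sum_range_one, Nat.cast_zero, mul_zero,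
        add_zero, zero_add, one_mul]
      linear_combination k
  | succ m ih =>
      rw [Finset.sum_range_succ, mul_add, ih]
      have k := key (s + 2 * ((m:ℤ) + 1)) (r + 2 * ((m:ℤ) + 1))
      rw [hQper ((m:ℤ) + 1)] at k
      rw [hQr] at *
      push_cast at k ⊢
      ring_nf at k ⊢
      linarith [k]
end

section
/- For all integers r, s and all natural numbers n, the following identity holds: Δ·V_2·(Σ_{i=0}^{n} (−1)^i·U_{r+2i}·U_{s+2i}) = V_{r+s−2} + (−1)^n·V_{4n+r+s+2} − ε_n·V_2·q^r·V_{s−r}, where ε_n = 1 if n is even and ε_n = 0 if n is odd. -/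
theorem seq_ext' (p q : ℤ) (hq2 : q * q = 1) (f g : ℤ → ℤ)
    (hf : ∀ n : ℤ, f (n + 2) = p * f (n + 1) - q * f n)
    (hg : ∀ n : ℤ, g (n + 2) = p * g (n + 1) - q * g n)
    (h0 : f 0 = g 0) (h1 : f 1 = g 1) : ∀ n : ℤ, f n = g n := by
  have hq0 : q ≠ 0 := by rintro rfl; simp at hq2
  have key : ∀ n : ℤ, f n = g n ∧ f (n + 1) = g (n + 1) := by
    intro n
    induction n using Int.induction_on with
    | zero => exact ⟨h0, by simpa using h1⟩
    | succ k ih =>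
      refine ⟨ih.2, ?_⟩
      have hfk := hf k; have hgk := hg k
      have e : (k : ℤ) + 1 + 1 = k + 2 := by ring
      rw [e, hfk, hgk, ih.1, ih.2]
    | pred k ih =>
      have hfk := hf (-(k:ℤ) - 1); have hgk := hg (-(k:ℤ) - 1)
      have e1 : -(k : ℤ) - 1 + 2 = -k + 1 := by ring
      have e2 : -(k : ℤ) - 1 + 1 = -k := by ring
      rw [e1, e2] at hfk hgk
      rw [ih.1, ih.2] at hfk
      refine ⟨?_, by rw [e2]; exact ih.1⟩
      have h := hfk.symm.trans hgk
      have h2 : q * f (-(k:ℤ) - 1) = q * g (-(k:ℤ) - 1) := by linarith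
      exact mul_left_cancel₀ hq0 h2
  exact fun n => (key n).1

private def Qfib (q k : ℤ) : ℤ := if Even k then 1 else q

theorem Vstep' (p q : ℤ) (V : ℤ → ℤ)
    (hVrec : ∀ n : ℤ, V n = p * V (n - 1) - q * V (n - 2)) (n : ℤ) :
    V (n + 2) = p * V (n + 1) - q * V n := by
  have h := hVrec (n + 2)
  rwa [show n + 2 - 1 = n + 1 from by ring, show n + 2 - 2 = n from by ring] at h

theorem Vback' (p q : ℤ) (hq2 : q * q = 1) (V : ℤ → ℤ)
    (hVrec : ∀ n : ℤ, V n = p * V (n - 1) - q * V (n - 2)) (n : ℤ) :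
    V (n - 1) = q * (p * V n - V (n + 1)) := by
  have h := hVrec (n + 1)
  rw [show n + 1 - 1 = n from by ring, show n + 1 - 2 = n - 1 from by ring] at h
  linear_combination q * h - V (n - 1) * hq2

theorem Qfib_add (q : ℤ) (hq2 : q * q = 1) (a b : ℤ) :
    Qfib q (a + b) = Qfib q a * Qfib q b := by
  unfold Qfib
  rcases Int.even_or_odd a with ha | ha <;> rcases Int.even_or_odd b with hb | hb
  · rw [if_pos (ha.add hb), if_pos ha, if_pos hb, one_mul]
  · rw [if_neg (Int.not_even_iff_odd.mpr (Even.add_odd ha hb)), if_pos ha,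
      if_neg (Int.not_even_iff_odd.mpr hb), one_mul]
  · rw [if_neg (Int.not_even_iff_odd.mpr (Odd.add_even ha hb)),
      if_neg (Int.not_even_iff_odd.mpr ha), if_pos hb, mul_one]
  · rw [if_pos (Odd.add_odd ha hb), if_neg (Int.not_even_iff_odd.mpr ha),
      if_neg (Int.not_even_iff_odd.mpr hb), hq2]

theorem Qfib_neg (q a : ℤ) : Qfib q (-a) = Qfib q a := by
  simp [Qfib, even_neg]

theorem Qfib_natAbs (q : ℤ) (hq2 : q * q = 1) (r : ℤ) : q ^ r.natAbs = Qfib q r := by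
  unfold Qfib
  rcases Nat.even_or_odd r.natAbs with h | h
  · rw [if_pos (Int.natAbs_even.mp h)]
    obtain ⟨c, hc⟩ := h
    rw [hc, pow_add, ← mul_pow, hq2, one_pow]
  · rw [if_neg (by simpa [Int.not_even_iff_odd] using Int.natAbs_odd.mp h)]
    obtain ⟨c, hc⟩ := h
    rw [hc, pow_add, pow_one, two_mul, pow_add, ← mul_pow, hq2, one_pow, one_mul]

theorem L1 (p q : ℤ) (hq2 : q * q = 1) (U V : ℤ → ℤ)
    (hU0 : U 0 = 0) (hU1 : U 1 = 1)
    (hUrec : ∀ n : ℤ, U n = p * U (n - 1) - q * U (n - 2))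
    (hV0 : V 0 = 2) (hV1 : V 1 = p)
    (hVrec : ∀ n : ℤ, V n = p * V (n - 1) - q * V (n - 2)) :
    ∀ m : ℤ, (p ^ 2 - 4 * q) * U m = V (m + 1) - q * V (m - 1) := by
  have Us := Vstep' p q U hUrec
  have Vs := Vstep' p q V hVrec
  have Vb := Vback' p q hq2 V hVrec
  have hVm1 : V (-1) = q * p := by
    linear_combination (norm := ring_nf) Vb 0 + q * p * hV0 - q * hV1
  have hV2 : V 2 = p ^ 2 - 2 * q := by
    linear_combination (norm := ring_nf) Vs 0 + p * hV1 - q * hV0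
  refine seq_ext' p q hq2 _ _ (fun n => by rw [Us n]; ring) (fun n => ?_) ?_ ?_
  · linear_combination (norm := ring_nf) Vs (n + 1) - q ^ 2 * Vb n
      - q * (p * V n - V (n + 1)) * hq2
  · linear_combination (norm := ring_nf) (p ^ 2 - 4 * q) * hU0 + q * hVm1 - hV1 + p * hq2
  · linear_combination (norm := ring_nf) (p ^ 2 - 4 * q) * hU1 - hV2 + q * hV0

theorem L2 (p q : ℤ) (hq2 : q * q = 1) (U V : ℤ → ℤ)
    (hU0 : U 0 = 0) (hU1 : U 1 = 1)
    (hUrec : ∀ n : ℤ, U n = p * U (n - 1) - q * U (n - 2))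
    (hV0 : V 0 = 2) (hV1 : V 1 = p)
    (hVrec : ∀ n : ℤ, V n = p * V (n - 1) - q * V (n - 2)) (m : ℤ) :
    ∀ k : ℤ, (p ^ 2 - 4 * q) * (U m * U k) = V (m + k) - Qfib q k * V (m - k) := by
  have Us := Vstep' p q U hUrec
  have Vs := Vstep' p q V hVrec
  have Vb := Vback' p q hq2 V hVrec
  have hL1 := L1 p q hq2 U V hU0 hU1 hUrec hV0 hV1 hVrec
  have hQone : Qfib q 1 = q := by simp [Qfib]
  have hQtwo : Qfib q 2 = 1 := by simp [Qfib]
  refine seq_ext' p q hq2 _ _ (fun n => by rw [Us n]; ring) (fun n => ?_) ?_ ?_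
  · have hQ2 : Qfib q (n + 2) = Qfib q n := by
      rw [Qfib_add q hq2 n 2, hQtwo, mul_one]
    have hQ1 : Qfib q (n + 1) = Qfib q n * q := by
      rw [Qfib_add q hq2 n 1, hQone]
    rw [hQ2, hQ1]
    linear_combination (norm := ring_nf) Vs (m + n) - Qfib q n * Vb (m - n - 1)
  · have hQ0 : Qfib q 0 = 1 := by simp [Qfib]
    rw [hQ0]
    linear_combination (norm := ring_nf) (p ^ 2 - 4 * q) * U m * hU0
  · rw [hQone]
    linear_combination (norm := ring_nf) hL1 m + (p ^ 2 - 4 * q) * U m * hU1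

theorem L4 (p q : ℤ) (hq2 : q * q = 1) (V : ℤ → ℤ)
    (hV0 : V 0 = 2) (hV1 : V 1 = p)
    (hVrec : ∀ n : ℤ, V n = p * V (n - 1) - q * V (n - 2)) :
    ∀ m : ℤ, V (-m) = Qfib q m * V m := by
  have Vs := Vstep' p q V hVrec
  have Vb := Vback' p q hq2 V hVrec
  have hVm1 : V (-1) = q * p := by
    linear_combination (norm := ring_nf) Vb 0 + q * p * hV0 - q * hV1
  have hq2' : q * q = 1 := hq2
  refine seq_ext' (p * q) q hq2 _ _ (fun n => ?_) (fun n => ?_) ?_ ?_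
  · linear_combination (norm := ring_nf) Vb (-n - 1)
  · have hQ2 : Qfib q (n + 2) = Qfib q n := by
      rw [Qfib_add q hq2 n 2]; simp [Qfib]
    have hQ1 : Qfib q (n + 1) = Qfib q n * q := by
      rw [Qfib_add q hq2 n 1]; simp [Qfib]
    rw [hQ2, hQ1]
    linear_combination (norm := ring_nf) Qfib q n * Vs n - p * Qfib q n * V (n + 1) * hq2
  · norm_num [Qfib]
  · rw [show -(1:ℤ) = (-1:ℤ) from rfl, hVm1, hV1]; simp [Qfib]

theorem L3 (p q : ℤ) (hq2 : q * q = 1) (V : ℤ → ℤ)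
    (hV0 : V 0 = 2) (hV1 : V 1 = p)
    (hVrec : ∀ n : ℤ, V n = p * V (n - 1) - q * V (n - 2)) :
    ∀ m : ℤ, V 2 * V m = V (m + 2) + V (m - 2) := by
  have Vs := Vstep' p q V hVrec
  have Vb := Vback' p q hq2 V hVrec
  have hVm1 : V (-1) = q * p := by
    linear_combination (norm := ring_nf) Vb 0 + q * p * hV0 - q * hV1
  have hVm2 : V (-2) = V 2 := by
    have h := L4 p q hq2 V hV0 hV1 hVrec 2
    simpa [Qfib] using h
  refine seq_ext' p q hq2 _ _ (fun n => by rw [Vs n]; ring) (fun n => ?_) ?_ ?_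
  · linear_combination (norm := ring_nf) Vs (n + 2) + Vs (n - 2)
  · linear_combination (norm := ring_nf) V 2 * hV0 - hVm2
  · linear_combination (norm := ring_nf) (V 2 + q) * hV1 - Vs 1 - hVm1

theorem stmt_3 (p q : ℤ) (hp : p ≠ 0) (hq : q = 1 ∨ q = -1)
    (hΔ : p ^ 2 - 4 * q ≠ 0)
    (U V : ℤ → ℤ)
    (hU0 : U 0 = 0) (hU1 : U 1 = 1)
    (hUrec : ∀ n : ℤ, U n = p * U (n - 1) - q * U (n - 2))
    (hV0 : V 0 = 2) (hV1 : V 1 = p)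
    (hVrec : ∀ n : ℤ, V n = p * V (n - 1) - q * V (n - 2))
    (r s : ℤ) (n : ℕ) :
    (p ^ 2 - 4 * q) * V 2 * (∑ i ∈ Finset.range (n + 1), (-1 : ℤ) ^ i * (U (r + 2 * i) * U (s + 2 * i))) =
      V (r + s - 2) + (-1 : ℤ) ^ n * V (4 * n + r + s + 2) -
        (if Even n then (1 : ℤ) else 0) * V 2 * q ^ r.natAbs * V (s - r) := by
  have hq2 : q * q = 1 := by rcases hq with rfl | rfl <;> norm_num
  have hL2 := L2 p q hq2 U V hU0 hU1 hUrec hV0 hV1 hVrec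
  have hL3 := L3 p q hq2 V hV0 hV1 hVrec
  have hL4 := L4 p q hq2 V hV0 hV1 hVrec
  rw [Qfib_natAbs q hq2 r]
  have hC : V (r - s) = Qfib q (s - r) * V (s - r) := by
    have h := hL4 (s - r)
    rwa [show -(s - r) = r - s from by ring] at h
  have hD : Qfib q s * Qfib q (s - r) = Qfib q r := by
    rw [show Qfib q (s - r) = Qfib q (r - s) from by
      rw [show s - r = -(r - s) from by ring, Qfib_neg]]
    rw [← Qfib_add q hq2 s (r - s), show s + (r - s) = r from by ring]
  induction n with
  | zero =>
    norm_num [Finset.sum_range_one]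
    have hA := hL2 r s
    have hB := hL3 (r + s)
    linear_combination (norm := ring_nf) V 2 * hA + hB - V 2 * Qfib q s * hC
      - V 2 * V (s - r) * hD
  | succ n ih =>
    rw [Finset.sum_range_succ]
    have hA := hL2 (r + 2 * ((n : ℤ) + 1)) (s + 2 * ((n : ℤ) + 1))
    have hQs : Qfib q (s + 2 * ((n : ℤ) + 1)) = Qfib q s := by
      rw [Qfib_add q hq2, show Qfib q (2 * ((n : ℤ) + 1)) = 1 from
        if_pos ⟨(n : ℤ) + 1, by ring⟩, mul_one]
    rw [hQs,
      show r + 2 * ((n : ℤ) + 1) + (s + 2 * ((n : ℤ) + 1)) = 4 * (n : ℤ) + r + s + 4 from by ring,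
      show r + 2 * ((n : ℤ) + 1) - (s + 2 * ((n : ℤ) + 1)) = r - s from by ring] at hA
    have hB := hL3 (4 * (n : ℤ) + r + s + 4)
    rw [show 4 * (n : ℤ) + r + s + 4 + 2 = 4 * ((n : ℤ) + 1) + r + s + 2 from by ring,
      show 4 * (n : ℤ) + r + s + 4 - 2 = 4 * (n : ℤ) + r + s + 2 from by ring] at hB
    rcases Nat.even_or_odd n with he | ho
    · have h1 : ((-1 : ℤ)) ^ n = 1 := he.neg_one_pow
      have h2 : ((-1 : ℤ)) ^ (n + 1) = -1 := (he.add_one).neg_one_pow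
      rw [if_pos he, h1] at ih
      rw [if_neg (by simp [Nat.even_add_one, he] : ¬ Even (n + 1)), h2]
      push_cast
      linear_combination ih - V 2 * hA - hB + V 2 * Qfib q s * hC
        + V 2 * V (s - r) * hD
    · have h1 : ((-1 : ℤ)) ^ n = -1 := ho.neg_one_pow
      have h2 : ((-1 : ℤ)) ^ (n + 1) = 1 := (ho.add_one).neg_one_pow
      rw [if_neg (Nat.not_even_iff_odd.mpr ho), h1] at ih
      rw [if_pos ho.add_one, h2]
      push_cast
      linear_combination ih + V 2 * hA + hB - V 2 * Qfib q s * hC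
        - V 2 * V (s - r) * hD
end

section
/- For all integers r, s and all natural numbers n, the following identity holds: V_2·(Σ_{i=0}^{n} (−1)^i·V_{r+2i}·V_{s+2i}) = V_{r+s−2} + (−1)^n·V_{4n+r+s+2} + ε_n·V_2·q^r·V_{s−r}, where ε_n = 1 if n is even and ε_n = 0 if n is odd. -/
lemma Qstep (q : ℤ) (hq : q = 1 ∨ q = -1) (m : ℤ) :
    q ^ (m+1).natAbs = q * q ^ m.natAbs := by
  rcases hq with h | h <;> subst h
  · simp
  · rcases Int.even_or_odd m with h | h
    · rw [(Int.natAbs_even.mpr h).neg_one_pow, (Int.natAbs_odd.mpr (h.add_one)).neg_one_pow]; ring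
    · rw [(Int.natAbs_odd.mpr h).neg_one_pow,
        (Int.natAbs_even.mpr (by simpa using h.add_one)).neg_one_pow]; ring

lemma luckey (p q : ℤ) (V : ℤ → ℤ) (hq : q = 1 ∨ q = -1)
    (hV0 : V 0 = 2) (hV1 : V 1 = p)
    (hV' : ∀ m : ℤ, V (m + 2) = p * V (m + 1) - q * V m) :
    ∀ a b : ℤ, V a * V b = V (a + b) + q ^ a.natAbs * V (b - a) := by
  have hqq : q * q = 1 := by rcases hq with h | h <;> subst h <;> ring
  have hq0 : q ≠ 0 := by rcases hq with h | h <;> subst h <;> norm_num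
  have hQ := Qstep q hq
  have main : ∀ a : ℤ, (∀ b, V a * V b = V (a + b) + q ^ a.natAbs * V (b - a)) ∧
      (∀ b, V (a+1) * V b = V ((a+1) + b) + q ^ (a+1).natAbs * V (b - (a+1))) := by
    intro a
    induction a using Int.induction_on with
    | zero =>
      constructor <;> intro b
      · simp [hV0]; ring
      · have h1 := hV' (b - 1)
        rw [show b - 1 + 2 = b + 1 by ring, show b - 1 + 1 = b by ring] at h1
        simp [hV1]
        rw [show (1:ℤ) + b = b + 1 by ring]
        linarith [h1]
    | succ k ih =>
      obtain ⟨i0', i1'⟩ := ih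
      refine ⟨i1', fun b => ?_⟩
      have i0 := i0' b
      have i1 := i1' b
      have hr := hV' (k : ℤ)
      rw [show (k:ℤ) + 2 = (k:ℤ) + 1 + 1 by ring] at hr
      have hr2 := hV' ((k:ℤ) + b)
      rw [show (k:ℤ) + b + 2 = (k:ℤ) + 1 + 1 + b by ring,
          show (k:ℤ) + b + 1 = (k:ℤ) + 1 + b by ring] at hr2
      have hr3 := hV' (b - (k:ℤ) - 2)
      rw [show b - (k:ℤ) - 2 + 2 = b - (k:ℤ) by ring,
          show b - (k:ℤ) - 2 + 1 = b - ((k:ℤ) + 1) by ring,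
          show b - (k:ℤ) - 2 = b - ((k:ℤ) + 1 + 1) by ring] at hr3
      have hQ1 := hQ (k : ℤ)
      have hQ2 := hQ ((k:ℤ) + 1)
      rw [hQ1] at i1
      rw [hQ2, hQ1]
      linear_combination (V b) * hr + p * i1 - q * i0 - hr2 - (q * q ^ (k:ℤ).natAbs) * hr3
    | pred k ih =>
      obtain ⟨i0', i1'⟩ := ih
      have new : ∀ b, V (-(k:ℤ) - 1) * V b =
          V ((-(k:ℤ) - 1) + b) + q ^ (-(k:ℤ) - 1).natAbs * V (b - (-(k:ℤ) - 1)) := by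
        intro b
        have i0 := i0' b
        have i1 := i1' b
        have hr := hV' (-(k:ℤ) - 1)
        rw [show -(k:ℤ) - 1 + 2 = -(k:ℤ) + 1 by ring,
            show -(k:ℤ) - 1 + 1 = -(k:ℤ) by ring] at hr
        have hr2 := hV' (-(k:ℤ) - 1 + b)
        rw [show -(k:ℤ) - 1 + b + 2 = -(k:ℤ) + 1 + b by ring,
            show -(k:ℤ) - 1 + b + 1 = -(k:ℤ) + b by ring] at hr2
        have hr3 := hV' (b + (k:ℤ) - 1)
        rw [show b + (k:ℤ) - 1 + 2 = b - (-(k:ℤ) - 1) by ring,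
            show b + (k:ℤ) - 1 + 1 = b - (-(k:ℤ)) by ring,
            show b + (k:ℤ) - 1 = b - (-(k:ℤ) + 1) by ring] at hr3
        have hQ1 := hQ (-(k:ℤ) - 1)
        rw [show -(k:ℤ) - 1 + 1 = -(k:ℤ) by ring] at hQ1
        have hQ2 := hQ (-(k:ℤ))
        rw [hQ1] at i0
        rw [hQ2, hQ1] at i1
        refine mul_left_cancel₀ hq0 ?_
        linear_combination (V b) * hr + p * i0 - i1 - hr2 -
          (q * q ^ (-(k:ℤ) - 1).natAbs) * hr3
      refine ⟨new, fun b => ?_⟩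
      rw [show -(k:ℤ) - 1 + 1 = -(k:ℤ) by ring]
      exact i0' b
  exact fun a b => (main a).1 b

theorem stmt_4 (p q : ℤ) (hp : p ≠ 0) (hq : q = 1 ∨ q = -1)
    (hΔ : p ^ 2 - 4 * q ≠ 0)
    (U V : ℤ → ℤ)
    (hU0 : U 0 = 0) (hU1 : U 1 = 1)
    (hUrec : ∀ n : ℤ, U n = p * U (n - 1) - q * U (n - 2))
    (hV0 : V 0 = 2) (hV1 : V 1 = p)
    (hVrec : ∀ n : ℤ, V n = p * V (n - 1) - q * V (n - 2))
    (r s : ℤ) (n : ℕ) :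
    V 2 * (∑ i ∈ Finset.range (n + 1), (-1 : ℤ) ^ i * (V (r + 2 * i) * V (s + 2 * i))) =
      V (r + s - 2) + (-1 : ℤ) ^ n * V (4 * n + r + s + 2) +
        (if Even n then (1 : ℤ) else 0) * V 2 * q ^ r.natAbs * V (s - r) := by
  have hqq : q * q = 1 := by rcases hq with h | h <;> subst h <;> ring
  have hV' : ∀ m : ℤ, V (m + 2) = p * V (m + 1) - q * V m := by
    intro m
    have := hVrec (m + 2)
    rw [show m + 2 - 1 = m + 1 by ring, show m + 2 - 2 = m by ring] at this
    exact this
  have key := luckey p q V hq hV0 hV1 hV'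
  have hQ := Qstep q hq
  have Qper : ∀ m : ℤ, q ^ (m + 2).natAbs = q ^ m.natAbs := by
    intro m
    rw [show m + 2 = m + 1 + 1 by ring, hQ (m+1), hQ m, ← mul_assoc, hqq, one_mul]
  have Qr : ∀ k : ℕ, q ^ (r + 2 * (k:ℤ)).natAbs = q ^ r.natAbs := by
    intro k
    induction k with
    | zero => norm_num
    | succ m ih =>
      push_cast
      rw [show r + 2 * ((m:ℤ)+1) = r + 2 * (m:ℤ) + 2 by ring, Qper]
      exact ih
  have hq2 : q ^ (2:ℤ).natAbs = 1 := by
    show q ^ 2 = 1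
    rw [sq]
    exact hqq
  induction n with
  | zero =>
    have h1 := key r s
    have h2 := key 2 (r + s)
    rw [hq2] at h2
    simp only [zero_add, Finset.sum_range_one, Nat.cast_zero, pow_zero, if_pos (Even.zero)]
    linear_combination (norm := (push_cast; ring_nf)) V 2 * h1 + h2
  | succ n ih =>
    rw [Finset.sum_range_succ, mul_add, ih]
    have h1 := key (r + 2 * ((n:ℤ)+1)) (s + 2 * ((n:ℤ)+1))
    rw [show s + 2 * ((n:ℤ)+1) - (r + 2 * ((n:ℤ)+1)) = s - r by ring] at h1
    have hQr := Qr (n+1)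
    push_cast at hQr
    rw [hQr] at h1
    have h2 := key 2 (r + s + 4*(n:ℤ) + 4)
    rw [hq2] at h2
    rcases Nat.even_or_odd n with he | ho
    · have hno : ¬ Even (n+1) := by simp [Nat.even_add_one, he]
      simp only [if_pos he, if_neg hno, he.neg_one_pow]
      rw [(by simpa using he.add_one : Odd (n+1)).neg_one_pow]
      linear_combination (norm := (push_cast; ring_nf)) -V 2 * h1 - h2
    · have hyes : Even (n+1) := by simpa using ho.add_one
      simp only [if_neg (Nat.not_even_iff_odd.mpr ho), if_pos hyes, ho.neg_one_pow,
        hyes.neg_one_pow]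
      linear_combination (norm := (push_cast; ring_nf)) V 2 * h1 + h2
end

section
/- For all integers r, s and all natural numbers n, the following identity holds: V_2·(Σ_{i=0}^{n} (−1)^i·U_{r+2i}·V_{s+2i}) = U_{r+s−2} + (−1)^n·U_{4n+r+s+2} − ε_n·V_2·q^r·U_{s−r}, where ε_n = 1 if n is even and ε_n = 0 if n is odd. -/
private lemma ext2' (p q : ℤ) (hq2 : q * q = 1) (A B : ℤ → ℤ)
    (hA : ∀ n : ℤ, A n = p * A (n-1) - q * A (n-2))
    (hB : ∀ n : ℤ, B n = p * B (n-1) - q * B (n-2))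
    (h0 : A 0 = B 0) (h1 : A 1 = B 1) : ∀ n : ℤ, A n = B n := by
  suffices h : ∀ n : ℤ, A n = B n ∧ A (n+1) = B (n+1) by
    intro n; exact (h n).1
  intro n
  induction n using Int.induction_on with
  | zero => exact ⟨h0, by norm_num; exact h1⟩
  | succ i ih =>
    refine ⟨ih.2, ?_⟩
    have hA' := hA (i+2); have hB' := hB (i+2)
    rw [show ((i:ℤ)+2-1) = i+1 by ring, show ((i:ℤ)+2-2) = i by ring] at hA' hB'
    rw [show ((i:ℤ)+1+1) = i+2 by ring, hA', hB', ih.1, ih.2]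
  | pred i ih =>
    have hA' := hA (-(i:ℤ)+1); have hB' := hB (-(i:ℤ)+1)
    rw [show (-(i:ℤ)+1-1) = -i by ring, show (-(i:ℤ)+1-2) = -i-1 by ring] at hA' hB'
    refine ⟨?_, by rw [show (-(i:ℤ)-1+1) = -i by ring]; exact ih.1⟩
    have ha : A (-(i:ℤ)-1) = q * (p * A (-i) - A (-i+1)) := by
      linear_combination q * hA' - A (-(i:ℤ)-1) * hq2
    have hb : B (-(i:ℤ)-1) = q * (p * B (-i) - B (-i+1)) := by
      linear_combination q * hB' - B (-(i:ℤ)-1) * hq2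
    rw [ha, hb, ih.1, ih.2]

private def gg (q r : ℤ) : ℤ := if Even r then 1 else q

private lemma gg_sub_one (q : ℤ) (hq2 : q * q = 1) (r : ℤ) : gg q (r-1) = q * gg q r := by
  by_cases h : Even r
  · simp [gg, h, Int.even_sub_one]
  · simp [gg, h, Int.even_sub_one, hq2]

private lemma gg_sub_two (q : ℤ) (r : ℤ) : gg q (r-2) = gg q r := by
  by_cases h : Even r <;> simp [gg, Int.even_sub, h]

private lemma gg_pow (q : ℤ) (hq : q = 1 ∨ q = -1) (r : ℤ) : q ^ r.natAbs = gg q r := by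
  rcases hq with rfl | rfl
  · simp [gg]
  · rcases Int.even_or_odd r with h | h
    · rw [(Int.natAbs_even.mpr h).neg_one_pow]; simp [gg, h]
    · rw [(Int.natAbs_odd.mpr h).neg_one_pow]; simp [gg, Int.not_even_iff_odd.mpr h]

theorem stmt_5 (p q : ℤ) (hp : p ≠ 0) (hq : q = 1 ∨ q = -1)
    (hΔ : p ^ 2 - 4 * q ≠ 0)
    (U V : ℤ → ℤ)
    (hU0 : U 0 = 0) (hU1 : U 1 = 1)
    (hUrec : ∀ n : ℤ, U n = p * U (n - 1) - q * U (n - 2))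
    (hV0 : V 0 = 2) (hV1 : V 1 = p)
    (hVrec : ∀ n : ℤ, V n = p * V (n - 1) - q * V (n - 2))
    (r s : ℤ) (n : ℕ) :
    V 2 * (∑ i ∈ Finset.range (n + 1), (-1 : ℤ) ^ i * (U (r + 2 * i) * V (s + 2 * i))) =
      U (r + s - 2) + (-1 : ℤ) ^ n * U (4 * n + r + s + 2) -
        (if Even n then (1 : ℤ) else 0) * V 2 * q ^ r.natAbs * U (s - r) := by
  have hq2 : q * q = 1 := by rcases hq with rfl | rfl <;> norm_num
  -- small values
  have hU2 : U 2 = p := by have h := hUrec 2; norm_num [hU0, hU1] at h; linarith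
  have hU3 : U 3 = p*p - q := by
    have h := hUrec 3; norm_num [hU2, hU1] at h; linarith
  have hU4 : U 4 = p*p*p - 2*p*q := by
    have h := hUrec 4; norm_num [hU3, hU2] at h; linear_combination h
  have hU5 : U 5 = p^4 - 3*p^2*q + q^2 := by
    have h := hUrec 5; norm_num [hU4, hU3] at h; linear_combination h
  have hU6 : U 6 = p^5 - 4*p^3*q + 3*p*q^2 := by
    have h := hUrec 6; norm_num [hU5, hU4] at h; linear_combination h
  have hU7 : U 7 = p^6 - 5*p^4*q + 6*p^2*q^2 - q^3 := by
    have h := hUrec 7; norm_num [hU6, hU5] at h; linear_combination h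
  have hU8 : U 8 = p^7 - 6*p^5*q + 10*p^3*q^2 - 4*p*q^3 := by
    have h := hUrec 8; norm_num [hU7, hU6] at h; linear_combination h
  have hUm1 : U (-1) = -q := by
    have h := hUrec 1; norm_num [hU1, hU0] at h
    linear_combination q * h - U (-1) * hq2
  have hUm2 : U (-2) = -p := by
    have h := hUrec 0; norm_num [hU0, hUm1] at h
    linear_combination q * h - (p + U (-2)) * hq2
  have hV2 : V 2 = p*p - 2*q := by
    have h := hVrec 2; norm_num [hV1, hV0] at h; linear_combination h
  have hV3 : V 3 = p*p*p - 3*p*q := by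
    have h := hVrec 3; norm_num [hV2, hV1] at h; linear_combination h
  -- backward recurrence
  have hUb : ∀ x : ℤ, U x = q*p*U (x+1) - q*U (x+2) := by
    intro x
    have h := hUrec (x+2)
    rw [show x+2-1 = x+1 by ring, show x+2-2 = x by ring] at h
    linear_combination q * h - U x * hq2
  -- L1
  have L1 : ∀ b : ℤ, V 2 * (p * V (b+2)) = U (b+6) - U (b-2) := by
    refine ext2' p q hq2 _ _ ?_ ?_ ?_ ?_
    · intro m
      have h := hVrec (m+2)
      rw [show m+2-1 = m-1+2 by ring, show m+2-2 = m-2+2 by ring] at h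
      linear_combination (V 2 * p) * h
    · intro m
      have h1 := hUrec (m+6)
      rw [show m+6-1 = m-1+6 by ring, show m+6-2 = m-2+6 by ring] at h1
      have h2 := hUrec (m-2)
      rw [show m-2-1 = m-1-2 by ring, show m-2-2 = m-2-2 by ring] at h2
      linear_combination h1 - h2
    · norm_num [hV2, hU6, hUm2]
      rcases hq with rfl | rfl <;> ring
    · norm_num [hV2, hV3, hU7, hUm1]
      rcases hq with rfl | rfl <;> ring
  -- L2
  have L2 : ∀ b : ℤ, V 2 * (U 3 * V (b+2)) - V 2 * V b = U (b+7) - U (b-1) := by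
    refine ext2' p q hq2 _ _ ?_ ?_ ?_ ?_
    · intro m
      have h := hVrec (m+2)
      rw [show m+2-1 = m-1+2 by ring, show m+2-2 = m-2+2 by ring] at h
      have h2 := hVrec m
      linear_combination (V 2 * U 3) * h - V 2 * h2
    · intro m
      have h1 := hUrec (m+7)
      rw [show m+7-1 = m-1+7 by ring, show m+7-2 = m-2+7 by ring] at h1
      have h2 := hUrec (m-1)
      rw [show m-1-1 = m-1-1 by ring, show m-1-2 = m-2-1 by ring] at h2
      linear_combination h1 - h2
    · norm_num [hV2, hV0, hU3, hU7, hUm1]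
      rcases hq with rfl | rfl <;> ring
    · norm_num [hV2, hV3, hV1, hU3, hU8, hU0]
      rcases hq with rfl | rfl <;> ring
  -- K2
  have K2 : ∀ b a : ℤ,
      V 2 * (U (a+2) * V (b+2)) - V 2 * (U a * V b) = U (a+b+6) - U (a+b-2) := by
    intro b
    refine ext2' p q hq2 _ _ ?_ ?_ ?_ ?_
    · intro m
      have h1 := hUrec (m+2)
      rw [show m+2-1 = m-1+2 by ring, show m+2-2 = m-2+2 by ring] at h1
      have h2 := hUrec m
      linear_combination (V 2 * V (b+2)) * h1 - (V 2 * V b) * h2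
    · intro m
      have h1 := hUrec (m+b+6)
      rw [show m+b+6-1 = m-1+b+6 by ring, show m+b+6-2 = m-2+b+6 by ring] at h1
      have h2 := hUrec (m+b-2)
      rw [show m+b-2-1 = m-1+b-2 by ring, show m+b-2-2 = m-2+b-2 by ring] at h2
      linear_combination h1 - h2
    · skip
      rw [show (0:ℤ)+2 = 2 by ring, show (0:ℤ)+b+6 = b+6 by ring,
        show (0:ℤ)+b-2 = b-2 by ring, hU0, hU2]
      linear_combination L1 b
    · skip
      rw [show (1:ℤ)+2 = 3 by ring, show (1:ℤ)+b+6 = b+7 by ring,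
        show (1:ℤ)+b-2 = b-1 by ring, hU1]
      linear_combination L2 b
  -- E0
  have E0 : ∀ x : ℤ, V 2 * (U x * V 0) = U (x+2) + U (x-2) - V 2 * gg q x * U (0-x) := by
    refine ext2' p q hq2 _ _ ?_ ?_ ?_ ?_
    · intro m
      linear_combination (V 2 * V 0) * hUrec m
    · intro m
      have h1 := hUrec (m+2)
      rw [show m+2-1 = m-1+2 by ring, show m+2-2 = m-2+2 by ring] at h1
      have h2 := hUrec (m-2)
      rw [show m-2-1 = m-1-2 by ring] at h2
      have h3 := hUb (0-m)
      rw [show 0-m+1 = 0-(m-1) by ring, show 0-m+2 = 0-(m-2) by ring] at h3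
      rw [gg_sub_one q hq2 m, gg_sub_two q m]
      linear_combination h1 + h2 - (V 2 * gg q m) * h3
    · norm_num [hU0, hU2, hUm2]
    · norm_num [hU1, hU3, hUm1, hV0, hV2, gg]
      rcases hq with rfl | rfl <;> ring
  -- E1
  have E1 : ∀ x : ℤ, V 2 * (U x * V 1) = U (x+3) + U (x-1) - V 2 * gg q x * U (1-x) := by
    refine ext2' p q hq2 _ _ ?_ ?_ ?_ ?_
    · intro m
      linear_combination (V 2 * V 1) * hUrec m
    · intro m
      have h1 := hUrec (m+3)
      rw [show m+3-1 = m-1+3 by ring, show m+3-2 = m-2+3 by ring] at h1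
      have h2 := hUrec (m-1)
      rw [show m-1-2 = m-2-1 by ring] at h2
      have h3 := hUb (1-m)
      rw [show 1-m+1 = 1-(m-1) by ring, show 1-m+2 = 1-(m-2) by ring] at h3
      rw [gg_sub_one q hq2 m, gg_sub_two q m]
      linear_combination h1 + h2 - (V 2 * gg q m) * h3
    · norm_num [hU0, hU1, hU3, hUm1, hV2, gg]
      rcases hq with rfl | rfl <;> ring
    · norm_num [hU0, hU1, hU4, hV1, hV2]
      rcases hq with rfl | rfl <;> ring
  -- Q : the key product formula for our fixed r
  have Q : ∀ t : ℤ, V 2 * (U r * V t) = U (r+t+2) + U (r+t-2) - V 2 * gg q r * U (t-r) := by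
    refine ext2' p q hq2 _ _ ?_ ?_ ?_ ?_
    · intro m
      linear_combination (V 2 * U r) * hVrec m
    · intro m
      have h1 := hUrec (r+m+2)
      rw [show r+m+2-1 = r+(m-1)+2 by ring, show r+m+2-2 = r+(m-2)+2 by ring] at h1
      have h2 := hUrec (r+m-2)
      rw [show r+m-2-1 = r+(m-1)-2 by ring, show r+m-2-2 = r+(m-2)-2 by ring] at h2
      have h3 := hUrec (m-r)
      rw [show m-r-1 = m-1-r by ring, show m-r-2 = m-2-r by ring] at h3
      linear_combination h1 + h2 - (V 2 * gg q r) * h3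
    · skip
      have h := E0 r
      rw [show r+(0:ℤ)+2 = r+2 by ring, show r+(0:ℤ)-2 = r-2 by ring]
      exact h
    · skip
      have h := E1 r
      rw [show r+(1:ℤ)+2 = r+3 by ring, show r+(1:ℤ)-2 = r-1 by ring]
      exact h
  -- K : each summand
  have K : ∀ k : ℕ, V 2 * (U (r+2*(k:ℤ)) * V (s+2*(k:ℤ))) =
      U (r+s+4*(k:ℤ)+2) + U (r+s+4*(k:ℤ)-2) - V 2 * gg q r * U (s-r) := by
    intro k
    induction k with
    | zero =>
      simpa using Q s
    | succ k ih =>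
      have h := K2 (s+2*(k:ℤ)) (r+2*(k:ℤ))
      push_cast
      rw [show r+2*((k:ℤ)+1) = r+2*(k:ℤ)+2 by ring,
        show s+2*((k:ℤ)+1) = s+2*(k:ℤ)+2 by ring,
        show r+s+4*((k:ℤ)+1)+2 = r+2*(k:ℤ)+(s+2*(k:ℤ))+6 by ring,
        show r+s+4*((k:ℤ)+1)-2 = r+s+4*(k:ℤ)+2 by ring]
      rw [show r+2*(k:ℤ)+(s+2*(k:ℤ))-2 = r+s+4*(k:ℤ)-2 by ring] at h
      linear_combination h + ih
  -- main induction
  induction n with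
  | zero =>
    rw [Finset.sum_range_one]
    norm_num
    rw [gg_pow q hq]
    linear_combination Q s
  | succ m ih =>
    rw [Finset.sum_range_succ, mul_add, ih]
    have h := K (m+1)
    push_cast at h ⊢
    rw [show r+s+4*((m:ℤ)+1)+2 = 4*(m:ℤ)+r+s+6 by ring,
      show r+s+4*((m:ℤ)+1)-2 = 4*(m:ℤ)+r+s+2 by ring] at h
    rw [show (4:ℤ)*((m:ℤ)+1)+r+s+2 = 4*(m:ℤ)+r+s+6 by ring]
    rw [gg_pow q hq] at *
    rcases Nat.even_or_odd m with hm | hm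
    · rw [if_pos hm, if_neg (by simpa [Nat.even_add_one] using hm), pow_succ,
        hm.neg_one_pow]
      linear_combination (-1 : ℤ) * h
    · rw [if_neg (Nat.not_even_iff_odd.mpr hm),
        if_pos (by simp [Nat.even_add_one, Nat.not_even_iff_odd.mpr hm]), pow_succ,
        hm.neg_one_pow]
      linear_combination h
end

section
/- For all integers r, s and all natural numbers n, the following identity holds: Δ·(Σ_{i=0}^{n} U_{r+2i}·U_{s+2i}) = a_{n+1}·V_{2n+r+s} − (n+1)·q^r·V_{s−r}. -/
/-- A sequence satisfying the recurrence with zero initial values is identically zero. -/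
private lemma aux_zero (p q : ℤ) (hq : q = 1 ∨ q = -1) (f : ℤ → ℤ)
    (hrec : ∀ n : ℤ, f n = p * f (n - 1) - q * f (n - 2))
    (h0 : f 0 = 0) (h1 : f 1 = 0) : ∀ n : ℤ, f n = 0 := by
  have hqne : q ≠ 0 := by rcases hq with h | h <;> simp [h]
  have key : ∀ n : ℤ, f n = 0 ∧ f (n + 1) = 0 := by
    intro n
    induction n using Int.induction_on with
    | zero => exact ⟨h0, by simpa using h1⟩
    | succ k ih =>
      refine ⟨ih.2, ?_⟩
      have h := hrec ((k : ℤ) + 2)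
      rw [show ((k:ℤ) + 2 - 1) = (k:ℤ) + 1 by ring, show ((k:ℤ) + 2 - 2) = (k:ℤ) by ring] at h
      rw [show ((k:ℤ) + 1 + 1) = (k:ℤ) + 2 by ring, h, ih.1, ih.2]
      ring
    | pred k ih =>
      refine ⟨?_, by rw [show (-(k:ℤ) - 1 + 1) = -(k:ℤ) by ring]; exact ih.1⟩
      have h := hrec (-(k : ℤ) + 1)
      rw [show (-(k:ℤ) + 1 - 1) = -(k:ℤ) by ring, show (-(k:ℤ) + 1 - 2) = -(k:ℤ) - 1 by ring,
        ih.1, ih.2] at h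
      have h2 : q * f (-(k:ℤ) - 1) = 0 := by linarith
      exact (mul_eq_zero.mp h2).resolve_left hqne
  exact fun n => (key n).1

private def eps (q k : ℤ) : ℤ := if Even k then 1 else q

private lemma eps_even {q k : ℤ} (h : Even k) : eps q k = 1 := if_pos h

private lemma eps_zero (q : ℤ) : eps q 0 = 1 := by norm_num [eps]

private lemma eps_one (q : ℤ) : eps q 1 = q := by norm_num [eps, Int.even_iff]

private lemma eps_sq {q : ℤ} (hq2 : q * q = 1) (k : ℤ) : eps q k * eps q k = 1 := by
  by_cases h : Even k <;> simp [eps, h, hq2]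

private lemma eps_pred {q : ℤ} (hq2 : q * q = 1) (k : ℤ) : eps q (k - 1) = q * eps q k := by
  by_cases h : Even k <;> simp [eps, Int.even_sub_one, h, hq2]

private lemma eps_sub2 (q k : ℤ) : eps q (k - 2) = eps q k := by
  have h2 : Even (2 : ℤ) := ⟨1, by norm_num⟩
  by_cases h : Even k <;> simp [eps, Int.even_sub, h, h2]

private lemma eps_shift (q x y : ℤ) : eps q (x + 2 * y) = eps q x := by
  have h2 : Even (2 * y) := ⟨y, by ring⟩
  by_cases h : Even x <;> simp [eps, Int.even_add, h, h2]

private lemma eps_natAbs {q : ℤ} (hq : q = 1 ∨ q = -1) (r : ℤ) :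
    q ^ r.natAbs = eps q r := by
  rcases hq with h | h
  · simp [eps, h]
  · subst h
    by_cases hr : Even r
    · rw [eps_even hr, Even.neg_one_pow (Int.natAbs_even.mpr hr)]
    · rw [show eps (-1 : ℤ) r = -1 from if_neg hr,
        Odd.neg_one_pow (Int.natAbs_odd.mpr (Int.not_even_iff_odd.mp hr))]

theorem stmt_6 (p q : ℤ) (hp : p ≠ 0) (hq : q = 1 ∨ q = -1)
    (hΔ : p ^ 2 - 4 * q ≠ 0)
    (U V : ℤ → ℤ)
    (hU0 : U 0 = 0) (hU1 : U 1 = 1)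
    (hUrec : ∀ n : ℤ, U n = p * U (n - 1) - q * U (n - 2))
    (hV0 : V 0 = 2) (hV1 : V 1 = p)
    (hVrec : ∀ n : ℤ, V n = p * V (n - 1) - q * V (n - 2))
    (a : ℤ → ℤ) (ha : ∀ n : ℤ, p * a n = U (2 * n))
    (r s : ℤ) (n : ℕ) :
    (p ^ 2 - 4 * q) * (∑ i ∈ Finset.range (n + 1), U (r + 2 * i) * U (s + 2 * i)) =
      a ((n : ℤ) + 1) * V (2 * n + r + s) - ((n : ℤ) + 1) * q ^ r.natAbs * V (s - r) := by
  have hq2 : q * q = 1 := by rcases hq with h | h <;> rw [h] <;> norm_num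
  -- small values
  have hU2 : U 2 = p := by have h := hUrec 2; norm_num [hU0, hU1] at h; exact h
  have hV2 : V 2 = p * p - q * 2 := by
    have h := hVrec 2; norm_num [hV0, hV1] at h
    linear_combination h
  have hUm1 : U (-1) = -q := by
    have h := hUrec 1
    norm_num [hU0, hU1] at h
    rcases hq with h' | h' <;> rw [h'] at h ⊢ <;> linarith
  have hVm1 : V (-1) = q * p := by
    have h := hVrec 1
    norm_num [hV0, hV1] at h
    rcases hq with h' | h' <;> rw [h'] at h ⊢ <;> linarith
  -- reversed recurrences
  have hUrev : ∀ m : ℤ, U m = q * p * U (m + 1) - q * U (m + 2) := by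
    intro m
    have h := hUrec (m + 2)
    rw [show m + 2 - 1 = m + 1 by ring, show m + 2 - 2 = m by ring] at h
    linear_combination q * h + (-(U m)) * hq2
  have hVrev : ∀ m : ℤ, V m = q * p * V (m + 1) - q * V (m + 2) := by
    intro m
    have h := hVrec (m + 2)
    rw [show m + 2 - 1 = m + 1 by ring, show m + 2 - 2 = m by ring] at h
    linear_combination q * h + (-(V m)) * hq2
  -- negation formulas
  have hVneg : ∀ k : ℤ, eps q k * V (-k) = V k := by
    have hz := aux_zero p q hq (fun k => eps q k * V (-k) - V k)
      (by
        intro k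
        rw [show -(k - 1) = -k + 1 by ring, show -(k - 2) = -k + 2 by ring,
          hVrev (-k), hVrec k, eps_pred hq2 k, eps_sub2 q k]
        ring)
      (by simp [eps_zero, hV0])
      (by
        rw [hVm1, hV1, eps_one]
        linear_combination p * hq2)
    intro k
    have h := hz k
    linarith
  have hUneg : ∀ k : ℤ, eps q k * U (-k) = -U k := by
    have hz := aux_zero p q hq (fun k => eps q k * U (-k) + U k)
      (by
        intro k
        rw [show -(k - 1) = -k + 1 by ring, show -(k - 2) = -k + 2 by ring,
          hUrev (-k), hUrec k, eps_pred hq2 k, eps_sub2 q k]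
        ring)
      (by simp [eps_zero, hU0])
      (by
        rw [hUm1, hU1, eps_one]
        linear_combination (-1) * hq2)
    intro k
    have h := hz k
    linarith
  have hVneg' : ∀ k : ℤ, V (-k) = eps q k * V k := by
    intro k
    linear_combination (eps q k) * hVneg k + (-(V (-k))) * eps_sq hq2 k
  have hUneg' : ∀ k : ℤ, U (-k) = -(eps q k * U k) := by
    intro k
    linear_combination (eps q k) * hUneg k + (-(U (-k))) * eps_sq hq2 k
  -- I0 : Δ U k = V (k+1) - q V (k-1)
  have hI0 : ∀ k : ℤ, (p ^ 2 - 4 * q) * U k = V (k + 1) - q * V (k - 1) := by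
    have hz := aux_zero p q hq (fun k => V (k + 1) - q * V (k - 1) - (p ^ 2 - 4 * q) * U k)
      (by
        intro k
        rw [show k - 1 + 1 = k by ring, show k - 1 - 1 = k - 2 by ring,
          show k - 2 + 1 = k - 1 by ring, show k - 2 - 1 = k - 3 by ring]
        have e1 := hVrec (k + 1)
        rw [show k + 1 - 1 = k by ring, show k + 1 - 2 = k - 1 by ring] at e1
        have e2 := hVrec (k - 1)
        rw [show k - 1 - 1 = k - 2 by ring, show k - 1 - 2 = k - 3 by ring] at e2
        have e3 := hUrec k
        rw [e1, e2, e3]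
        ring)
      (by
        norm_num [hU0, hV1]
        rw [hVm1]
        linear_combination (-p) * hq2)
      (by
        norm_num [hU1, hV0, hV2]
        ring)
    intro k
    have h := hz k
    linarith
  -- I1 : Δ (U m U k) = V (m+k) - eps k V (m-k)
  have hI1 : ∀ k m : ℤ, (p ^ 2 - 4 * q) * (U m * U k) = V (m + k) - eps q k * V (m - k) := by
    intro k
    have hz := aux_zero p q hq
      (fun m => V (m + k) - eps q k * V (m - k) - (p ^ 2 - 4 * q) * (U m * U k))
      (by
        intro m
        have e1 := hVrec (m + k)
        rw [show m + k - 1 = m - 1 + k by ring, show m + k - 2 = m - 2 + k by ring] at e1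
        have e2 := hVrec (m - k)
        rw [show m - k - 1 = m - 1 - k by ring, show m - k - 2 = m - 2 - k by ring] at e2
        have e3 := hUrec m
        rw [e1, e2, e3]
        ring)
      (by
        rw [show (0:ℤ) + k = k by ring, show (0:ℤ) - k = -k by ring, hU0, hVneg' k]
        linear_combination (-(V k)) * eps_sq hq2 k)
      (by
        rw [show (1:ℤ) + k = k + 1 by ring, show (1:ℤ) - k = -(k - 1) by ring, hU1,
          hVneg' (k - 1), eps_pred hq2 k]
        linear_combination (-1) * hI0 k + (-(q * V (k - 1))) * eps_sq hq2 k)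
    intro m
    have h := hz m
    linarith
  -- I2 : U k V m = U (m+k) - eps k U (m-k)
  have hI2 : ∀ k m : ℤ, U k * V m = U (m + k) - eps q k * U (m - k) := by
    intro k
    have hz := aux_zero p q hq
      (fun m => U (m + k) - eps q k * U (m - k) - U k * V m)
      (by
        intro m
        have e1 := hUrec (m + k)
        rw [show m + k - 1 = m - 1 + k by ring, show m + k - 2 = m - 2 + k by ring] at e1
        have e2 := hUrec (m - k)
        rw [show m - k - 1 = m - 1 - k by ring, show m - k - 2 = m - 2 - k by ring] at e2
        have e3 := hVrec m
        rw [e1, e2, e3]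
        ring)
      (by
        rw [show (0:ℤ) + k = k by ring, show (0:ℤ) - k = -k by ring, hV0, hUneg' k]
        linear_combination (U k) * eps_sq hq2 k)
      (by
        rw [show (1:ℤ) + k = k + 1 by ring, show (1:ℤ) - k = -(k - 1) by ring, hV1,
          hUneg' (k - 1), eps_pred hq2 k]
        have e := hUrec (k + 1)
        rw [show k + 1 - 1 = k by ring, show k + 1 - 2 = k - 1 by ring] at e
        linear_combination e + (q * U (k - 1)) * eps_sq hq2 k)
    intro m
    have h := hz m
    linarith
  -- I3 : U (m+2) - U (m-2) = p V m
  have hI3 : ∀ m : ℤ, U (m + 2) - U (m - 2) = p * V m := by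
    intro m
    have h := hI2 2 m
    rw [hU2, eps_even ⟨1, by norm_num⟩] at h
    linear_combination (-1) * h
  -- the sum formula
  have hS : ∀ m : ℕ, p * (∑ i ∈ Finset.range (m + 1), V (r + s + 4 * (i : ℤ))) =
      U (2 * (m : ℤ) + 2) * V (2 * (m : ℤ) + (r + s)) := by
    intro m
    induction m with
    | zero => norm_num [hU2]
    | succ m ih =>
      rw [Finset.sum_range_succ, mul_add, ih]
      have e1 := hI2 (2 * (m:ℤ) + 4) (2 * (m:ℤ) + 2 + (r + s))
      rw [eps_even ⟨(m:ℤ) + 2, by ring⟩,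
        show (2 * (m:ℤ) + 2 + (r + s)) + (2 * (m:ℤ) + 4) = 4 * (m:ℤ) + 4 + (r + s) + 2 by ring,
        show (2 * (m:ℤ) + 2 + (r + s)) - (2 * (m:ℤ) + 4) = r + s - 2 by ring] at e1
      have e2 := hI2 (2 * (m:ℤ) + 2) (2 * (m:ℤ) + (r + s))
      rw [eps_even ⟨(m:ℤ) + 1, by ring⟩,
        show (2 * (m:ℤ) + (r + s)) + (2 * (m:ℤ) + 2) = 4 * (m:ℤ) + 4 + (r + s) - 2 by ring,
        show (2 * (m:ℤ) + (r + s)) - (2 * (m:ℤ) + 2) = r + s - 2 by ring] at e2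
      have e3 := hI3 (4 * (m:ℤ) + 4 + (r + s))
      push_cast
      rw [show r + s + 4 * ((m:ℤ) + 1) = 4 * (m:ℤ) + 4 + (r + s) by ring,
        show 2 * ((m:ℤ) + 1) + 2 = 2 * (m:ℤ) + 4 by ring,
        show 2 * ((m:ℤ) + 1) + (r + s) = 2 * (m:ℤ) + 2 + (r + s) by ring]
      linear_combination e2 - e1 - e3
  -- pointwise identity for the summands
  have hkey : ∀ i ∈ Finset.range (n + 1),
      (p ^ 2 - 4 * q) * (U (r + 2 * (i:ℤ)) * U (s + 2 * (i:ℤ))) =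
        V (r + s + 4 * (i:ℤ)) - eps q r * V (s - r) := by
    intro i _
    have h := hI1 (r + 2 * (i:ℤ)) (s + 2 * (i:ℤ))
    rw [show (s + 2 * (i:ℤ)) + (r + 2 * (i:ℤ)) = r + s + 4 * (i:ℤ) by ring,
      show (s + 2 * (i:ℤ)) - (r + 2 * (i:ℤ)) = s - r by ring,
      eps_shift q r (i:ℤ)] at h
    linear_combination h
  have hsum1 : (p ^ 2 - 4 * q) * (∑ i ∈ Finset.range (n + 1), U (r + 2 * (i:ℤ)) * U (s + 2 * (i:ℤ)))
      = (∑ i ∈ Finset.range (n + 1), V (r + s + 4 * (i:ℤ)))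
        - ((n : ℤ) + 1) * (eps q r * V (s - r)) := by
    rw [Finset.mul_sum, Finset.sum_congr rfl hkey, Finset.sum_sub_distrib,
      Finset.sum_const, Finset.card_range, nsmul_eq_mul]
    push_cast
    ring
  have hA : a ((n:ℤ) + 1) * V (2 * (n:ℤ) + r + s) =
      ∑ i ∈ Finset.range (n + 1), V (r + s + 4 * (i:ℤ)) := by
    have h := hS n
    have h2 := ha ((n:ℤ) + 1)
    rw [show 2 * ((n:ℤ) + 1) = 2 * (n:ℤ) + 2 by ring] at h2
    have h3 : p * (a ((n:ℤ) + 1) * V (2 * (n:ℤ) + r + s)) =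
        p * ∑ i ∈ Finset.range (n + 1), V (r + s + 4 * (i:ℤ)) := by
      rw [h, show 2 * (n:ℤ) + r + s = 2 * (n:ℤ) + (r + s) by ring]
      linear_combination (V (2 * (n:ℤ) + (r + s))) * h2
    exact mul_left_cancel₀ hp h3
  rw [eps_natAbs hq r, hA]
  linear_combination hsum1
end

section
/- For all integers r, s and all natural numbers n, the following identity holds: Σ_{i=0}^{n} V_{r+2i}·V_{s+2i} = a_{n+1}·V_{2n+r+s} + (n+1)·q^r·V_{s−r}. -/
/-- Two sequences satisfying the same second-order recurrence (with invertible `q`)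
that agree at 0 and 1 agree everywhere. -/
theorem stmt_7_ext2 (p q : ℤ) (hq2 : q * q = 1) (f g : ℤ → ℤ)
    (hf : ∀ n : ℤ, f (n + 2) = p * f (n + 1) - q * f n)
    (hg : ∀ n : ℤ, g (n + 2) = p * g (n + 1) - q * g n) :
    f 0 = g 0 → f 1 = g 1 → ∀ n : ℤ, f n = g n := by
  intro h0 h1
  have hb : ∀ (h : ℤ → ℤ), (∀ n : ℤ, h (n + 2) = p * h (n + 1) - q * h n) →
      ∀ n : ℤ, h n = q * (p * h (n + 1) - h (n + 2)) := by
    intro h hh n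
    linear_combination q * hh n - h n * hq2
  have key : ∀ n : ℤ, f n = g n ∧ f (n + 1) = g (n + 1) := by
    intro n
    induction n using Int.induction_on with
    | zero => exact ⟨h0, h1⟩
    | succ k ih =>
        refine ⟨ih.2, ?_⟩
        rw [show (k : ℤ) + 1 + 1 = (k : ℤ) + 2 by ring, hf k, hg k, ih.1, ih.2]
    | pred k ih =>
        refine ⟨?_, ?_⟩
        swap
        · rw [show -(k : ℤ) - 1 + 1 = -(k : ℤ) by ring]; exact ih.1
        have hfk := hb f hf (-(k : ℤ) - 1)
        have hgk := hb g hg (-(k : ℤ) - 1)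
        rw [show -(k : ℤ) - 1 + 1 = -(k : ℤ) by ring,
          show -(k : ℤ) - 1 + 2 = -(k : ℤ) + 1 by ring] at hfk hgk
        rw [hfk, hgk, ih.1, ih.2]
  exact fun n => (key n).1

theorem stmt_7 (p q : ℤ) (hp : p ≠ 0) (hq : q = 1 ∨ q = -1)
    (hΔ : p ^ 2 - 4 * q ≠ 0)
    (U V : ℤ → ℤ)
    (hU0 : U 0 = 0) (hU1 : U 1 = 1)
    (hUrec : ∀ n : ℤ, U n = p * U (n - 1) - q * U (n - 2))
    (hV0 : V 0 = 2) (hV1 : V 1 = p)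
    (hVrec : ∀ n : ℤ, V n = p * V (n - 1) - q * V (n - 2))
    (a : ℤ → ℤ) (ha : ∀ n : ℤ, p * a n = U (2 * n))
    (r s : ℤ) (n : ℕ) :
    (∑ i ∈ Finset.range (n + 1), V (r + 2 * i) * V (s + 2 * i)) =
      a ((n : ℤ) + 1) * V (2 * n + r + s) + ((n : ℤ) + 1) * q ^ r.natAbs * V (s - r) := by
  have hq2 : q * q = 1 := by rcases hq with h | h <;> simp [h]
  have hU' : ∀ m : ℤ, U (m + 2) = p * U (m + 1) - q * U m := by
    intro m
    have h := hUrec (m + 2)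
    rwa [show m + 2 - 1 = m + 1 by ring, show m + 2 - 2 = m by ring] at h
  have hV' : ∀ m : ℤ, V (m + 2) = p * V (m + 1) - q * V m := by
    intro m
    have h := hVrec (m + 2)
    rwa [show m + 2 - 1 = m + 1 by ring, show m + 2 - 2 = m by ring] at h
  -- small values
  have hU2 : U 2 = p := by
    have h := hU' 0
    rw [show (0 : ℤ) + 2 = 2 by ring, show (0 : ℤ) + 1 = 1 by ring, hU0, hU1] at h
    linarith
  have hUm1 : U (-1) = -q := by
    have h := hU' (-1)
    rw [show (-1 : ℤ) + 2 = 1 by ring, show (-1 : ℤ) + 1 = 0 by ring, hU0, hU1] at h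
    linear_combination q * h - U (-1) * hq2
  have hUm2 : U (-2) = -p := by
    have h := hU' (-2)
    rw [show (-2 : ℤ) + 2 = 0 by ring, show (-2 : ℤ) + 1 = -1 by ring, hU0, hUm1] at h
    linear_combination q * h - (U (-2) + p) * hq2
  -- powers of q
  have hQ1 : ∀ k : ℤ, q ^ (k + 1).natAbs = q * q ^ k.natAbs := by
    intro k
    rcases hq with h | h
    · simp [h]
    · subst h
      rcases Int.even_or_odd k with he | ho
      · have h1 : Even k.natAbs := Int.natAbs_even.mpr he
        have h2 : Odd (k + 1).natAbs := Int.natAbs_odd.mpr (Even.add_one he)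
        rw [h1.neg_one_pow, h2.neg_one_pow]; ring
      · have h1 : Odd k.natAbs := Int.natAbs_odd.mpr ho
        have h2 : Even (k + 1).natAbs := Int.natAbs_even.mpr (Odd.add_one ho)
        rw [h1.neg_one_pow, h2.neg_one_pow]; ring
  have hQstep : ∀ k : ℤ, q ^ (k + 2).natAbs = q ^ k.natAbs := by
    intro k
    rw [show k + 2 = k + 1 + 1 by ring, hQ1, hQ1, ← mul_assoc, hq2, one_mul]
  have hQshift : ∀ i : ℕ, q ^ (r + 2 * (i : ℤ)).natAbs = q ^ r.natAbs := by
    intro i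
    induction i with
    | zero => norm_num
    | succ j ih =>
        push_cast
        rw [show r + 2 * ((j : ℤ) + 1) = (r + 2 * (j : ℤ)) + 2 by ring, hQstep]
        push_cast at ih
        exact ih
  -- I3 : p * V m = U (m+2) - U (m-2)
  have I3 : ∀ m : ℤ, p * V m = U (m + 2) - U (m - 2) := by
    have h := stmt_7_ext2 p q hq2 (fun m => p * V m) (fun m => U (m + 2) - U (m - 2))
      (fun m => by linear_combination p * hV' m)
      (fun m => by
        linear_combination (norm := ring_nf) hU' (m + 2) - hU' (m - 2))
      (by
        linear_combination (norm := ring_nf) p * hV0 - hU2 + hUm2)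
      (by
        linear_combination (norm := ring_nf) p * hV1 - hU' 1 + hUm1 - p * hU2 + q * hU1)
    exact fun m => h m
  -- I1 : V m * V k = V (m+k) + q^|k| * V (m-k)
  have I1 : ∀ m k : ℤ, V m * V k = V (m + k) + q ^ k.natAbs * V (m - k) := by
    intro m
    have h := stmt_7_ext2 p q hq2 (fun k => V m * V k)
      (fun k => V (m + k) + q ^ k.natAbs * V (m - k))
      (fun k => by linear_combination V m * hV' k)
      (fun k => by
        linear_combination (norm := ring_nf) hV' (m + k)
          + V (m - (k + 2)) * hQ1 (k + 1)
          + (q * V (m - (k + 2)) - p * V (m - (k + 1))) * hQ1 k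
          + q * q ^ k.natAbs * hV' (m - k - 2))
      (by norm_num [hV0]; ring)
      (by
        simp only [Int.natAbs_one, pow_one]
        rw [hV1]
        linear_combination (norm := ring_nf) -hV' (m - 1))
    exact fun k => h k
  -- I2 : U m * V k = U (m+k) + q^|k| * U (m-k)
  have I2 : ∀ m k : ℤ, U m * V k = U (m + k) + q ^ k.natAbs * U (m - k) := by
    intro m
    have h := stmt_7_ext2 p q hq2 (fun k => U m * V k)
      (fun k => U (m + k) + q ^ k.natAbs * U (m - k))
      (fun k => by linear_combination U m * hV' k)
      (fun k => by
        linear_combination (norm := ring_nf) hU' (m + k)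
          + U (m - (k + 2)) * hQ1 (k + 1)
          + (q * U (m - (k + 2)) - p * U (m - (k + 1))) * hQ1 k
          + q * q ^ k.natAbs * hU' (m - k - 2))
      (by norm_num [hV0]; ring)
      (by
        simp only [Int.natAbs_one, pow_one]
        rw [hV1]
        linear_combination (norm := ring_nf) -hU' (m - 1))
    exact fun k => h k
  -- key sum
  have key : ∀ (N : ℕ) (t : ℤ),
      p * (∑ i ∈ Finset.range (N + 1), V (t + 4 * (i : ℤ))) =
        U (2 * (N : ℤ) + 2) * V (t + 2 * (N : ℤ)) := by
    intro N
    induction N with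
    | zero =>
        intro t
        simp only [Finset.range_one, Finset.sum_singleton, Nat.cast_zero]
        norm_num [hU2]
    | succ m ih =>
        intro t
        rw [Finset.sum_range_succ, mul_add, ih t]
        have e1 := I2 (2 * (m : ℤ) + 2) (t + 2 * m)
        have e2 := I2 (2 * (m : ℤ) + 4) (t + 2 * m + 2)
        have e3 := I3 (t + 4 * (m : ℤ) + 4)
        have e4 := hQstep (t + 2 * (m : ℤ))
        push_cast
        linear_combination (norm := ring_nf) e1 - e2 + e3 - U (2 - t) * e4
  -- pointwise rewriting of the summand
  have step : ∀ i : ℕ, V (r + 2 * (i : ℤ)) * V (s + 2 * (i : ℤ)) =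
      V ((r + s) + 4 * (i : ℤ)) + q ^ r.natAbs * V (s - r) := by
    intro i
    have h := I1 (s + 2 * (i : ℤ)) (r + 2 * (i : ℤ))
    have h2 := hQshift i
    linear_combination (norm := ring_nf) h + V (s - r) * h2
  have hSS : (∑ i ∈ Finset.range (n + 1), V ((r + s) + 4 * (i : ℤ))) =
      a ((n : ℤ) + 1) * V (2 * (n : ℤ) + r + s) := by
    have hp' : p * (∑ i ∈ Finset.range (n + 1), V ((r + s) + 4 * (i : ℤ))) =
        p * (a ((n : ℤ) + 1) * V (2 * (n : ℤ) + r + s)) := by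
      rw [key n (r + s)]
      have h2 := ha ((n : ℤ) + 1)
      rw [show (2 : ℤ) * ((n : ℤ) + 1) = 2 * (n : ℤ) + 2 by ring] at h2
      rw [show r + s + 2 * (n : ℤ) = 2 * (n : ℤ) + r + s by ring, ← mul_assoc, h2]
    exact mul_left_cancel₀ hp hp'
  have hsum : (∑ i ∈ Finset.range (n + 1), V (r + 2 * (i : ℤ)) * V (s + 2 * (i : ℤ))) =
      (∑ i ∈ Finset.range (n + 1), V ((r + s) + 4 * (i : ℤ)))
        + ((n : ℤ) + 1) * (q ^ r.natAbs * V (s - r)) := by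
    rw [Finset.sum_congr rfl (fun i _ => step i), Finset.sum_add_distrib,
      Finset.sum_const, Finset.card_range, nsmul_eq_mul]
    push_cast
    ring
  rw [hsum, hSS]
  ring
end

section
/- For all integers r, s and all natural numbers n, the following identity holds: Σ_{i=0}^{n} U_{r+2i}·V_{s+2i} = a_{n+1}·U_{2n+r+s} − (n+1)·q^r·U_{s−r}. -/
theorem ext2'_s8 (p q : ℤ) (hq0 : q ≠ 0) (f g : ℤ → ℤ)
    (hf : ∀ n : ℤ, f (n + 2) = p * f (n + 1) - q * f n)
    (hg : ∀ n : ℤ, g (n + 2) = p * g (n + 1) - q * g n)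
    (h0 : f 0 = g 0) (h1 : f 1 = g 1) : ∀ n : ℤ, f n = g n := by
  have key : ∀ n : ℤ, f n = g n ∧ f (n + 1) = g (n + 1) := by
    intro n
    induction n using Int.induction_on with
    | zero => simpa using ⟨h0, h1⟩
    | succ i ih =>
      refine ⟨ih.2, ?_⟩
      rw [show (i : ℤ) + 1 + 1 = i + 2 by ring, hf i, hg i, ih.1, ih.2]
    | pred i ih =>
      refine ⟨?_, by rw [show -(i : ℤ) - 1 + 1 = -(i:ℤ) by ring]; exact ih.1⟩
      have hfe := hf (-(i : ℤ) - 1)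
      have hge := hg (-(i : ℤ) - 1)
      rw [show -(i : ℤ) - 1 + 2 = -(i:ℤ) + 1 by ring,
        show -(i : ℤ) - 1 + 1 = -(i:ℤ) by ring] at hfe hge
      refine mul_left_cancel₀ hq0 ?_
      linear_combination hfe - hge - ih.2 + p * ih.1
  exact fun n => (key n).1

theorem stmt_8 (p q : ℤ) (hp : p ≠ 0) (hq : q = 1 ∨ q = -1)
    (hΔ : p ^ 2 - 4 * q ≠ 0)
    (U V : ℤ → ℤ)
    (hU0 : U 0 = 0) (hU1 : U 1 = 1)
    (hUrec : ∀ n : ℤ, U n = p * U (n - 1) - q * U (n - 2))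
    (hV0 : V 0 = 2) (hV1 : V 1 = p)
    (hVrec : ∀ n : ℤ, V n = p * V (n - 1) - q * V (n - 2))
    (a : ℤ → ℤ) (ha : ∀ n : ℤ, p * a n = U (2 * n))
    (r s : ℤ) (n : ℕ) :
    (∑ i ∈ Finset.range (n + 1), U (r + 2 * i) * V (s + 2 * i)) =
      a ((n : ℤ) + 1) * U (2 * n + r + s) - ((n : ℤ) + 1) * q ^ r.natAbs * U (s - r) := by
  have hq0 : q ≠ 0 := by rcases hq with h | h <;> simp [h]
  have hq2 : q * q = 1 := by rcases hq with h | h <;> simp [h]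
  have hU : ∀ n : ℤ, U (n + 2) = p * U (n + 1) - q * U n := by
    intro n
    have h := hUrec (n + 2)
    rwa [show n + 2 - 1 = n + 1 by ring, show n + 2 - 2 = n by ring] at h
  have hV : ∀ n : ℤ, V (n + 2) = p * V (n + 1) - q * V n := by
    intro n
    have h := hVrec (n + 2)
    rwa [show n + 2 - 1 = n + 1 by ring, show n + 2 - 2 = n by ring] at h
  have hUm1 : U (-1) = -q := by
    have h := hU (-1)
    rw [show (-1 : ℤ) + 2 = 1 by ring, show (-1 : ℤ) + 1 = 0 by ring, hU0, hU1] at h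
    linear_combination q * h - U (-1) * hq2
  have hU2 : U 2 = p := by
    have h := hU 0
    rw [show (0 : ℤ) + 2 = 2 by ring, show (0 : ℤ) + 1 = 1 by ring, hU0, hU1] at h
    linarith
  have hUm2 : U (-2) = -p := by
    have h := hU (-2)
    rw [show (-2 : ℤ) + 2 = 0 by ring, show (-2 : ℤ) + 1 = -1 by ring, hU0, hUm1] at h
    linear_combination q * h - p * hq2 - U (-2) * hq2
  have hQ1 : ∀ x : ℤ, q ^ (x + 1).natAbs = q * q ^ x.natAbs := by
    intro x
    rcases hq with h | h
    · simp [h]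
    · subst h
      rcases Int.even_or_odd x with he | ho
      · rw [(Int.natAbs_odd.mpr he.add_one).neg_one_pow,
          (Int.natAbs_even.mpr he).neg_one_pow]; ring
      · rw [(Int.natAbs_even.mpr ho.add_one).neg_one_pow,
          (Int.natAbs_odd.mpr ho).neg_one_pow]; ring
  have hQ2 : ∀ x : ℤ, q ^ (x + 2).natAbs = q ^ x.natAbs := by
    intro x
    have h1 := hQ1 (x + 1)
    have h2 := hQ1 x
    rw [show x + 1 + 1 = x + 2 by ring] at h1
    rw [h1, h2]
    linear_combination q ^ x.natAbs * hq2
  have hQc : ∀ x c : ℤ, q ^ (x + 2 * c).natAbs = q ^ x.natAbs := by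
    intro x c
    rcases hq with h | h
    · simp [h]
    · subst h
      rcases Int.even_or_odd x with he | ho
      · rw [(Int.natAbs_even.mpr (he.add (even_two_mul c))).neg_one_pow,
          (Int.natAbs_even.mpr he).neg_one_pow]
      · rw [(Int.natAbs_odd.mpr (ho.add_even (even_two_mul c))).neg_one_pow,
          (Int.natAbs_odd.mpr ho).neg_one_pow]
  have hVU : ∀ t : ℤ, V t = U (t + 1) - q * U (t - 1) := by
    refine ext2'_s8 p q hq0 _ (fun t => U (t + 1) - q * U (t - 1)) hV (fun n => ?_) ?_ ?_
    · linear_combination (norm := ring_nf) hU (n + 1) - q * hU (n - 1)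
    · rw [hV0, show (0 : ℤ) + 1 = 1 by ring, show (0 : ℤ) - 1 = -1 by ring, hU1, hUm1]
      linear_combination -hq2
    · rw [hV1, show (1 : ℤ) + 1 = 2 by ring, show (1 : ℤ) - 1 = 0 by ring, hU0, hU2]
      ring
  have hprod : ∀ s t : ℤ, U t * V s = U (t + s) - q ^ t.natAbs * U (s - t) := by
    intro s
    refine ext2'_s8 p q hq0 (fun t => U t * V s)
      (fun t => U (t + s) - q ^ t.natAbs * U (s - t)) (fun n => ?_) (fun n => ?_) ?_ ?_
    · linear_combination V s * hU n
    · rw [hQ2 n, hQ1 n]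
      linear_combination (norm := ring_nf) hU (n + s) - q * q ^ n.natAbs * hU (s - n - 2)
        + q ^ n.natAbs * U (s - n - 2) * hq2
    · rw [hU0]
      norm_num
    · rw [hU1, one_mul, hVU s, show (1 : ℤ) + s = s + 1 by ring]
      norm_num
  have hG : ∀ x y : ℤ, U (x + 2) * U y - U x * U (y - 2) = p * U (x + y) := by
    intro x
    refine ext2'_s8 p q hq0 (fun y => U (x + 2) * U y - U x * U (y - 2))
      (fun y => p * U (x + y)) (fun n => ?_) (fun n => ?_) ?_ ?_
    · linear_combination (norm := ring_nf) U (x + 2) * hU n - U x * hU (n - 2)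
    · linear_combination (norm := ring_nf) p * hU (x + n)
    · rw [hU0, show (0 : ℤ) - 2 = -2 by ring, hUm2]
      ring
    · rw [hU1, show (1 : ℤ) - 2 = -1 by ring, hUm1]
      linear_combination (norm := ring_nf) hU x
  have ha1 : a 1 = 1 := by
    refine mul_left_cancel₀ hp ?_
    rw [ha 1, show (2 : ℤ) * 1 = 2 by ring, hU2]
    ring
  induction n with
  | zero =>
    simp only [Finset.sum_range_one, Nat.cast_zero, mul_zero, add_zero, zero_add, one_mul]
    rw [ha1, one_mul, hprod s r]
  | succ m ih =>
    rw [Finset.sum_range_succ, ih]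
    have hterm := hprod (s + 2 * ((m : ℤ) + 1)) (r + 2 * ((m : ℤ) + 1))
    rw [hQc r ((m : ℤ) + 1),
      show s + 2 * ((m : ℤ) + 1) - (r + 2 * ((m : ℤ) + 1)) = s - r by ring] at hterm
    have key2 : a ((m : ℤ) + 1) * U (2 * m + r + s)
        + U (r + 2 * ((m : ℤ) + 1) + (s + 2 * ((m : ℤ) + 1)))
        = a ((m : ℤ) + 1 + 1) * U (2 * ((m : ℤ) + 1) + r + s) := by
      refine mul_left_cancel₀ hp ?_
      linear_combination (norm := ring_nf) U (2 * (m : ℤ) + r + s) * ha ((m : ℤ) + 1)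
        - U (2 * ((m : ℤ) + 1) + r + s) * ha ((m : ℤ) + 2)
        - hG (2 * (m : ℤ) + 2) (2 * (m : ℤ) + 2 + r + s)
    push_cast
    rw [hterm]
    linear_combination key2
end

section
/- For all integers r, s and all natural numbers m, the following two identities hold: Δ·(Σ_{i=0}^{2m} (−1)^i·U_{r+2i}·U_{s+2i}) = d_m·V_{4m+r+s} − q^r·V_{s−r}, and Δ·(Σ_{i=0}^{2m+1} (−1)^i·U_{r+2i}·U_{s+2i}) = −p·Δ·c_m·U_{4m+r+s+2}. -/
theorem stmt_9 (p q : ℤ) (hp : p ≠ 0) (hq : q = 1 ∨ q = -1)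
    (hΔ : p ^ 2 - 4 * q ≠ 0)
    (U V : ℤ → ℤ)
    (hU0 : U 0 = 0) (hU1 : U 1 = 1)
    (hUrec : ∀ n : ℤ, U n = p * U (n - 1) - q * U (n - 2))
    (hV0 : V 0 = 2) (hV1 : V 1 = p)
    (hVrec : ∀ n : ℤ, V n = p * V (n - 1) - q * V (n - 2))
    (c d : ℤ → ℤ) (hc : ∀ n : ℤ, U 4 * c n = U (4 * n + 4)) (hd : ∀ n : ℤ, V 2 * d n = V (4 * n + 2))
    (r s : ℤ) (m : ℕ) :
    (p ^ 2 - 4 * q) * (∑ i ∈ Finset.range (2 * m + 1), (-1 : ℤ) ^ i * (U (r + 2 * i) * U (s + 2 * i))) =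
        d m * V (4 * m + r + s) - q ^ r.natAbs * V (s - r) ∧
      (p ^ 2 - 4 * q) * (∑ i ∈ Finset.range (2 * m + 2), (-1 : ℤ) ^ i * (U (r + 2 * i) * U (s + 2 * i))) =
        -(p * (p ^ 2 - 4 * q) * c m * U (4 * m + r + s + 2)) := by
  have hqq : q * q = 1 := by rcases hq with rfl | rfl <;> norm_num
  have hq2 : q ^ 2 = 1 := by rcases hq with rfl | rfl <;> norm_num
  have hqne : q ≠ 0 := by rcases hq with rfl | rfl <;> norm_num
  -- shifted recurrences
  have hU' : ∀ n : ℤ, U (n + 2) = p * U (n + 1) - q * U n := by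
    intro n; have h := hUrec (n + 2)
    rw [show n + 2 - 1 = n + 1 by ring, show n + 2 - 2 = n by ring] at h; exact h
  have hV' : ∀ n : ℤ, V (n + 2) = p * V (n + 1) - q * V n := by
    intro n; have h := hVrec (n + 2)
    rw [show n + 2 - 1 = n + 1 by ring, show n + 2 - 2 = n by ring] at h; exact h
  -- Q-lemmas
  have hQmul : ∀ a b : ℤ, q ^ (a + b).natAbs = q ^ a.natAbs * q ^ b.natAbs := by
    intro a b
    rcases hq with rfl | rfl
    · simp
    · have hpe : ∀ n : ℤ, Even n → ((-1 : ℤ)) ^ n.natAbs = 1 := fun n hn =>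
        Even.neg_one_pow (Int.natAbs_even.mpr hn)
      have hpo : ∀ n : ℤ, Odd n → ((-1 : ℤ)) ^ n.natAbs = -1 := fun n hn =>
        Odd.neg_one_pow (Int.natAbs_odd.mpr hn)
      rcases Int.even_or_odd a with ha | ha <;> rcases Int.even_or_odd b with hb | hb
      · rw [hpe _ (ha.add hb), hpe _ ha, hpe _ hb]; norm_num
      · rw [hpo _ (Even.add_odd ha hb), hpe _ ha, hpo _ hb]; norm_num
      · rw [hpo _ (Odd.add_even ha hb), hpo _ ha, hpe _ hb]; norm_num
      · rw [hpe _ (Odd.add_odd ha hb), hpo _ ha, hpo _ hb]; norm_num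
  have hQsq : ∀ a : ℤ, q ^ a.natAbs * q ^ a.natAbs = 1 := by
    intro a; rw [← pow_add, ← two_mul, pow_mul, hq2, one_pow]
  have hQ1 : q ^ (1 : ℤ).natAbs = q := by norm_num
  have hQsucc : ∀ a : ℤ, q ^ (a + 1).natAbs = q * q ^ a.natAbs := by
    intro a; rw [hQmul a 1, hQ1, mul_comm]
  have hQ2' : q ^ (2 : ℤ).natAbs = 1 := by norm_num [hq2]
  have hQadd2 : ∀ a : ℤ, q ^ (a + 2).natAbs = q ^ a.natAbs := by
    intro a; rw [hQmul a 2, hQ2', mul_one]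
  have hQ4 : q ^ (4 : ℤ).natAbs = 1 := by
    rw [show (4 : ℤ) = 2 + 2 by norm_num, hQmul, hQ2', mul_one]
  have hQeven : ∀ a : ℤ, Even a → q ^ a.natAbs = 1 := by
    rintro a ⟨k, rfl⟩; rw [hQmul]; exact hQsq k
  have hQq : ∀ b : ℤ, q ^ b.natAbs * q ^ (b - 1).natAbs = q := by
    intro b
    have h := hQsucc (b - 1); rw [show b - 1 + 1 = b by ring] at h
    rw [h, mul_assoc, hQsq, mul_one]
  -- the zero lemma
  have key0 : ∀ h : ℤ → ℤ, (∀ n : ℤ, h (n + 2) = p * h (n + 1) - q * h n) →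
      h 0 = 0 → h 1 = 0 → ∀ n : ℤ, h n = 0 := by
    intro h hrec h0 h1
    have main : ∀ n : ℤ, h n = 0 ∧ h (n + 1) = 0 := by
      intro n
      induction n using Int.induction_on with
      | zero => exact ⟨h0, by simpa using h1⟩
      | succ k ih =>
        refine ⟨ih.2, ?_⟩
        rw [show (k : ℤ) + 1 + 1 = (k : ℤ) + 2 by ring, hrec, ih.1, ih.2]; ring
      | pred k ih =>
        have hr := hrec (-(k : ℤ) - 1)
        rw [show -(k : ℤ) - 1 + 2 = -(k : ℤ) + 1 by ring,
          show -(k : ℤ) - 1 + 1 = -(k : ℤ) by ring] at hr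
        rw [ih.1, ih.2] at hr
        have h2 : q * h (-(k : ℤ) - 1) = 0 := by linarith
        have h3 : h (-(k : ℤ) - 1) = 0 := by
          rcases mul_eq_zero.mp h2 with h' | h'
          · exact absurd h' hqne
          · exact h'
        refine ⟨h3, ?_⟩
        rw [show -(k : ℤ) - 1 + 1 = -(k : ℤ) by ring]; exact ih.1
    exact fun n => (main n).1
  -- values
  have hVn1 : V (-1) = q * p := by
    have h := hVrec 1
    rw [show (1 : ℤ) - 1 = 0 by ring, show (1 : ℤ) - 2 = -1 by ring, hV0, hV1] at h
    have h2 : q * V (-1) = p := by linarith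
    calc V (-1) = (q * q) * V (-1) := by rw [hqq]; ring
    _ = q * p := by rw [mul_assoc, h2]
  have hU2 : U 2 = p := by
    have h := hUrec 2
    rw [show (2 : ℤ) - 1 = 1 by ring, show (2 : ℤ) - 2 = 0 by ring, hU0, hU1] at h
    rw [h]; ring
  have hV2 : V 2 = p ^ 2 - 2 * q := by
    have h := hVrec 2
    rw [show (2 : ℤ) - 1 = 1 by ring, show (2 : ℤ) - 2 = 0 by ring, hV0, hV1] at h
    rw [h]; ring
  have hU3 : U 3 = p ^ 2 - q := by
    have h := hUrec 3
    rw [show (3 : ℤ) - 1 = 2 by ring, show (3 : ℤ) - 2 = 1 by ring, hU1, hU2] at h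
    rw [h]; ring
  have hU4 : U 4 = p * (p ^ 2 - 2 * q) := by
    have h := hUrec 4
    rw [show (4 : ℤ) - 1 = 3 by ring, show (4 : ℤ) - 2 = 2 by ring, hU2, hU3] at h
    rw [h]; ring
  have haux : p ^ 2 - 2 * q ≠ 0 := by
    rcases hq with rfl | rfl
    · intro h
      have h1 : p = 1 ∨ p = -1 ∨ 2 ≤ p ∨ p ≤ -2 := by omega
      rcases h1 with rfl | rfl | h1 | h1
      · norm_num at h
      · norm_num at h
      · nlinarith [sq_nonneg (p - 2)]
      · nlinarith [sq_nonneg (p + 2)]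
    · intro h; nlinarith [sq_nonneg p]
  have hV2ne : V 2 ≠ 0 := by rw [hV2]; exact haux
  have hU4ne : U 4 ≠ 0 := by rw [hU4]; exact mul_ne_zero hp haux
  -- V(-n) = q^|n| * V n
  have hVneg : ∀ n : ℤ, V (-n) = q ^ n.natAbs * V n := by
    have hz := key0 (fun n => V n - q ^ n.natAbs * V (-n)) ?_ ?_ ?_
    · intro n
      have h1 := hz n
      have h2 : q ^ n.natAbs * V (-n) = V n := by linarith
      rw [← h2, ← mul_assoc, hQsq, one_mul]
    · intro n
      have e1 := hV' n
      have e2 := hV' (-n - 2)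
      rw [show -n - 2 + 2 = -n by ring, show -n - 2 + 1 = -n - 1 by ring] at e2
      rw [hQadd2, hQsucc, show -(n + 2) = -n - 2 by ring, show -(n + 1) = -n - 1 by ring]
      linear_combination (norm := ring_nf)
        e1 - q * q ^ n.natAbs * e2 + q ^ n.natAbs * V (-n - 2) * hqq
    · simp [hV0]
    · rw [show -(1 : ℤ) = -1 by norm_num, hVn1, hV1, hQ1]
      linear_combination (norm := ring_nf) -p * hqq
  -- Δ * U n = V (n+1) - q * V (n-1)
  have hDU : ∀ n : ℤ, (p ^ 2 - 4 * q) * U n = V (n + 1) - q * V (n - 1) := by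
    have hz := key0 (fun n => (p ^ 2 - 4 * q) * U n - (V (n + 1) - q * V (n - 1))) ?_ ?_ ?_
    · intro n
      have h1 := hz n
      linarith
    · intro n
      have e1 := hU' n
      have e2 := hV' (n + 1)
      have e3 := hV' (n - 1)
      linear_combination (norm := ring_nf) (p ^ 2 - 4 * q) * e1 - e2 + q * e3
    · rw [hU0, show (0 : ℤ) + 1 = 1 by ring, show (0 : ℤ) - 1 = -1 by ring, hV1, hVn1]
      linear_combination (norm := ring_nf) p * hqq
    · rw [hU1, show (1 : ℤ) + 1 = 2 by ring, show (1 : ℤ) - 1 = 0 by ring, hV2, hV0]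
      ring
  -- Δ * (U a * U b) = V (a+b) - q^|b| * V (a-b)
  have hUU : ∀ b a : ℤ,
      (p ^ 2 - 4 * q) * (U a * U b) = V (a + b) - q ^ b.natAbs * V (a - b) := by
    intro b
    have hz := key0
      (fun a => (p ^ 2 - 4 * q) * (U a * U b) - (V (a + b) - q ^ b.natAbs * V (a - b))) ?_ ?_ ?_
    · intro a
      have h1 := hz a
      linarith
    · intro a
      have e1 := hU' a
      have e2 := hV' (a + b)
      have e3 := hV' (a - b)
      linear_combination (norm := ring_nf) (p ^ 2 - 4 * q) * U b * e1 - e2 + q ^ b.natAbs * e3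
    · rw [hU0, show (0 : ℤ) + b = b by ring, show (0 : ℤ) - b = -b by ring, hVneg b]
      linear_combination (norm := ring_nf) V b * hQsq b
    · rw [hU1, show (1 : ℤ) - b = -(b - 1) by ring, hVneg (b - 1)]
      linear_combination (norm := ring_nf) hDU b + V (b - 1) * hQq b
  -- V a * V b = V (a+b) + q^|b| * V (a-b)
  have hVV : ∀ b a : ℤ, V a * V b = V (a + b) + q ^ b.natAbs * V (a - b) := by
    intro b
    have hz := key0
      (fun a => V a * V b - (V (a + b) + q ^ b.natAbs * V (a - b))) ?_ ?_ ?_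
    · intro a
      have h1 := hz a
      linarith
    · intro a
      have e1 := hV' a
      have e2 := hV' (a + b)
      have e3 := hV' (a - b)
      linear_combination (norm := ring_nf) V b * e1 - e2 - q ^ b.natAbs * e3
    · rw [hV0, show (0 : ℤ) + b = b by ring, show (0 : ℤ) - b = -b by ring, hVneg b]
      linear_combination (norm := ring_nf) (- V b) * hQsq b
    · rw [hV1, show (1 : ℤ) - b = -(b - 1) by ring, hVneg (b - 1)]
      have e := hV' (b - 1)
      rw [show b - 1 + 2 = b + 1 by ring, show b - 1 + 1 = b by ring] at e
      linear_combination (norm := ring_nf) -e - V (b - 1) * hQq b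
  -- term lemma
  have hterm : ∀ x : ℤ, (p ^ 2 - 4 * q) * (U (r + 2 * x) * U (s + 2 * x)) =
      V (r + s + 4 * x) - q ^ r.natAbs * V (s - r) := by
    intro x
    have h1 := hUU (s + 2 * x) (r + 2 * x)
    rw [show r + 2 * x + (s + 2 * x) = r + s + 4 * x by ring,
      show r + 2 * x - (s + 2 * x) = -(s - r) by ring, hVneg (s - r)] at h1
    have h2 : q ^ (s + 2 * x).natAbs * q ^ (s - r).natAbs = q ^ r.natAbs := by
      have e1 : q ^ (s + 2 * x).natAbs = q ^ s.natAbs := by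
        rw [show s + 2 * x = s + (x + x) by ring, hQmul, hQmul, hQsq, mul_one]
      have e2 : q ^ s.natAbs = q ^ (s - r).natAbs * q ^ r.natAbs := by
        rw [← hQmul, sub_add_cancel]
      rw [e1, e2]
      linear_combination (norm := ring_nf) q ^ r.natAbs * hQsq (s - r)
    linear_combination (norm := ring_nf) h1 - V (s - r) * h2
  -- d-step
  have hdstep : ∀ x t : ℤ,
      d (x + 1) * V (t + 4 * x + 4) - d x * V (t + 4 * x) =
        V (t + 8 * x + 8) - V (t + 8 * x + 4) := by
    intro x t
    apply mul_left_cancel₀ hV2ne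
    have h1 := hd (x + 1); rw [show 4 * (x + 1) + 2 = 4 * x + 6 by ring] at h1
    have h2 := hd x
    have h3 := hVV (t + 4 * x + 4) (4 * x + 6)
    have h4 := hVV (t + 4 * x) (4 * x + 2)
    have h5 := hVV 2 (t + 8 * x + 8)
    have h6 := hVV 2 (t + 8 * x + 4)
    have e1 : q ^ (t + 4 * x + 4).natAbs = q ^ t.natAbs := by
      rw [show t + 4 * x + 4 = t + (4 * x + 4) by ring, hQmul,
        hQeven (4 * x + 4) ⟨2 * x + 2, by ring⟩, mul_one]
    have e2 : q ^ (t + 4 * x).natAbs = q ^ t.natAbs := by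
      rw [show t + 4 * x = t + 4 * x by ring, hQmul,
        hQeven (4 * x) ⟨2 * x, by ring⟩, mul_one]
    rw [e1] at h3; rw [e2] at h4; rw [hQ2'] at h5 h6
    linear_combination (norm := ring_nf)
      V (t + 4 * x + 4) * h1 - V (t + 4 * x) * h2 + h3 - h4 - h5 + h6
  -- c-step
  have hcstep : ∀ x t : ℤ,
      c (x + 1) * U (t + 4 * x + 6) = c x * U (t + 4 * x + 2) + U (t + 8 * x + 10) := by
    intro x t
    have hne : (p ^ 2 - 4 * q) * U 4 ≠ 0 := mul_ne_zero hΔ hU4ne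
    apply mul_left_cancel₀ hne
    have h1 := hc (x + 1); rw [show 4 * (x + 1) + 4 = 4 * x + 8 by ring] at h1
    have h2 := hc x
    have h3 := hUU (t + 4 * x + 6) (4 * x + 8)
    have h4 := hUU (t + 4 * x + 2) (4 * x + 4)
    have h5 := hUU 4 (t + 8 * x + 10)
    have e1 : q ^ (t + 4 * x + 6).natAbs = q ^ t.natAbs := by
      rw [show t + 4 * x + 6 = t + (4 * x + 6) by ring, hQmul,
        hQeven (4 * x + 6) ⟨2 * x + 3, by ring⟩, mul_one]
    have e2 : q ^ (t + 4 * x + 2).natAbs = q ^ t.natAbs := by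
      rw [show t + 4 * x + 2 = t + (4 * x + 2) by ring, hQmul,
        hQeven (4 * x + 2) ⟨2 * x + 1, by ring⟩, mul_one]
    rw [e1] at h3; rw [e2] at h4; rw [hQ4] at h5
    linear_combination (norm := ring_nf)
      (p ^ 2 - 4 * q) * U (t + 4 * x + 6) * h1 -
        (p ^ 2 - 4 * q) * U (t + 4 * x + 2) * h2 + h3 - h4 - h5
  have hd0 : d 0 = 1 := by
    apply mul_left_cancel₀ hV2ne
    rw [hd 0, mul_one]; norm_num
  have hc0 : c 0 = 1 := by
    apply mul_left_cancel₀ hU4ne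
    rw [hc 0, mul_one]; norm_num
  -- main induction
  induction m with
  | zero =>
    constructor
    · rw [Finset.sum_range_one]
      have ht := hterm 0
      norm_num at ht ⊢
      rw [hd0, one_mul]
      exact ht
    · rw [show 2 * 0 + 2 = 0 + 1 + 1 by norm_num, Finset.sum_range_succ, Finset.sum_range_succ,
        Finset.sum_range_zero]
      have h0 := hterm 0
      have h1 := hterm 1
      norm_num at h0 h1 ⊢
      have h2 := hUU 2 (r + s + 2)
      rw [hQ2', hU2] at h2
      rw [hc0]
      linear_combination (norm := ring_nf) h0 - h1 + h2
  | succ m ih =>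
    obtain ⟨ih1, ih2⟩ := ih
    constructor
    · rw [show 2 * (m + 1) + 1 = (2 * m + 1) + 1 + 1 by ring, Finset.sum_range_succ,
        Finset.sum_range_succ]
      have e1 : ((-1 : ℤ)) ^ (2 * m + 1) = -1 := Odd.neg_one_pow ⟨m, by ring⟩
      have e2 : ((-1 : ℤ)) ^ (2 * m + 1 + 1) = 1 := Even.neg_one_pow ⟨m + 1, by ring⟩
      rw [e1, e2]
      push_cast
      have t1 := hterm (2 * (m : ℤ) + 1)
      have t2 := hterm (2 * (m : ℤ) + 2)
      have hds := hdstep (m : ℤ) (r + s)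
      rw [show r + s + 4 * (2 * (m : ℤ) + 1) = r + s + 8 * (m : ℤ) + 4 by ring] at t1
      rw [show r + s + 4 * (2 * (m : ℤ) + 2) = r + s + 8 * (m : ℤ) + 8 by ring] at t2
      rw [show 4 * (m : ℤ) + r + s = r + s + 4 * (m : ℤ) by ring] at ih1
      rw [show 4 * ((m : ℤ) + 1) + r + s = r + s + 4 * (m : ℤ) + 4 by ring]
      linear_combination ih1 - t1 + t2 - hds
    · rw [show 2 * (m + 1) + 2 = (2 * m + 2) + 1 + 1 by ring, Finset.sum_range_succ,
        Finset.sum_range_succ]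
      have e1 : ((-1 : ℤ)) ^ (2 * m + 2) = 1 := Even.neg_one_pow ⟨m + 1, by ring⟩
      have e2 : ((-1 : ℤ)) ^ (2 * m + 2 + 1) = -1 := Odd.neg_one_pow ⟨m + 1, by ring⟩
      rw [e1, e2]
      push_cast
      have t3 := hterm (2 * (m : ℤ) + 2)
      have t4 := hterm (2 * (m : ℤ) + 3)
      have h5 := hUU 2 (r + s + 8 * (m : ℤ) + 10)
      rw [hQ2', hU2] at h5
      have hcs := hcstep (m : ℤ) (r + s)
      rw [show r + s + 4 * (2 * (m : ℤ) + 2) = r + s + 8 * (m : ℤ) + 8 by ring] at t3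
      rw [show r + s + 4 * (2 * (m : ℤ) + 3) = r + s + 8 * (m : ℤ) + 12 by ring] at t4
      rw [show r + s + 8 * (m : ℤ) + 10 + 2 = r + s + 8 * (m : ℤ) + 12 by ring,
        show r + s + 8 * (m : ℤ) + 10 - 2 = r + s + 8 * (m : ℤ) + 8 by ring] at h5
      rw [show 4 * (m : ℤ) + r + s + 2 = r + s + 4 * (m : ℤ) + 2 by ring] at ih2
      rw [show 4 * ((m : ℤ) + 1) + r + s + 2 = r + s + 4 * (m : ℤ) + 6 by ring]
      linear_combination ih2 + t3 - t4 + h5 + p * (p ^ 2 - 4 * q) * hcs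
end

section
/- For all integers r, s and all natural numbers m, the following two identities hold: Σ_{i=0}^{2m} (−1)^i·V_{r+2i}·V_{s+2i} = d_m·V_{4m+r+s} + q^r·V_{s−r}, and Σ_{i=0}^{2m+1} (−1)^i·V_{r+2i}·V_{s+2i} = −p·Δ·c_m·U_{4m+r+s+2}. -/
theorem aux_uniq (p q : ℤ) (hq2 : q * q = 1) (g h : ℤ → ℤ)
    (hg : ∀ n : ℤ, g n = p * g (n - 1) - q * g (n - 2))
    (hh : ∀ n : ℤ, h n = p * h (n - 1) - q * h (n - 2))
    (h0 : g 0 = h 0) (h1 : g 1 = h 1) : ∀ n : ℤ, g n = h n := by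
  have key : ∀ n : ℤ, g n = h n ∧ g (n + 1) = h (n + 1) := by
    intro n
    induction n using Int.induction_on with
    | zero => exact ⟨h0, h1⟩
    | succ i ih =>
      refine ⟨ih.2, ?_⟩
      have eg := hg ((i : ℤ) + 1 + 1)
      have eh := hh ((i : ℤ) + 1 + 1)
      ring_nf at eg eh ih ⊢
      rw [eg, eh, ih.1, ih.2]
    | pred i ih =>
      have eg := hg (-(i : ℤ) + 1)
      have eh := hh (-(i : ℤ) + 1)
      ring_nf at eg eh ih ⊢
      constructor
      · linear_combination q * eg - q * eh - q * ih.2 + q * p * ih.1 - (g (-1 - (i:ℤ)) - h (-1 - (i:ℤ))) * hq2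
      · exact ih.1
  exact fun n => (key n).1

theorem aux_pow (q : ℤ) (hq2 : q * q = 1) : ∀ a b : ℕ, a % 2 = b % 2 → q ^ a = q ^ b := by
  have key : ∀ a : ℕ, q ^ a = q ^ (a % 2) := by
    intro a
    conv_lhs => rw [← Nat.div_add_mod a 2]
    rw [pow_add, pow_mul, sq, hq2, one_pow, one_mul]
  intro a b h
  rw [key a, key b, h]

section
variable (p q : ℤ) (hq2 : q * q = 1) (U V : ℤ → ℤ)
    (hU0 : U 0 = 0) (hU1 : U 1 = 1)
    (hUrec : ∀ n : ℤ, U n = p * U (n - 1) - q * U (n - 2))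
    (hV0 : V 0 = 2) (hV1 : V 1 = p)
    (hVrec : ∀ n : ℤ, V n = p * V (n - 1) - q * V (n - 2))

include hq2 hV0 hV1 hVrec in
theorem aux_Vneg : ∀ a : ℤ, V (-a) = q ^ a.natAbs * V a := by
  have key : ∀ n : ℕ, V (-(n:ℤ)) = q ^ n * V (n:ℤ) ∧ V (-((n:ℤ)+1)) = q ^ (n+1) * V ((n:ℤ)+1) := by
    intro n
    induction n with
    | zero =>
      constructor
      · norm_num
      · have h := hVrec 1
        norm_num [hV0, hV1] at h ⊢
        linear_combination q * h - V (-1) * hq2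
    | succ n ih =>
      have h2 : V (-((n:ℤ)+1+1)) = q ^ (n+1+1) * V ((n:ℤ)+1+1) := by
        have e1 := hVrec (-(n:ℤ))
        have e2 := hVrec ((n:ℤ)+2)
        have hqq : q ^ (n + 1 + 1) = q ^ n := by
          rw [pow_succ, pow_succ, mul_assoc, hq2, mul_one]
        rw [hqq]
        ring_nf at e1 e2 ih ⊢
        linear_combination q*e1 - V (-2-(n:ℤ))*hq2 - q*ih.1 + q*p*ih.2 + p*q^n*V (1+(n:ℤ))*hq2 - q^n*e2
      constructor
      · have := ih.2; push_cast; push_cast at this; exact this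
      · push_cast; push_cast at h2; convert h2 using 3 <;> push_cast <;> ring
  intro a
  rcases Int.natAbs_eq a with h | h
  · obtain ⟨n, rfl⟩ : ∃ n : ℕ, a = (n:ℤ) := ⟨a.natAbs, h⟩
    simpa using (key n).1
  · obtain ⟨n, rfl⟩ : ∃ n : ℕ, a = -(n:ℤ) := ⟨a.natAbs, h⟩
    simp only [neg_neg, Int.natAbs_neg, Int.natAbs_natCast]
    rw [(key n).1, ← mul_assoc, ← pow_add, aux_pow q hq2 (n+n) 0 (by omega), pow_zero, one_mul]

include hq2 hU0 hU1 hUrec hV0 hV1 hVrec in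
theorem aux_L3 : ∀ b : ℤ, (p^2 - 4*q) * U b = V (b+1) - q * V (b-1) := by
  apply aux_uniq p q hq2
  · intro n; linear_combination (p^2-4*q) * hUrec n
  · intro n
    have a := hVrec (n+1)
    have b' := hVrec (n-1)
    ring_nf at a b' ⊢
    linear_combination a - q*b'
  · have h := aux_Vneg p q hq2 V hV0 hV1 hVrec 1
    norm_num [hU0, hV1] at h ⊢
    rw [h]; ring_nf; linear_combination p * hq2
  · have h2 := hVrec 2
    norm_num [hU1, hV0, hV1] at h2 ⊢
    rw [h2]; ring

include hq2 hV0 hV1 hVrec in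
theorem aux_L1 : ∀ a b : ℤ, V a * V b = V (a+b) + q ^ a.natAbs * V (b-a) := by
  intro a
  apply aux_uniq p q hq2
  · intro n; linear_combination V a * hVrec n
  · intro n; beta_reduce
    have e1 := hVrec (a+n)
    have e2 := hVrec (n-a)
    ring_nf at e1 e2 ⊢
    linear_combination e1 + q^a.natAbs * e2
  · simp only [add_zero, zero_sub, hV0, aux_Vneg p q hq2 V hV0 hV1 hVrec a]
    have hp2 : q^a.natAbs * q^a.natAbs = 1 := by
      rw [← pow_add]; exact (aux_pow q hq2 (a.natAbs + a.natAbs) 0 (by omega)).trans (pow_zero q)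
    linear_combination (-(V a)) * hp2
  · rw [hV1, show (1:ℤ) - a = -(a-1) by ring, aux_Vneg p q hq2 V hV0 hV1 hVrec (a-1)]
    have hodd : q^a.natAbs * q^((a-1).natAbs) = q := by
      rw [← pow_add, aux_pow q hq2 (a.natAbs + (a-1).natAbs) 1 (by omega), pow_one]
    have e1 := hVrec (a+1)
    ring_nf at e1 hodd ⊢
    linear_combination -e1 - V (-1+a) * hodd

include hq2 hU0 hU1 hUrec hV0 hV1 hVrec in
theorem aux_L2 : ∀ a b : ℤ, (p^2 - 4*q) * (U a * U b) = V (a+b) - q ^ b.natAbs * V (a-b) := by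
  intro a b
  have key : ∀ x : ℤ, (fun x => (p^2-4*q) * (U x * U b)) x = (fun x => V (x+b) - q^b.natAbs * V (x-b)) x := by
    apply aux_uniq p q hq2
    · intro n; linear_combination (p^2-4*q) * U b * hUrec n
    · intro n; beta_reduce
      have e1 := hVrec (n+b)
      have e2 := hVrec (n-b)
      ring_nf at e1 e2 ⊢
      linear_combination e1 - q^b.natAbs * e2
    · simp only [hU0, zero_add, zero_sub, aux_Vneg p q hq2 V hV0 hV1 hVrec b]
      have hp2 : q^b.natAbs * q^b.natAbs = 1 := by
        rw [← pow_add]; exact (aux_pow q hq2 (b.natAbs + b.natAbs) 0 (by omega)).trans (pow_zero q)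
      linear_combination (V b) * hp2
    · simp only [hU1, show (1:ℤ) - b = -(b-1) by ring, aux_Vneg p q hq2 V hV0 hV1 hVrec (b-1)]
      have hodd : q^b.natAbs * q^((b-1).natAbs) = q := by
        rw [← pow_add, aux_pow q hq2 (b.natAbs + (b-1).natAbs) 1 (by omega), pow_one]
      have e3 := aux_L3 p q hq2 U V hU0 hU1 hUrec hV0 hV1 hVrec b
      ring_nf at e3 hodd ⊢
      linear_combination e3 + V (-1+b) * hodd
  exact key a

end

theorem stmt_10 (p q : ℤ) (hp : p ≠ 0) (hq : q = 1 ∨ q = -1)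
    (hΔ : p ^ 2 - 4 * q ≠ 0)
    (U V : ℤ → ℤ)
    (hU0 : U 0 = 0) (hU1 : U 1 = 1)
    (hUrec : ∀ n : ℤ, U n = p * U (n - 1) - q * U (n - 2))
    (hV0 : V 0 = 2) (hV1 : V 1 = p)
    (hVrec : ∀ n : ℤ, V n = p * V (n - 1) - q * V (n - 2))
    (c d : ℤ → ℤ) (hc : ∀ n : ℤ, U 4 * c n = U (4 * n + 4)) (hd : ∀ n : ℤ, V 2 * d n = V (4 * n + 2))
    (r s : ℤ) (m : ℕ) :
    (∑ i ∈ Finset.range (2 * m + 1), (-1 : ℤ) ^ i * (V (r + 2 * i) * V (s + 2 * i))) =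
        d m * V (4 * m + r + s) + q ^ r.natAbs * V (s - r) ∧
      (∑ i ∈ Finset.range (2 * m + 2), (-1 : ℤ) ^ i * (V (r + 2 * i) * V (s + 2 * i))) =
        -(p * (p ^ 2 - 4 * q) * c m * U (4 * m + r + s + 2)) := by
  have hq2 : q * q = 1 := by rcases hq with h | h <;> simp [h]
  have L1 := aux_L1 p q hq2 V hV0 hV1 hVrec
  have L2 := aux_L2 p q hq2 U V hU0 hU1 hUrec hV0 hV1 hVrec
  have hqe : ∀ a : ℤ, a.natAbs % 2 = 0 → q ^ a.natAbs = 1 := by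
    intro a h
    rw [aux_pow q hq2 _ 0 h, pow_zero]
  -- basic values
  have hV2 : V 2 = p^2 - 2*q := by
    have h := hVrec 2; norm_num [hV1, hV0] at h; linear_combination h
  have hU2 : U 2 = p := by
    have h := hUrec 2; norm_num [hU1, hU0] at h; linear_combination h
  have hU3 : U 3 = p^2 - q := by
    have h := hUrec 3; norm_num [hU2, hU1] at h; linear_combination h
  have hU4 : U 4 = p * V 2 := by
    have h := hUrec 4; norm_num [hU3, hU2] at h; rw [hV2]; linear_combination h
  have hV2ne : V 2 ≠ 0 := by
    rw [hV2]
    rcases hq with h | h <;> subst h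
    · intro hcon
      have h1 : p^2 = 2 := by linarith
      have h2 : p ≤ 1 := by nlinarith
      have h3 : -1 ≤ p := by nlinarith
      interval_cases p <;> norm_num at h1
    · intro hcon
      nlinarith [sq_nonneg p]
  have hpV2 : p * V 2 ≠ 0 := mul_ne_zero hp hV2ne
  -- signs
  have hsgn : ∀ k : ℕ, (-1:ℤ) ^ (2*k+1) = -1 := by
    intro k; rw [pow_succ, pow_mul]; norm_num
  have hsum1 : ∀ k : ℕ, (∑ i ∈ Finset.range (2*k+1), (-1:ℤ)^i) = 1 := by
    intro k
    rw [neg_one_geom_sum]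
    simp [Nat.even_add_one, parity_simps]
  have hsum2 : ∀ k : ℕ, (∑ i ∈ Finset.range (2*k+2), (-1:ℤ)^i) = 0 := by
    intro k
    rw [neg_one_geom_sum]
    simp [Nat.even_add_one, parity_simps]
  -- product-to-sum for terms
  have key : ∀ i : ℕ, V (r + 2*(i:ℤ)) * V (s + 2*(i:ℤ)) =
      V (r + s + 4*(i:ℤ)) + q ^ r.natAbs * V (s - r) := by
    intro i
    have h := L1 (r + 2*(i:ℤ)) (s + 2*(i:ℤ))
    rw [show r + 2*(i:ℤ) + (s + 2*(i:ℤ)) = r + s + 4*(i:ℤ) by ring,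
        show s + 2*(i:ℤ) - (r + 2*(i:ℤ)) = s - r by ring] at h
    rw [h, aux_pow q hq2 (r + 2*(i:ℤ)).natAbs r.natAbs (by omega)]
  -- splitting sums
  have split : ∀ n : ℕ, (∑ i ∈ Finset.range n, (-1:ℤ)^i * (V (r + 2*(i:ℤ)) * V (s + 2*(i:ℤ)))) =
      (∑ i ∈ Finset.range n, (-1:ℤ)^i * V (r + s + 4*(i:ℤ)))
        + (∑ i ∈ Finset.range n, (-1:ℤ)^i) * (q ^ r.natAbs * V (s - r)) := by
    intro n
    rw [Finset.sum_mul, ← Finset.sum_add_distrib]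
    apply Finset.sum_congr rfl
    intro i _
    rw [key i]; ring
  -- the core sum identity
  have C1 : ∀ k : ℕ, V 2 * (∑ i ∈ Finset.range (2*k+1), (-1:ℤ)^i * V (r + s + 4*(i:ℤ)))
      = V (4*(k:ℤ)+2) * V (r + s + 4*(k:ℤ)) := by
    intro k
    induction k with
    | zero => norm_num
    | succ k ih =>
      rw [show 2*(k+1)+1 = (2*k+1)+1+1 by ring, Finset.sum_range_succ, Finset.sum_range_succ]
      rw [hsgn k, show (-1:ℤ)^(2*k+1+1) = 1 by rw [pow_succ, hsgn k]; norm_num]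
      push_cast
      rw [show r + s + 4*(2*(k:ℤ)+1) = r + s + (8*(k:ℤ)+4) by ring,
          show r + s + 4*(2*(k:ℤ)+2) = r + s + (8*(k:ℤ)+8) by ring,
          show 4*((k:ℤ)+1)+2 = 4*(k:ℤ)+6 by ring,
          show r + s + 4*((k:ℤ)+1) = r + s + (4*(k:ℤ)+4) by ring]
      have E1 := L1 (4*(k:ℤ)+2) (r + s + 4*(k:ℤ))
      rw [show 4*(k:ℤ)+2 + (r + s + 4*(k:ℤ)) = r + s + (8*(k:ℤ)+2) by ring,
          show r + s + 4*(k:ℤ) - (4*(k:ℤ)+2) = r + s + (-2) by ring,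
          hqe _ (by omega), one_mul] at E1
      have E2 := L1 (4*(k:ℤ)+6) (r + s + (4*(k:ℤ)+4))
      rw [show 4*(k:ℤ)+6 + (r + s + (4*(k:ℤ)+4)) = r + s + (8*(k:ℤ)+10) by ring,
          show r + s + (4*(k:ℤ)+4) - (4*(k:ℤ)+6) = r + s + (-2) by ring,
          hqe _ (by omega), one_mul] at E2
      have E3 := L1 2 (r + s + (8*(k:ℤ)+8))
      rw [show (2:ℤ) + (r + s + (8*(k:ℤ)+8)) = r + s + (8*(k:ℤ)+10) by ring,
          show r + s + (8*(k:ℤ)+8) - 2 = r + s + (8*(k:ℤ)+6) by ring,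
          hqe _ (by omega), one_mul] at E3
      have E4 := L1 2 (r + s + (8*(k:ℤ)+4))
      rw [show (2:ℤ) + (r + s + (8*(k:ℤ)+4)) = r + s + (8*(k:ℤ)+6) by ring,
          show r + s + (8*(k:ℤ)+4) - 2 = r + s + (8*(k:ℤ)+2) by ring,
          hqe _ (by omega), one_mul] at E4
      linear_combination ih + E1 + E3 - E2 - E4
  constructor
  · rw [split (2*m+1), hsum1 m, one_mul]
    have hdm := hd (m:ℤ)
    have h := C1 m
    rw [← hdm, mul_assoc] at h
    have h2 := mul_left_cancel₀ hV2ne h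
    rw [h2, show r + s + 4*(m:ℤ) = 4*(m:ℤ) + r + s by ring]
  · rw [split (2*m+2), hsum2 m, zero_mul, add_zero]
    rw [show 2*m+2 = (2*m+1)+1 by ring, Finset.sum_range_succ, hsgn m]
    push_cast
    rw [show r + s + 4*(2*(m:ℤ)+1) = r + s + (8*(m:ℤ)+4) by ring]
    -- multiply by p * V 2 and cancel
    apply mul_left_cancel₀ hpV2
    have E1 := L1 (4*(m:ℤ)+2) (r + s + 4*(m:ℤ))
    rw [show 4*(m:ℤ)+2 + (r + s + 4*(m:ℤ)) = r + s + (8*(m:ℤ)+2) by ring,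
        show r + s + 4*(m:ℤ) - (4*(m:ℤ)+2) = r + s + (-2) by ring,
        hqe _ (by omega), one_mul] at E1
    have E4 := L1 2 (r + s + (8*(m:ℤ)+4))
    rw [show (2:ℤ) + (r + s + (8*(m:ℤ)+4)) = r + s + (8*(m:ℤ)+6) by ring,
        show r + s + (8*(m:ℤ)+4) - 2 = r + s + (8*(m:ℤ)+2) by ring,
        hqe _ (by omega), one_mul] at E4
    have E5 := L2 (r + s + 4*(m:ℤ) + 2) (4*(m:ℤ)+4)
    rw [show r + s + 4*(m:ℤ) + 2 + (4*(m:ℤ)+4) = r + s + (8*(m:ℤ)+6) by ring,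
        show r + s + 4*(m:ℤ) + 2 - (4*(m:ℤ)+4) = r + s + (-2) by ring,
        hqe _ (by omega), one_mul] at E5
    have hcm := hc (m:ℤ)
    rw [hU4] at hcm
    rw [show (4:ℤ)*(m:ℤ) + r + s + 2 = r + s + 4*(m:ℤ) + 2 by ring]
    linear_combination p * (C1 m) + p * E1 - p * E4 + p * E5
      + (p * (p^2 - 4*q) * U (r + s + 4*(m:ℤ) + 2)) * hcm
end

section
/- For all integers r, s and all natural numbers m, the following two identities hold: Σ_{i=0}^{2m} (−1)^i·U_{r+2i}·V_{s+2i} = d_m·U_{4m+r+s} − q^r·U_{s−r}, and Σ_{i=0}^{2m+1} (−1)^i·U_{r+2i}·V_{s+2i} = −p·c_m·V_{4m+r+s+2}. -/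
lemma aux_add (p q : ℤ) (U f : ℤ → ℤ) (hU0 : U 0 = 0) (hU1 : U 1 = 1)
    (hUrec : ∀ n : ℤ, U n = p * U (n - 1) - q * U (n - 2))
    (hf : ∀ n : ℤ, f n = p * f (n - 1) - q * f (n - 2)) :
    ∀ b a : ℤ, f (a + b) = f a * U (b + 1) - q * f (a - 1) * U b := by
  intro b
  induction b using Int.induction_on with
  | zero => intro a; simp [hU0, hU1]
  | succ k ih =>
    intro a
    have h1 := ih (a + 1)
    have h2 := hUrec ((k : ℤ) + 2)
    have h3 := hf (a + 1)
    rw [show ((k:ℤ) + 2 - 1) = (k:ℤ) + 1 by ring, show ((k:ℤ) + 2 - 2) = (k:ℤ) by ring] at h2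
    rw [show (a + 1 - 1 : ℤ) = a by ring, show (a + 1 - 2 : ℤ) = a - 1 by ring] at h3
    rw [show (a + ((k:ℤ) + 1)) = (a + 1) + (k:ℤ) by ring, h1,
      show ((k:ℤ) + 1 + 1) = (k:ℤ) + 2 by ring, h2, h3]
    ring
  | pred k ih =>
    intro a
    have h1 := ih (a - 1)
    have h2 := hUrec (-(k : ℤ) + 1)
    have h3 := hf a
    rw [show (-(k:ℤ) + 1 - 1) = -(k:ℤ) by ring, show (-(k:ℤ) + 1 - 2) = -(k:ℤ) - 1 by ring] at h2
    rw [show (a - 1 - 1 : ℤ) = a - 2 by ring] at h1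
    rw [show (a + (-(k:ℤ) - 1)) = (a - 1) + (-(k:ℤ)) by ring, h1]
    rw [show (-(k:ℤ) - 1 + 1) = -(k:ℤ) by ring]
    linear_combination f (a - 1) * h2 - U (-(k:ℤ)) * h3

lemma aux_ext (p q : ℤ) (hq1 : q * q = 1) (f g : ℤ → ℤ)
    (hf : ∀ n : ℤ, f n = p * f (n - 1) - q * f (n - 2))
    (hg : ∀ n : ℤ, g n = p * g (n - 1) - q * g (n - 2))
    (h0 : f 0 = g 0) (h1 : f 1 = g 1) : ∀ n : ℤ, f n = g n := by
  suffices h : ∀ n : ℤ, f n = g n ∧ f (n + 1) = g (n + 1) by exact fun n => (h n).1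
  intro n
  induction n using Int.induction_on with
  | zero => exact ⟨h0, by norm_num [h1]⟩
  | succ k ih =>
    refine ⟨ih.2, ?_⟩
    have h2 := hf ((k : ℤ) + 2)
    have h3 := hg ((k : ℤ) + 2)
    rw [show ((k:ℤ) + 2 - 1) = (k:ℤ) + 1 by ring, show ((k:ℤ) + 2 - 2) = (k:ℤ) by ring] at h2 h3
    rw [show ((k:ℤ) + 1 + 1) = (k:ℤ) + 2 by ring, h2, h3, ih.1, ih.2]
  | pred k ih =>
    refine ⟨?_, by rw [show (-(k:ℤ) - 1 + 1) = -(k:ℤ) by ring]; exact ih.1⟩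
    have h2 := hf (-(k : ℤ) + 1)
    have h3 := hg (-(k : ℤ) + 1)
    rw [show (-(k:ℤ) + 1 - 1) = -(k:ℤ) by ring, show (-(k:ℤ) + 1 - 2) = -(k:ℤ) - 1 by ring] at h2 h3
    have e1 : f (-(k:ℤ)) = g (-(k:ℤ)) := ih.1
    have e2 : f (-(k:ℤ) + 1) = g (-(k:ℤ) + 1) := ih.2
    linear_combination q * h2 - q * h3 - q * e2 + p * q * e1 - (f (-(k:ℤ) - 1) - g (-(k:ℤ) - 1)) * hq1

lemma aux_Q (q : ℤ) (hq : q = 1 ∨ q = -1) (a b : ℤ) :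
    q ^ (a + b).natAbs = q ^ a.natAbs * q ^ b.natAbs := by
  rcases hq with h | h
  · simp [h]
  · subst h
    rcases Int.even_or_odd a with ha | ha <;> rcases Int.even_or_odd b with hb | hb
    · rw [(Int.natAbs_even.2 ha).neg_one_pow, (Int.natAbs_even.2 hb).neg_one_pow,
        (Int.natAbs_even.2 (ha.add hb)).neg_one_pow]; ring
    · rw [(Int.natAbs_even.2 ha).neg_one_pow, (Int.natAbs_odd.2 hb).neg_one_pow,
        (Int.natAbs_odd.2 (ha.add_odd hb)).neg_one_pow]; ring
    · rw [(Int.natAbs_odd.2 ha).neg_one_pow, (Int.natAbs_even.2 hb).neg_one_pow,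
        (Int.natAbs_odd.2 (ha.add_even hb)).neg_one_pow]; ring
    · rw [(Int.natAbs_odd.2 ha).neg_one_pow, (Int.natAbs_odd.2 hb).neg_one_pow,
        (Int.natAbs_even.2 (ha.add_odd hb)).neg_one_pow]; ring

theorem stmt_11 (p q : ℤ) (hp : p ≠ 0) (hq : q = 1 ∨ q = -1)
    (hΔ : p ^ 2 - 4 * q ≠ 0)
    (U V : ℤ → ℤ)
    (hU0 : U 0 = 0) (hU1 : U 1 = 1)
    (hUrec : ∀ n : ℤ, U n = p * U (n - 1) - q * U (n - 2))
    (hV0 : V 0 = 2) (hV1 : V 1 = p)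
    (hVrec : ∀ n : ℤ, V n = p * V (n - 1) - q * V (n - 2))
    (c d : ℤ → ℤ) (hc : ∀ n : ℤ, U 4 * c n = U (4 * n + 4)) (hd : ∀ n : ℤ, V 2 * d n = V (4 * n + 2))
    (r s : ℤ) (m : ℕ) :
    (∑ i ∈ Finset.range (2 * m + 1), (-1 : ℤ) ^ i * (U (r + 2 * i) * V (s + 2 * i))) =
        d m * U (4 * m + r + s) - q ^ r.natAbs * U (s - r) ∧
      (∑ i ∈ Finset.range (2 * m + 2), (-1 : ℤ) ^ i * (U (r + 2 * i) * V (s + 2 * i))) =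
        -(p * c m * V (4 * m + r + s + 2)) := by
  have hq1 : q * q = 1 := by rcases hq with h | h <;> subst h <;> norm_num
  have hQadd := aux_Q q hq
  have hQsq : ∀ a : ℤ, q ^ a.natAbs * q ^ a.natAbs = 1 := by
    intro a
    rcases hq with h | h <;> subst h
    · simp
    · rw [← pow_add]
      exact Even.neg_one_pow ⟨a.natAbs, rfl⟩
  have hQ2k : ∀ k : ℤ, q ^ (k + k).natAbs = 1 := fun k => by rw [hQadd k k]; exact hQsq k
  have hQshift : ∀ b : ℤ, q ^ b.natAbs = q * q ^ (b - 1).natAbs := by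
    intro b
    have h := hQadd (b - 1) 1
    rw [show b - 1 + 1 = b by ring] at h
    simpa [mul_comm] using h
  have hQQ : ∀ b : ℤ, q ^ b.natAbs * q ^ (b - 1).natAbs = q := by
    intro b
    rw [hQshift b]
    linear_combination q * hQsq (b - 1)
  have hUadd := aux_add p q U U hU0 hU1 hUrec hUrec
  have hVadd := aux_add p q U V hU0 hU1 hUrec hVrec
  have hUm1 : U (-1) = -q := by
    have h := hUrec 1
    rw [show (1:ℤ) - 1 = 0 by ring, show (1:ℤ) - 2 = -1 by ring, hU0, hU1] at h
    linear_combination q * h - U (-1) * hq1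
  have hVm1 : V (-1) = p * q := by
    have h := hVrec 1
    rw [show (1:ℤ) - 1 = 0 by ring, show (1:ℤ) - 2 = -1 by ring, hV0, hV1] at h
    linear_combination q * h - V (-1) * hq1
  have hVform : ∀ n : ℤ, V n = U (n + 1) - q * U (n - 1) := by
    intro n
    have h := hVadd n 0
    rw [zero_add, show (0:ℤ) - 1 = -1 by ring, hV0, hVm1] at h
    have h2 := hUrec (n + 1)
    rw [show n + 1 - 1 = n by ring, show n + 1 - 2 = n - 1 by ring] at h2
    linear_combination h + h2 - p * U n * hq1
  have hUneg : ∀ n : ℤ, U (-n) = -(q ^ n.natAbs) * U n := by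
    have hf' : ∀ n : ℤ, U (-n) = (p * q) * U (-(n - 1)) - q * U (-(n - 2)) := by
      intro n
      have h := hUrec (2 - n)
      rw [show 2 - n - 1 = -(n - 1) by ring, show 2 - n - 2 = -n by ring,
        show (2 : ℤ) - n = -(n - 2) by ring] at h
      linear_combination q * h - U (-n) * hq1
    have hg' : ∀ n : ℤ, -(q ^ n.natAbs) * U n =
        (p * q) * (-(q ^ (n - 1).natAbs) * U (n - 1)) - q * (-(q ^ (n - 2).natAbs) * U (n - 2)) := by
      intro n
      have ha : q ^ n.natAbs = q * q ^ (n - 1).natAbs := hQshift n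
      have hb : q ^ (n - 2).natAbs = q ^ n.natAbs := by
        have h := hQadd (n - 2) 2
        rw [show n - 2 + 2 = n by ring, show ((2:ℤ)).natAbs = 2 by rfl] at h
        rw [h]
        linear_combination (-(q ^ (n - 2).natAbs)) * hq1
      have hc := hUrec n
      linear_combination (-(p * U (n - 1))) * ha - (q * U (n - 2)) * hb - (q ^ n.natAbs) * hc
    have := aux_ext (p * q) q hq1 (fun n => U (-n)) (fun n => -(q ^ n.natAbs) * U n) hf' hg'
      (by norm_num [hU0]) (by norm_num [hUm1, hU1])
    exact this
  have hprod : ∀ a b : ℤ, U a * V b = U (a + b) + q ^ b.natAbs * U (a - b) := by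
    intro a b
    have h1 := hUadd b a
    have h4 := hUadd (-b) a
    rw [show a + -b = a - b by ring, show -b + 1 = -(b - 1) by ring, hUneg (b - 1), hUneg b] at h4
    have h2 := hVform b
    have hqq := hQQ b
    have hsq := hQsq b
    linear_combination U a * h2 - h1 - (q ^ b.natAbs) * h4
      + (U a * U (b - 1)) * hqq - (q * U (a - 1) * U b) * hsq
  have hUnegflip : ∀ a b : ℤ, q ^ a.natAbs * U (b - a) = -(q ^ b.natAbs * U (a - b)) := by
    intro a b
    have h := hUneg (a - b)
    rw [show -(a - b) = b - a by ring] at h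
    have h1 := hQadd a (a - b)
    rw [show a + (a - b) = 2 * a - b by ring] at h1
    have h2 := hQadd (2 * a - b) b
    rw [show 2 * a - b + b = a + a by ring, hQ2k a] at h2
    have h3 := hQsq b
    -- Q(2a-b) = Q b : from h2 (1 = Q(2a-b) * Q b) and h3
    linear_combination (q ^ a.natAbs) * h + U (a - b) * h1
      + (U (a - b) * q ^ b.natAbs) * h2 + (U (a - b) * q ^ (2 * a - b).natAbs) * h3
  have hE1' : ∀ a b : ℤ, U a * V b = U (a + b) - q ^ a.natAbs * U (b - a) := by
    intro a b
    linear_combination hprod a b + hUnegflip a b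
  have hE2' : ∀ a b : ℤ, V a * U b = U (a + b) + q ^ a.natAbs * U (b - a) := by
    intro a b
    have h := hprod b a
    rw [show b + a = a + b by ring] at h
    linear_combination h
  have hV2U : ∀ w : ℤ, V 2 * U w = U (w + 2) + U (w - 2) := by
    intro w
    have h := hE2' 2 w
    rw [show ((2:ℤ)).natAbs = 2 by rfl, show (2:ℤ) + w = w + 2 by ring] at h
    rw [h]
    linear_combination U (w - 2) * hq1
  have hU4V : ∀ b : ℤ, U 4 * V b = U (b + 4) - U (b - 4) := by
    intro b
    have h := hE1' 4 b
    rw [show ((4:ℤ)).natAbs = 4 by rfl, show (4:ℤ) + b = b + 4 by ring] at h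
    rw [h]
    linear_combination (- U (b - 4)) * (q * q + 1) * hq1
  have hA : ∀ M x : ℤ, V (4 * M + 2) * U x = U (x + 4 * M + 2) + U (x - 4 * M - 2) := by
    intro M x
    have hQ : q ^ (4 * M + 2).natAbs = 1 := by
      rw [show 4 * M + 2 = (2 * M + 1) + (2 * M + 1) by ring]; exact hQ2k (2 * M + 1)
    have h := hE2' (4 * M + 2) x
    rw [hQ, one_mul] at h
    linear_combination (norm := ring_nf) h
  have hB : ∀ M x : ℤ, U (4 * M + 4) * V x = U (x + 4 * M + 4) - U (x - 4 * M - 4) := by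
    intro M x
    have hQ : q ^ (4 * M + 4).natAbs = 1 := by
      rw [show 4 * M + 4 = (2 * M + 2) + (2 * M + 2) by ring]; exact hQ2k (2 * M + 2)
    have h := hE1' (4 * M + 4) x
    rw [hQ, one_mul] at h
    linear_combination (norm := ring_nf) h
  have key : ∀ (t : ℤ) (n : ℕ),
      V 2 * (∑ i ∈ Finset.range (2 * n + 1), (-1 : ℤ) ^ i * U (t + 4 * i)) =
        V (4 * (n : ℤ) + 2) * U (t + 4 * (n : ℤ)) ∧
      V 2 * (∑ i ∈ Finset.range (2 * n + 2), (-1 : ℤ) ^ i * U (t + 4 * i)) =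
        -(U (4 * (n : ℤ) + 4) * V (t + 4 * (n : ℤ) + 2)) := by
    intro t n
    induction n with
    | zero =>
      constructor
      · norm_num [Finset.sum_range_one]
      · norm_num [Finset.sum_range_succ, Finset.sum_range_one]
        linear_combination (norm := ring_nf) hV2U t - hV2U (t + 4) + hU4V (t + 2)
    | succ k ih =>
      obtain ⟨ih1, ih2⟩ := ih
      have hodd : V 2 * (∑ i ∈ Finset.range (2 * (k + 1) + 1), (-1 : ℤ) ^ i * U (t + 4 * i)) =
          V (4 * ((k : ℤ) + 1) + 2) * U (t + 4 * ((k : ℤ) + 1)) := by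
        rw [show 2 * (k + 1) + 1 = (2 * k + 2) + 1 by ring, Finset.sum_range_succ]
        have hpow : (-1 : ℤ) ^ (2 * k + 2) = 1 := Even.neg_one_pow ⟨k + 1, by ring⟩
        rw [hpow, one_mul, mul_add, ih2]
        push_cast
        linear_combination (norm := ring_nf) hV2U (t + 8 * (k : ℤ) + 8)
          - hB (k : ℤ) (t + 4 * (k : ℤ) + 2) - hA ((k : ℤ) + 1) (t + 4 * (k : ℤ) + 4)
      have heven : V 2 * (∑ i ∈ Finset.range (2 * (k + 1) + 2), (-1 : ℤ) ^ i * U (t + 4 * i)) =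
          -(U (4 * ((k : ℤ) + 1) + 4) * V (t + 4 * ((k : ℤ) + 1) + 2)) := by
        rw [show 2 * (k + 1) + 2 = (2 * (k + 1) + 1) + 1 by ring, Finset.sum_range_succ]
        have hpow : (-1 : ℤ) ^ (2 * (k + 1) + 1) = -1 := Odd.neg_one_pow ⟨k + 1, by ring⟩
        rw [hpow, mul_add, hodd]
        push_cast
        linear_combination (norm := ring_nf) hA ((k : ℤ) + 1) (t + 4 * (k : ℤ) + 4)
          - hV2U (t + 8 * (k : ℤ) + 12) + hB ((k : ℤ) + 1) (t + 4 * (k : ℤ) + 6)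
      exact ⟨hodd, heven⟩
  have hV2v : V 2 = p * p - 2 * q := by
    have h := hVrec 2
    norm_num at h
    rw [hV1, hV0] at h
    linear_combination h
  have hV2ne : V 2 ≠ 0 := by
    rw [hV2v]
    rcases hq with h | h <;> subst h
    · intro hcon
      have h2 : p * p = 2 := by linarith
      have hb1 : -1 ≤ p := by nlinarith
      have hb2 : p ≤ 1 := by nlinarith
      interval_cases p <;> norm_num at h2
    · intro hcon
      nlinarith [mul_self_nonneg p]
  have hU4eq : U 4 = p * V 2 := by
    have h2 := hUrec 2
    have h3 := hUrec 3
    have h4 := hUrec 4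
    norm_num at h2 h3 h4
    rw [hU0, hU1] at h2
    rw [hV2v]
    linear_combination h4 + p * h3 + (p * p - q) * h2 - p * q * hU1
  have hone : (∑ i ∈ Finset.range (2 * m + 1), (-1 : ℤ) ^ i) = 1 := by
    have he : ¬ Even (2 * m + 1) := by simp [Nat.even_add_one]
    rw [neg_one_geom_sum, if_neg he]
  have hzero : (∑ i ∈ Finset.range (2 * m + 2), (-1 : ℤ) ^ i) = 0 := by
    have he : Even (2 * m + 2) := ⟨m + 1, by ring⟩
    rw [neg_one_geom_sum, if_pos he]
  have hsplit : ∀ N : ℕ, (∑ i ∈ Finset.range N, (-1 : ℤ) ^ i * (U (r + 2 * i) * V (s + 2 * i))) =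
      (∑ i ∈ Finset.range N, (-1 : ℤ) ^ i * U (r + s + 4 * i)) -
        (∑ i ∈ Finset.range N, (-1 : ℤ) ^ i) * (q ^ r.natAbs * U (s - r)) := by
    intro N
    rw [Finset.sum_mul, ← Finset.sum_sub_distrib]
    refine Finset.sum_congr rfl fun i _ => ?_
    have h := hE1' (r + 2 * (i : ℤ)) (s + 2 * (i : ℤ))
    have hQ : q ^ (r + 2 * (i : ℤ)).natAbs = q ^ r.natAbs := by
      rw [show r + 2 * (i : ℤ) = r + ((i : ℤ) + (i : ℤ)) by ring, hQadd, hQ2k, mul_one]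
    rw [hQ] at h
    linear_combination (norm := ring_nf) ((-1 : ℤ) ^ i) * h
  constructor
  · rw [hsplit, hone, one_mul]
    have hS : (∑ i ∈ Finset.range (2 * m + 1), (-1 : ℤ) ^ i * U (r + s + 4 * (i : ℤ))) =
        d m * U (4 * (m : ℤ) + r + s) := by
      apply mul_left_cancel₀ hV2ne
      rw [(key (r + s) m).1, ← mul_assoc, hd m]
      ring_nf
    rw [hS]
  · rw [hsplit, hzero, zero_mul, sub_zero]
    apply mul_left_cancel₀ hV2ne
    rw [(key (r + s) m).2]
    linear_combination (norm := ring_nf) V (r + s + 4 * (m : ℤ) + 2) * hc m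
      - (c (m : ℤ) * V (r + s + 4 * (m : ℤ) + 2)) * hU4eq
end

section
/- For all integers r, s and all natural numbers n, the following two identities hold: Σ_{i=0}^{n} U_{s+2i}² − q^{s−r}·(Σ_{i=0}^{n} U_{r+2i}²) = a_{n+1}·U_{s−r}·U_{2n+r+s}, and Σ_{i=0}^{n} V_{s+2i}² − q^{s−r}·(Σ_{i=0}^{n} V_{r+2i}²) = Δ·a_{n+1}·U_{s−r}·U_{2n+r+s}. -/
/-- Two solutions of the recurrence agreeing at 0 and 1 agree everywhere. -/
private lemma rec_uniq (p q : ℤ) (hqq : q * q = 1) (f g : ℤ → ℤ)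
    (hf : ∀ n : ℤ, f n = p * f (n - 1) - q * f (n - 2))
    (hg : ∀ n : ℤ, g n = p * g (n - 1) - q * g (n - 2))
    (h0 : f 0 = g 0) (h1 : f 1 = g 1) : ∀ n : ℤ, f n = g n := by
  have fwd : ∀ k : ℕ, f k = g k ∧ f ((k : ℤ) + 1) = g ((k : ℤ) + 1) := by
    intro k
    induction k with
    | zero => exact ⟨by simpa using h0, by simpa using h1⟩
    | succ k ih =>
      refine ⟨by push_cast; exact ih.2, ?_⟩
      have hf2 := hf ((k : ℤ) + 1 + 1)
      have hg2 := hg ((k : ℤ) + 1 + 1)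
      rw [show ((k : ℤ) + 1 + 1 - 1) = (k : ℤ) + 1 by ring,
        show ((k : ℤ) + 1 + 1 - 2) = (k : ℤ) by ring] at hf2 hg2
      push_cast
      rw [hf2, hg2, ih.1, ih.2]
  have bwd : ∀ k : ℕ, f (-(k : ℤ)) = g (-(k : ℤ)) ∧ f (-(k : ℤ) + 1) = g (-(k : ℤ) + 1) := by
    intro k
    induction k with
    | zero => exact ⟨by simpa using h0, by simpa using h1⟩
    | succ k ih =>
      have hf2 := hf (-(k : ℤ) + 1)
      have hg2 := hg (-(k : ℤ) + 1)
      rw [show (-(k : ℤ) + 1 - 1) = -(k : ℤ) by ring,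
        show (-(k : ℤ) + 1 - 2) = -((k : ℤ) + 1) by ring] at hf2 hg2
      have ef : f (-((k : ℤ) + 1)) = q * (p * f (-(k : ℤ)) - f (-(k : ℤ) + 1)) := by
        linear_combination q * hf2 - f (-((k : ℤ) + 1)) * hqq
      have eg : g (-((k : ℤ) + 1)) = q * (p * g (-(k : ℤ)) - g (-(k : ℤ) + 1)) := by
        linear_combination q * hg2 - g (-((k : ℤ) + 1)) * hqq
      constructor
      · push_cast
        rw [ef, eg, ih.1, ih.2]
      · push_cast
        rw [show -((k : ℤ) + 1) + 1 = -(k : ℤ) by ring]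
        exact ih.1
  intro n
  obtain ⟨k, rfl | rfl⟩ := Int.eq_nat_or_neg n
  · exact (fwd k).1
  · exact (bwd k).1

theorem stmt_12 (p q : ℤ) (hp : p ≠ 0) (hq : q = 1 ∨ q = -1)
    (hΔ : p ^ 2 - 4 * q ≠ 0)
    (U V : ℤ → ℤ)
    (hU0 : U 0 = 0) (hU1 : U 1 = 1)
    (hUrec : ∀ n : ℤ, U n = p * U (n - 1) - q * U (n - 2))
    (hV0 : V 0 = 2) (hV1 : V 1 = p)
    (hVrec : ∀ n : ℤ, V n = p * V (n - 1) - q * V (n - 2))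
    (a : ℤ → ℤ) (ha : ∀ n : ℤ, p * a n = U (2 * n))
    (r s : ℤ) (n : ℕ) :
    (∑ i ∈ Finset.range (n + 1), U (s + 2 * i) ^ 2) - q ^ (s - r).natAbs * (∑ i ∈ Finset.range (n + 1), U (r + 2 * i) ^ 2) =
        a ((n : ℤ) + 1) * U (s - r) * U (2 * n + r + s) ∧
      (∑ i ∈ Finset.range (n + 1), V (s + 2 * i) ^ 2) - q ^ (s - r).natAbs * (∑ i ∈ Finset.range (n + 1), V (r + 2 * i) ^ 2) =
        (p ^ 2 - 4 * q) * (a ((n : ℤ) + 1) * U (s - r) * U (2 * n + r + s)) := by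
  have hqq : q * q = 1 := by rcases hq with rfl | rfl <;> norm_num
  -- the "q to the |t|" function
  set Q : ℤ → ℤ := fun t => q ^ t.natAbs with hQdef
  have hQnat : ∀ k : ℕ, Q (k : ℤ) = q ^ k := by intro k; simp [hQdef]
  have hQneg : ∀ t : ℤ, Q (-t) = Q t := by intro t; simp [hQdef]
  have hQ0 : Q 0 = 1 := by simp [hQdef]
  have hQ1 : Q 1 = q := by simp [hQdef]
  have hQsq : ∀ t : ℤ, Q t * Q t = 1 := by
    intro t
    show q ^ t.natAbs * q ^ t.natAbs = 1
    rw [← mul_pow, hqq, one_pow]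
  have hQadd : ∀ x y : ℤ, Q (x + y) = Q x * Q y := by
    intro x y
    rcases hq with rfl | rfl
    · simp [hQdef]
    · show ((-1 : ℤ)) ^ (x + y).natAbs = (-1 : ℤ) ^ x.natAbs * (-1 : ℤ) ^ y.natAbs
      have key : ∀ m : ℤ, ((-1 : ℤ)) ^ m.natAbs = if Even m then 1 else -1 := by
        intro m
        by_cases h : Even m
        · rw [if_pos h, (Int.natAbs_even.mpr h).neg_one_pow]
        · rw [if_neg h, (Nat.not_even_iff_odd.mp fun hh => h (Int.natAbs_even.mp hh)).neg_one_pow]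
      rw [key, key, key]
      by_cases hx : Even x <;> by_cases hy : Even y <;>
        simp [Int.even_add, hx, hy]
  -- forward recurrences and special values
  have hUrec2 : ∀ m : ℤ, U (m + 2) = p * U (m + 1) - q * U m := by
    intro m
    have h := hUrec (m + 2)
    rwa [show m + 2 - 1 = m + 1 by ring, show m + 2 - 2 = m by ring] at h
  have hUrec1 : ∀ m : ℤ, U (m + 1) = p * U m - q * U (m - 1) := by
    intro m
    have h := hUrec (m + 1)
    rwa [show m + 1 - 1 = m by ring, show m + 1 - 2 = m - 1 by ring] at h
  have hU2 : U 2 = p := by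
    have h := hUrec2 0
    norm_num [hU0, hU1] at h
    exact h
  have hUm1 : U (-1) = -q := by
    have h := hUrec 1
    rw [show (1 : ℤ) - 1 = 0 by ring, show (1 : ℤ) - 2 = -1 by ring, hU0, hU1] at h
    linear_combination q * h - U (-1) * hqq
  have hUm2 : U (-2) = -p := by
    have h := hUrec 0
    rw [show (0 : ℤ) - 1 = -1 by ring, show (0 : ℤ) - 2 = -2 by ring, hU0, hUm1] at h
    linear_combination q * h - (p + U (-2)) * hqq
  -- addition formula
  have addU : ∀ m k : ℤ, U (m + k) = U (m + 1) * U k - q * U m * U (k - 1) := by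
    intro m
    refine rec_uniq p q hqq (fun k => U (m + k)) (fun k => U (m + 1) * U k - q * U m * U (k - 1))
      ?_ ?_ ?_ ?_
    · intro k
      have h := hUrec (m + k)
      rwa [show m + k - 1 = m + (k - 1) by ring, show m + k - 2 = m + (k - 2) by ring] at h
    · intro k
      have h1 := hUrec k
      have h2 := hUrec (k - 1)
      rw [show k - 1 - 1 = k - 2 by ring, show k - 1 - 2 = k - 3 by ring] at h2
      rw [show k - 1 - 1 = k - 2 by ring, show k - 2 - 1 = k - 3 by ring]
      linear_combination U (m + 1) * h1 - (q * U m) * h2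
    · simp only [add_zero, hU0, zero_sub, hUm1]
      linear_combination (-(U m)) * hqq
    · simp only [hU1, sub_self, hU0]
      ring
  -- V in terms of U
  have hVU : ∀ m : ℤ, V m = 2 * U (m + 1) - p * U m := by
    refine rec_uniq p q hqq V (fun m => 2 * U (m + 1) - p * U m) hVrec ?_ ?_ ?_
    · intro k
      have h1 := hUrec1 k
      have h2 := hUrec k
      rw [show k - 1 + 1 = k by ring, show k - 2 + 1 = k - 1 by ring]
      linear_combination 2 * h1 - p * h2
    · simp [hU0, hU1, hV0]
    · simp only [hV1, hU1]
      rw [show (1 : ℤ) + 1 = 2 by ring, hU2]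
      ring
  -- Simson step
  have sstep : ∀ k : ℤ, U (k + 2) * U k - U (k + 1) ^ 2 = q * (U (k + 1) * U (k - 1) - U k ^ 2) := by
    intro k
    have h1 := hUrec2 k
    have h2 := hUrec1 k
    linear_combination U k * h1 - U (k + 1) * h2
  -- Simson identity
  have simson : ∀ k : ℤ, U (k + 1) * U (k - 1) - U k ^ 2 = -q * Q k := by
    have fwd : ∀ k : ℕ, U ((k : ℤ) + 1) * U ((k : ℤ) - 1) - U (k : ℤ) ^ 2 = -q * q ^ k := by
      intro k
      induction k with
      | zero => simp [hU0, hU1, hUm1]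
      | succ k ih =>
        have h := sstep (k : ℤ)
        push_cast
        rw [show (k : ℤ) + 1 - 1 = (k : ℤ) by ring, show (k : ℤ) + 1 + 1 = (k : ℤ) + 2 by ring]
        linear_combination h + q * ih
    have bwd : ∀ k : ℕ, U (-(k : ℤ) + 1) * U (-(k : ℤ) - 1) - U (-(k : ℤ)) ^ 2 = -q * q ^ k := by
      intro k
      induction k with
      | zero => simp [hU0, hU1, hUm1]
      | succ k ih =>
        have h := sstep (-(k : ℤ) - 1)
        rw [show -(k : ℤ) - 1 + 2 = -(k : ℤ) + 1 by ring,
          show -(k : ℤ) - 1 + 1 = -(k : ℤ) by ring,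
          show -(k : ℤ) - 1 - 1 = -(k : ℤ) - 2 by ring] at h
        push_cast
        rw [show -((k : ℤ) + 1) + 1 = -(k : ℤ) by ring,
          show -((k : ℤ) + 1) - 1 = -(k : ℤ) - 2 by ring,
          show -((k : ℤ) + 1) = -(k : ℤ) - 1 by ring]
        linear_combination q * ih - q * h - (U (-(k : ℤ)) * U (-(k : ℤ) - 2) - U (-(k : ℤ) - 1) ^ 2) * hqq
    intro k
    obtain ⟨m, rfl | rfl⟩ := Int.eq_nat_or_neg k
    · rw [hQnat]; exact fwd m
    · rw [hQneg, hQnat]; exact bwd m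
  -- U(-k)
  have hUneg : ∀ k : ℤ, U (-k) = -Q k * U k := by
    have fwd : ∀ m : ℕ, U (-(m : ℤ)) = -q ^ m * U (m : ℤ) ∧
        U (-((m : ℤ) + 1)) = -q ^ (m + 1) * U ((m : ℤ) + 1) := by
      intro m
      induction m with
      | zero => simp [hU0, hU1, hUm1]
      | succ m ih =>
        refine ⟨by push_cast; exact ih.2, ?_⟩
        have h := hUrec (-(m : ℤ))
        rw [show -(m : ℤ) - 1 = -((m : ℤ) + 1) by ring,
          show -(m : ℤ) - 2 = -((m : ℤ) + 1 + 1) by ring] at h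
        have h2 := hUrec2 (m : ℤ)
        push_cast
        rw [show -((m : ℤ) + 1 + 1) = -((m : ℤ) + 1 + 1) by ring]
        -- goal: U (-(m+1+1)) = -q^(m+1+1) * U (m+1+1)
        have key : U (-((m : ℤ) + 1 + 1)) = q * (p * U (-((m : ℤ) + 1)) - U (-(m : ℤ))) := by
          linear_combination q * h - U (-((m : ℤ) + 1 + 1)) * hqq
        rw [key, ih.1, ih.2, show ((m : ℤ) + 1 + 1) = (m : ℤ) + 2 by ring, h2]
        linear_combination (-(q ^ (m + 1) * U (m : ℤ))) * hqq
    intro k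
    obtain ⟨m, rfl | rfl⟩ := Int.eq_nat_or_neg k
    · rw [hQnat]; exact (fwd m).1
    · rw [hQneg, hQnat, neg_neg]
      have h := (fwd m).1
      have hqk : (q ^ m : ℤ) * q ^ m = 1 := by rw [← mul_pow, hqq, one_pow]
      linear_combination q ^ m * h - U (m : ℤ) * hqk
  -- Catalan identity for U
  have catalanU : ∀ m k : ℤ, U m ^ 2 - Q (m - k) * U k ^ 2 = U (m - k) * U (m + k) := by
    intro m k
    have hmk : U (m + k) = U (m + 1) * U k - q * U m * U (k - 1) := addU m k
    have hmk2 : U (m - k) = Q k * (U m * U (k + 1) - U (m + 1) * U k) := by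
      have h := addU m (-k)
      rw [show m + -k = m - k by ring, show -k - 1 = -(k + 1) by ring,
        hUneg k, hUneg (k + 1), hQadd k 1, hQ1] at h
      linear_combination h + (Q k * U m * U (k + 1)) * hqq
    have sm := simson m
    have sk := simson k
    have rm := hUrec1 m
    have rk := hUrec1 k
    have hQmk : Q (m - k) = Q m * Q k := by
      rw [show m - k = m + -k by ring, hQadd, hQneg]
    rw [hmk, hmk2, hQmk]
    linear_combination (-(U m ^ 2)) * hQsq k + (-(Q k * U m * U (m + 1) * U k)) * rk +
      (Q k * U (m + 1) * U k ^ 2) * rm + (Q k * q * U m ^ 2) * sk +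
      (-(Q k * q * U k ^ 2)) * sm + (-(Q k * (Q k * U m ^ 2 - Q m * U k ^ 2))) * hqq
  -- V^2 - Δ U^2 = 4 Q
  have hVD : ∀ m : ℤ, V m ^ 2 - (p ^ 2 - 4 * q) * U m ^ 2 = 4 * Q m := by
    intro m
    have sm := simson m
    have rm := hUrec1 m
    rw [hVU m]
    linear_combination (4 * U (m + 1)) * rm - 4 * q * sm + 4 * Q m * hqq
  -- Catalan identity for V
  have catalanV : ∀ m k : ℤ, V m ^ 2 - Q (m - k) * V k ^ 2 =
      (p ^ 2 - 4 * q) * (U m ^ 2 - Q (m - k) * U k ^ 2) := by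
    intro m k
    have hQQ : Q (m - k) * Q k = Q m := by
      rw [← hQadd, sub_add_cancel]
    linear_combination hVD m - Q (m - k) * hVD k - 4 * hQQ
  -- step identity for the sum
  have vajda : ∀ x y : ℤ, U x * U y - U (x - 2) * U (y - 2) = p * U (x + y - 2) := by
    intro x
    refine rec_uniq p q hqq (fun y => U x * U y - U (x - 2) * U (y - 2))
      (fun y => p * U (x + y - 2)) ?_ ?_ ?_ ?_
    · intro y
      have h1 := hUrec y
      have h2 := hUrec (y - 2)
      rw [show y - 2 - 1 = y - 3 by ring, show y - 2 - 2 = y - 4 by ring] at h2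
      rw [show y - 1 - 2 = y - 3 by ring, show y - 2 - 2 = y - 4 by ring]
      linear_combination U x * h1 - U (x - 2) * h2
    · intro y
      have h := hUrec (x + y - 2)
      rw [show x + (y - 1) - 2 = x + y - 2 - 1 by ring, show x + (y - 2) - 2 = x + y - 2 - 2 by ring]
      linear_combination p * h
    · simp only [hU0, mul_zero, zero_sub, hUm2, add_zero]
      ring
    · have h := hUrec x
      rw [show (1 : ℤ) - 2 = -1 by ring, show x + 1 - 2 = x - 1 by ring, hU1, hUm1]
      linear_combination h
  -- the sum formula
  have sumU : ∀ t : ℤ, ∀ m : ℕ, p * (∑ i ∈ Finset.range (m + 1), U (t + 4 * i)) =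
      U (2 * (m : ℤ) + 2) * U (2 * (m : ℤ) + t) := by
    intro t m
    induction m with
    | zero => norm_num [hU2]
    | succ m ih =>
      rw [Finset.sum_range_succ, mul_add, ih]
      have h := vajda (2 * (m : ℤ) + 4) (2 * (m : ℤ) + 2 + t)
      rw [show 2 * (m : ℤ) + 4 - 2 = 2 * (m : ℤ) + 2 by ring,
        show 2 * (m : ℤ) + 2 + t - 2 = 2 * (m : ℤ) + t by ring,
        show 2 * (m : ℤ) + 4 + (2 * (m : ℤ) + 2 + t) - 2 = t + 4 * ((m : ℤ) + 1) by ring] at h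
      push_cast
      rw [show 2 * ((m : ℤ) + 1) + 2 = 2 * (m : ℤ) + 4 by ring,
        show 2 * ((m : ℤ) + 1) + t = 2 * (m : ℤ) + 2 + t by ring]
      linear_combination -h
  -- put things together
  have key1 : ∀ i : ℕ, U (s + 2 * i) ^ 2 - Q (s - r) * U (r + 2 * i) ^ 2 =
      U (s - r) * U ((r + s) + 4 * i) := by
    intro i
    have h := catalanU (s + 2 * i) (r + 2 * i)
    rwa [show s + 2 * (i : ℤ) - (r + 2 * i) = s - r by ring,
      show s + 2 * (i : ℤ) + (r + 2 * i) = (r + s) + 4 * i by ring] at h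
  have key2 : ∀ i : ℕ, V (s + 2 * i) ^ 2 - Q (s - r) * V (r + 2 * i) ^ 2 =
      (p ^ 2 - 4 * q) * (U (s + 2 * i) ^ 2 - Q (s - r) * U (r + 2 * i) ^ 2) := by
    intro i
    have h := catalanV (s + 2 * i) (r + 2 * i)
    rwa [show s + 2 * (i : ℤ) - (r + 2 * i) = s - r by ring] at h
  have hsum1 : (∑ i ∈ Finset.range (n + 1), U (s + 2 * i) ^ 2) -
      Q (s - r) * (∑ i ∈ Finset.range (n + 1), U (r + 2 * i) ^ 2) =
      U (s - r) * (∑ i ∈ Finset.range (n + 1), U ((r + s) + 4 * i)) := by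
    rw [Finset.mul_sum, Finset.mul_sum, ← Finset.sum_sub_distrib]
    exact Finset.sum_congr rfl fun i _ => key1 i
  have ha' : p * a ((n : ℤ) + 1) = U (2 * (n : ℤ) + 2) := by
    have h := ha ((n : ℤ) + 1)
    rwa [show 2 * ((n : ℤ) + 1) = 2 * (n : ℤ) + 2 by ring] at h
  have hs := sumU (r + s) n
  have first : (∑ i ∈ Finset.range (n + 1), U (s + 2 * i) ^ 2) -
      Q (s - r) * (∑ i ∈ Finset.range (n + 1), U (r + 2 * i) ^ 2) =
      a ((n : ℤ) + 1) * U (s - r) * U (2 * n + r + s) := by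
    have hs' : p * (∑ i ∈ Finset.range (n + 1), U ((r + s) + 4 * i)) =
        U (2 * (n : ℤ) + 2) * U (2 * (n : ℤ) + r + s) := by
      rwa [show 2 * (n : ℤ) + (r + s) = 2 * (n : ℤ) + r + s by ring] at hs
    apply mul_left_cancel₀ hp
    linear_combination p * hsum1 + U (s - r) * hs' - U (s - r) * U (2 * (n : ℤ) + r + s) * ha'
  refine ⟨first, ?_⟩
  have eU : (∑ i ∈ Finset.range (n + 1), U (s + 2 * i) ^ 2) -
      Q (s - r) * (∑ i ∈ Finset.range (n + 1), U (r + 2 * i) ^ 2) =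
      ∑ i ∈ Finset.range (n + 1), (U (s + 2 * i) ^ 2 - Q (s - r) * U (r + 2 * i) ^ 2) := by
    rw [Finset.mul_sum, ← Finset.sum_sub_distrib]
  have eV : (∑ i ∈ Finset.range (n + 1), V (s + 2 * i) ^ 2) -
      Q (s - r) * (∑ i ∈ Finset.range (n + 1), V (r + 2 * i) ^ 2) =
      ∑ i ∈ Finset.range (n + 1), (V (s + 2 * i) ^ 2 - Q (s - r) * V (r + 2 * i) ^ 2) := by
    rw [Finset.mul_sum, ← Finset.sum_sub_distrib]
  rw [eV]
  calc (∑ i ∈ Finset.range (n + 1), (V (s + 2 * i) ^ 2 - Q (s - r) * V (r + 2 * i) ^ 2))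
      = ∑ i ∈ Finset.range (n + 1),
          (p ^ 2 - 4 * q) * (U (s + 2 * i) ^ 2 - Q (s - r) * U (r + 2 * i) ^ 2) :=
        Finset.sum_congr rfl fun i _ => key2 i
    _ = (p ^ 2 - 4 * q) * ∑ i ∈ Finset.range (n + 1),
          (U (s + 2 * i) ^ 2 - Q (s - r) * U (r + 2 * i) ^ 2) := (Finset.mul_sum _ _ _).symm
    _ = (p ^ 2 - 4 * q) * (a ((n : ℤ) + 1) * U (s - r) * U (2 * n + r + s)) := by
        rw [← eU, first]
end

section
/- For all integers r, s, t and all natural numbers n, the following identity holds: Σ_{i=0}^{n} V_{s+2i}·V_{s+t+2i} + Δ·q^{s−r}·(Σ_{i=0}^{n} U_{r+2i}·U_{r+t+2i}) = a_{n+1}·V_{s−r}·V_{2n+r+s+t}. -/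
section Aux

private lemma zero_of_rec (P Q : ℤ) (hQ : Q * Q = 1) (h : ℤ → ℤ)
    (hrec : ∀ n : ℤ, h n = P * h (n - 1) - Q * h (n - 2))
    (h0 : h 0 = 0) (h1 : h 1 = 0) : ∀ n : ℤ, h n = 0 := by
  have key : ∀ n : ℤ, h n = 0 ∧ h (n + 1) = 0 := by
    intro n
    induction n using Int.induction_on with
    | zero => exact ⟨h0, by rw [zero_add]; exact h1⟩
    | succ k ih =>
      refine ⟨ih.2, ?_⟩
      have hr := hrec ((k : ℤ) + 1 + 1)
      rw [show ((k : ℤ) + 1 + 1 - 1) = (k : ℤ) + 1 by ring,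
        show ((k : ℤ) + 1 + 1 - 2) = (k : ℤ) by ring, ih.1, ih.2] at hr
      simpa using hr
    | pred k ih =>
      have hr := hrec (-(k : ℤ) + 1)
      rw [show (-(k : ℤ) + 1 - 1) = -(k : ℤ) by ring,
        show (-(k : ℤ) + 1 - 2) = -(k : ℤ) - 1 by ring, ih.1] at hr
      have h2 : h (-(k : ℤ) + 1) = 0 := ih.2
      have hz : Q * h (-(k : ℤ) - 1) = 0 := by
        have := hr; rw [h2] at this; linarith
      have hmain : h (-(k : ℤ) - 1) = 0 := by
        have : Q * (Q * h (-(k : ℤ) - 1)) = 0 := by rw [hz, mul_zero]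
        calc h (-(k : ℤ) - 1) = Q * Q * h (-(k : ℤ) - 1) := by rw [hQ]; ring
          _ = 0 := by rw [mul_assoc, this]
      exact ⟨hmain, by rw [show -(k : ℤ) - 1 + 1 = -(k : ℤ) by ring]; exact ih.1⟩
  exact fun n => (key n).1

private lemma rec_ext (P Q : ℤ) (hQ : Q * Q = 1) (f g : ℤ → ℤ)
    (hf : ∀ n : ℤ, f n = P * f (n - 1) - Q * f (n - 2))
    (hg : ∀ n : ℤ, g n = P * g (n - 1) - Q * g (n - 2))
    (e0 : f 0 = g 0) (e1 : f 1 = g 1) : ∀ n : ℤ, f n = g n := by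
  have := zero_of_rec P Q hQ (fun n => f n - g n)
    (fun n => by rw [hf n, hg n]; ring)
    (by rw [e0]; ring) (by rw [e1]; ring)
  intro n
  have h := this n
  linarith

variable (p q : ℤ) (hq2 : q * q = 1)
variable (U V : ℤ → ℤ)
variable (hU0 : U 0 = 0) (hU1 : U 1 = 1)
variable (hUrec : ∀ n : ℤ, U n = p * U (n - 1) - q * U (n - 2))
variable (hV0 : V 0 = 2) (hV1 : V 1 = p)
variable (hVrec : ∀ n : ℤ, V n = p * V (n - 1) - q * V (n - 2))
variable (E : ℤ → ℤ) (hE0 : E 0 = 1) (hE1v : E 1 = q)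
variable (hE1 : ∀ x : ℤ, E (x - 1) = q * E x)
variable (hEsq : ∀ x : ℤ, E x * E x = 1)
variable (hE2 : ∀ x : ℤ, E (x + 2) = E x)

include hq2 hU0 hU1 hUrec in
private lemma Um1 : U (-1) = -q := by
  have h := hUrec 1
  rw [show (1 : ℤ) - 1 = 0 by ring, show (1 : ℤ) - 2 = -1 by ring, hU0, hU1] at h
  linear_combination q * h - U (-1) * hq2

include hq2 hV0 hV1 hVrec in
private lemma Vm1 : V (-1) = q * p := by
  have h := hVrec 1
  rw [show (1 : ℤ) - 1 = 0 by ring, show (1 : ℤ) - 2 = -1 by ring, hV0, hV1] at h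
  linear_combination q * h - V (-1) * hq2

include hU0 hU1 hUrec in
private lemma U2v : U 2 = p := by
  have h := hUrec 2
  rw [show (2 : ℤ) - 1 = 1 by ring, show (2 : ℤ) - 2 = 0 by ring, hU0, hU1] at h
  linarith [h]

include hV0 hV1 hVrec in
private lemma V2v : V 2 = p * p - 2 * q := by
  have h := hVrec 2
  rw [show (2 : ℤ) - 1 = 1 by ring, show (2 : ℤ) - 2 = 0 by ring, hV0, hV1] at h
  linarith [h]

include hq2 hV0 hV1 hVrec hE0 hE1v hE1 in
private lemma negV : ∀ b : ℤ, V (-b) = E b * V b := by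
  refine rec_ext (q * p) q hq2 _ _ ?_ ?_ ?_ ?_
  · intro n
    have h := hVrec (-n + 2)
    rw [show (-n + 2 - 1) = -n + 1 by ring, show (-n + 2 - 2) = -n by ring] at h
    linear_combination (norm := ring_nf) q * h - V (-n) * hq2
  · intro n
    rw [show n - 2 = n - 1 - 1 by ring, hE1 (n - 1), hE1 n]
    linear_combination (norm := ring_nf) E n * hVrec n +
      (q * E n * V (n - 2) - p * E n * V (n - 1)) * hq2
  · simp only [neg_zero, hE0, one_mul]
  · simp only [hE1v, hV1]
    rw [Vm1 p q hq2 V hV0 hV1 hVrec]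

include hq2 hU0 hU1 hUrec hE0 hE1v hE1 in
private lemma negU : ∀ b : ℤ, U (-b) = -(E b * U b) := by
  refine rec_ext (q * p) q hq2 _ _ ?_ ?_ ?_ ?_
  · intro n
    have h := hUrec (-n + 2)
    rw [show (-n + 2 - 1) = -n + 1 by ring, show (-n + 2 - 2) = -n by ring] at h
    linear_combination (norm := ring_nf) q * h - U (-n) * hq2
  · intro n
    rw [show n - 2 = n - 1 - 1 by ring, hE1 (n - 1), hE1 n]
    linear_combination (norm := ring_nf) (-(E n)) * hUrec n +
      (p * E n * U (n - 1) - q * E n * U (n - 2)) * hq2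
  · simp only [neg_zero, hU0, hE0]; ring
  · simp only [hE1v, hU1]
    rw [Um1 p q hq2 U hU0 hU1 hUrec]; ring

include hq2 hU0 hU1 hUrec hV0 hV1 hVrec in
private lemma VU : ∀ b : ℤ, V b = U (b + 1) - q * U (b - 1) := by
  refine rec_ext p q hq2 _ _ hVrec ?_ ?_ ?_
  · intro n
    linear_combination (norm := ring_nf) hUrec (n + 1) - q * hUrec (n - 1)
  · rw [show (0 : ℤ) + 1 = 1 by ring, show (0 : ℤ) - 1 = -1 by ring,
      hV0, hU1, Um1 p q hq2 U hU0 hU1 hUrec]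
    linear_combination (norm := ring_nf) (-1 : ℤ) * hq2
  · rw [hV1, show (1 : ℤ) - 1 = 0 by ring, hU0,
      show (1 : ℤ) + 1 = 2 by ring, U2v p q U hU0 hU1 hUrec]; ring

include hq2 hU0 hU1 hUrec hV0 hV1 hVrec in
private lemma DU : ∀ b : ℤ, (p ^ 2 - 4 * q) * U b = V (b + 1) - q * V (b - 1) := by
  refine rec_ext p q hq2 _ _ ?_ ?_ ?_ ?_
  · intro n
    linear_combination (norm := ring_nf) (p ^ 2 - 4 * q) * hUrec n
  · intro n
    linear_combination (norm := ring_nf) hVrec (n + 1) - q * hVrec (n - 1)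
  · rw [show (0 : ℤ) + 1 = 1 by ring, show (0 : ℤ) - 1 = -1 by ring,
      hU0, hV1, Vm1 p q hq2 V hV0 hV1 hVrec]
    linear_combination (norm := ring_nf) p * hq2
  · rw [hU1, show (1 : ℤ) - 1 = 0 by ring, hV0,
      show (1 : ℤ) + 1 = 2 by ring, V2v p q V hV0 hV1 hVrec]; ring

include hq2 hU0 hU1 hUrec hV0 hV1 hVrec hE0 hE1v hE1 hEsq in
private lemma UV (b : ℤ) : ∀ a : ℤ, U a * V b = U (a + b) + E b * U (a - b) := by
  refine rec_ext p q hq2 _ _ ?_ ?_ ?_ ?_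
  · intro n
    linear_combination (norm := ring_nf) V b * hUrec n
  · intro n
    linear_combination (norm := ring_nf) hUrec (n + b) + E b * hUrec (n - b)
  · simp only [hU0, zero_add, zero_sub]
    rw [negU p q hq2 U hU0 hU1 hUrec E hE0 hE1v hE1 b]
    linear_combination (norm := ring_nf) U b * hEsq b
  · simp only [hU1, one_mul]
    rw [show (1 : ℤ) - b = -(b - 1) by ring,
      negU p q hq2 U hU0 hU1 hUrec E hE0 hE1v hE1 (b - 1), hE1 b,
      VU p q hq2 U V hU0 hU1 hUrec hV0 hV1 hVrec b]
    linear_combination (norm := ring_nf) q * U (b - 1) * hEsq b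

include hq2 hV0 hV1 hVrec hE0 hE1v hE1 hEsq in
private lemma VV (b : ℤ) : ∀ a : ℤ, V a * V b = V (a + b) + E b * V (a - b) := by
  refine rec_ext p q hq2 _ _ ?_ ?_ ?_ ?_
  · intro n
    linear_combination (norm := ring_nf) V b * hVrec n
  · intro n
    linear_combination (norm := ring_nf) hVrec (n + b) + E b * hVrec (n - b)
  · simp only [hV0, zero_add, zero_sub]
    rw [negV p q hq2 V hV0 hV1 hVrec E hE0 hE1v hE1 b]
    linear_combination (norm := ring_nf) (-(V b)) * hEsq b
  · simp only [hV1]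
    rw [show (1 : ℤ) - b = -(b - 1) by ring,
      negV p q hq2 V hV0 hV1 hVrec E hE0 hE1v hE1 (b - 1), hE1 b]
    linear_combination (norm := ring_nf) (-1 : ℤ) * hVrec (b + 1) - q * V (b - 1) * hEsq b

include hq2 hU0 hU1 hUrec hV0 hV1 hVrec hE0 hE1v hE1 hEsq in
private lemma DUU (b : ℤ) :
    ∀ a : ℤ, (p ^ 2 - 4 * q) * (U a * U b) = V (a + b) - E b * V (a - b) := by
  refine rec_ext p q hq2 _ _ ?_ ?_ ?_ ?_
  · intro n
    linear_combination (norm := ring_nf) (p ^ 2 - 4 * q) * U b * hUrec n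
  · intro n
    linear_combination (norm := ring_nf) hVrec (n + b) - E b * hVrec (n - b)
  · simp only [hU0, zero_add, zero_sub]
    rw [negV p q hq2 V hV0 hV1 hVrec E hE0 hE1v hE1 b]
    linear_combination (norm := ring_nf) V b * hEsq b
  · simp only [hU1]
    rw [show (1 : ℤ) - b = -(b - 1) by ring,
      negV p q hq2 V hV0 hV1 hVrec E hE0 hE1v hE1 (b - 1), hE1 b]
    linear_combination (norm := ring_nf)
      DU p q hq2 U V hU0 hU1 hUrec hV0 hV1 hVrec b + q * V (b - 1) * hEsq b

include hq2 hU0 hU1 hUrec hV0 hV1 hVrec hE0 hE1v hE1 hEsq in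
private lemma pVc (c : ℤ) : p * V c = U (c + 2) - U (c - 2) := by
  have h := UV p q hq2 U V hU0 hU1 hUrec hV0 hV1 hVrec E hE0 hE1v hE1 hEsq c 2
  rw [U2v p q U hU0 hU1 hUrec, show (2 : ℤ) - c = -(c - 2) by ring,
    negU p q hq2 U hU0 hU1 hUrec E hE0 hE1v hE1 (c - 2),
    show c - 2 = c - 1 - 1 by ring, hE1 (c - 1), hE1 c] at h
  linear_combination (norm := ring_nf) h - U (c - 1 - 1) * hEsq c -
    E c * E c * U (c - 1 - 1) * hq2

include hq2 hU0 hU1 hUrec hV0 hV1 hVrec hE0 hE1v hE1 hEsq hE2 in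
private lemma sumV (m : ℤ) :
    ∀ n : ℕ, p * (∑ i ∈ Finset.range (n + 1), V (m + 4 * (i : ℤ))) =
      U (2 * ((n : ℤ) + 1)) * V (m + 2 * n) := by
  intro n
  induction n with
  | zero =>
    simp only [Finset.sum_range_one, Nat.cast_zero, mul_zero, add_zero, zero_add, mul_one]
    rw [U2v p q U hU0 hU1 hUrec]
  | succ k ih =>
    rw [Finset.sum_range_succ, mul_add]
    have h1 := UV p q hq2 U V hU0 hU1 hUrec hV0 hV1 hVrec E hE0 hE1v hE1 hEsq
      (m + 2 * k) (2 * ((k : ℤ) + 1))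
    have h3 := UV p q hq2 U V hU0 hU1 hUrec hV0 hV1 hVrec E hE0 hE1v hE1 hEsq
      (m + 2 * ((k : ℤ) + 1)) (2 * ((k : ℤ) + 1) + 2)
    have h2 := pVc p q hq2 U V hU0 hU1 hUrec hV0 hV1 hVrec E hE0 hE1v hE1 hEsq
      (m + 4 * ((k : ℤ) + 1))
    have hEe : E (m + 2 * ((k : ℤ) + 1)) = E (m + 2 * k) := by
      rw [show m + 2 * ((k : ℤ) + 1) = (m + 2 * k) + 2 by ring, hE2]
    have harg1 : (2 * ((k : ℤ) + 1)) + (m + 2 * k) = m + 4 * k + 2 := by ring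
    have harg2 : (2 * ((k : ℤ) + 1)) - (m + 2 * k) = 2 - m := by ring
    have harg3 : (2 * ((k : ℤ) + 1) + 2) + (m + 2 * ((k : ℤ) + 1)) = m + 4 * k + 6 := by ring
    have harg4 : (2 * ((k : ℤ) + 1) + 2) - (m + 2 * ((k : ℤ) + 1)) = 2 - m := by ring
    rw [harg1, harg2] at h1
    rw [harg3, harg4, hEe,
      show (2 * ((k : ℤ) + 1) + 2) = 2 * ((k : ℤ) + 1 + 1) by ring] at h3
    rw [show m + 4 * ((k : ℤ) + 1) - 2 = m + 4 * (k : ℤ) + 2 by ring,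
      show m + 4 * ((k : ℤ) + 1) + 2 = m + 4 * (k : ℤ) + 6 by ring] at h2
    push_cast
    linear_combination ih + h1 - h3 + h2

end Aux

private lemma Epow_even (q : ℤ) (hq : q = 1 ∨ q = -1) (x : ℤ) :
    q ^ x.natAbs = if Even x then 1 else q := by
  rcases hq with rfl | rfl
  · simp
  · rcases Int.even_or_odd x with hx | hx
    · rw [if_pos hx, Even.neg_one_pow (Int.natAbs_even.mpr hx)]
    · rw [if_neg (Int.not_even_iff_odd.mpr hx), Odd.neg_one_pow (Int.natAbs_odd.mpr hx)]

theorem stmt_13 (p q : ℤ) (hp : p ≠ 0) (hq : q = 1 ∨ q = -1)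
    (hΔ : p ^ 2 - 4 * q ≠ 0)
    (U V : ℤ → ℤ)
    (hU0 : U 0 = 0) (hU1 : U 1 = 1)
    (hUrec : ∀ n : ℤ, U n = p * U (n - 1) - q * U (n - 2))
    (hV0 : V 0 = 2) (hV1 : V 1 = p)
    (hVrec : ∀ n : ℤ, V n = p * V (n - 1) - q * V (n - 2))
    (a : ℤ → ℤ) (ha : ∀ n : ℤ, p * a n = U (2 * n))
    (r s t : ℤ) (n : ℕ) :
    (∑ i ∈ Finset.range (n + 1), V (s + 2 * i) * V (s + t + 2 * i)) +
        (p ^ 2 - 4 * q) * q ^ (s - r).natAbs * (∑ i ∈ Finset.range (n + 1), U (r + 2 * i) * U (r + t + 2 * i)) =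
      a ((n : ℤ) + 1) * V (s - r) * V (2 * n + r + s + t) := by
  have hq2 : q * q = 1 := by rcases hq with rfl | rfl <;> norm_num
  set E : ℤ → ℤ := fun x => q ^ x.natAbs with hE
  have hEeq : ∀ x : ℤ, E x = if Even x then 1 else q := fun x => Epow_even q hq x
  have hE0 : E 0 = 1 := by rw [hEeq]; norm_num
  have hE1v : E 1 = q := by rw [hEeq]; simp [Int.even_iff]
  have hE1 : ∀ x : ℤ, E (x - 1) = q * E x := by
    intro x
    by_cases hx : Even x
    · simp [hEeq, Int.even_sub_one, hx]
    · simp [hEeq, Int.even_sub_one, hx, hq2]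
  have hEsq : ∀ x : ℤ, E x * E x = 1 := by
    intro x
    by_cases hx : Even x <;> simp [hEeq, hx, hq2]
  have hE2 : ∀ x : ℤ, E (x + 2) = E x := by
    intro x
    by_cases hx : Even x <;> simp [hEeq, Int.even_add, hx]
  have hEadd : ∀ x y : ℤ, E x * E y = E (x + y) := by
    intro x y
    by_cases hx : Even x <;> by_cases hy : Even y <;>
      simp [hEeq, Int.even_add, hx, hy, hq2]
  have key : ∀ i : ℕ,
      V (s + 2 * (i : ℤ)) * V (s + t + 2 * (i : ℤ)) +
        (p ^ 2 - 4 * q) * E (s - r) * (U (r + 2 * (i : ℤ)) * U (r + t + 2 * (i : ℤ)))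
      = V (2 * s + t + 4 * (i : ℤ)) + E (s - r) * V (2 * r + t + 4 * (i : ℤ)) := by
    intro i
    have h1 := VV p q hq2 V hV0 hV1 hVrec E hE0 hE1v hE1 hEsq (s + 2 * (i : ℤ))
      (s + t + 2 * (i : ℤ))
    have h2 := DUU p q hq2 U V hU0 hU1 hUrec hV0 hV1 hVrec E hE0 hE1v hE1 hEsq
      (r + 2 * (i : ℤ)) (r + t + 2 * (i : ℤ))
    have h3 : E (s - r) * E (r + 2 * (i : ℤ)) = E (s + 2 * (i : ℤ)) := by
      rw [hEadd]; congr 1; ring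
    rw [show (s + t + 2 * (i : ℤ)) + (s + 2 * (i : ℤ)) = 2 * s + t + 4 * (i : ℤ) by ring,
        show (s + t + 2 * (i : ℤ)) - (s + 2 * (i : ℤ)) = t by ring] at h1
    rw [show (r + t + 2 * (i : ℤ)) + (r + 2 * (i : ℤ)) = 2 * r + t + 4 * (i : ℤ) by ring,
        show (r + t + 2 * (i : ℤ)) - (r + 2 * (i : ℤ)) = t by ring] at h2
    linear_combination (norm := ring_nf) h1 + E (s - r) * h2 - V t * h3
  have hsum : (∑ i ∈ Finset.range (n + 1), V (s + 2 * (i : ℤ)) * V (s + t + 2 * (i : ℤ))) +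
      (p ^ 2 - 4 * q) * E (s - r) *
        (∑ i ∈ Finset.range (n + 1), U (r + 2 * (i : ℤ)) * U (r + t + 2 * (i : ℤ)))
      = (∑ i ∈ Finset.range (n + 1), V (2 * s + t + 4 * (i : ℤ))) +
        E (s - r) * (∑ i ∈ Finset.range (n + 1), V (2 * r + t + 4 * (i : ℤ))) := by
    rw [Finset.mul_sum, ← Finset.sum_add_distrib, Finset.mul_sum, ← Finset.sum_add_distrib]
    exact Finset.sum_congr rfl fun i _ => key i
  have S1 := sumV p q hq2 U V hU0 hU1 hUrec hV0 hV1 hVrec E hE0 hE1v hE1 hEsq hE2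
    (2 * s + t) n
  have S2 := sumV p q hq2 U V hU0 hU1 hUrec hV0 hV1 hVrec E hE0 hE1v hE1 hEsq hE2
    (2 * r + t) n
  have hA := ha ((n : ℤ) + 1)
  have hVV := VV p q hq2 V hV0 hV1 hVrec E hE0 hE1v hE1 hEsq (s - r)
    (2 * (n : ℤ) + r + s + t)
  rw [show (2 * (n : ℤ) + r + s + t) + (s - r) = 2 * s + t + 2 * (n : ℤ) by ring,
      show (2 * (n : ℤ) + r + s + t) - (s - r) = 2 * r + t + 2 * (n : ℤ) by ring] at hVV
  have hEr : q ^ (s - r).natAbs = E (s - r) := rfl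
  apply mul_left_cancel₀ hp
  rw [hEr, hsum]
  linear_combination S1 + E (s - r) * S2 -
    V (s - r) * V (2 * (n : ℤ) + r + s + t) * hA - U (2 * ((n : ℤ) + 1)) * hVV
end

section
/- For every integer k and every natural number m, the following two identities hold: −2·q·(1 + d_m) + Σ_{i=0}^{2m} (−1)^i·V_{2k−1+2i}² = Δ·d_m·U_{2k+2m−1}², and −p²·q·Δ·c_m + Σ_{i=0}^{2m+1} (−1)^i·V_{2k−1+2i}² = −p·Δ·c_m·U_{2k+2m+1}·V_{2k+2m−1}. -/
set_option maxHeartbeats 1600000 in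
theorem stmt_16 (p q : ℤ) (hp : p ≠ 0) (hq : q = 1 ∨ q = -1)
    (hΔ : p ^ 2 - 4 * q ≠ 0)
    (U V : ℤ → ℤ)
    (hU0 : U 0 = 0) (hU1 : U 1 = 1)
    (hUrec : ∀ n : ℤ, U n = p * U (n - 1) - q * U (n - 2))
    (hV0 : V 0 = 2) (hV1 : V 1 = p)
    (hVrec : ∀ n : ℤ, V n = p * V (n - 1) - q * V (n - 2))
    (c d : ℤ → ℤ) (hc : ∀ n : ℤ, U 4 * c n = U (4 * n + 4)) (hd : ∀ n : ℤ, V 2 * d n = V (4 * n + 2))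
    (k : ℤ) (m : ℕ) :
    -2 * q * (1 + d m) + (∑ i ∈ Finset.range (2 * m + 1), (-1 : ℤ) ^ i * V (2 * k - 1 + 2 * i) ^ 2) =
        (p ^ 2 - 4 * q) * d m * U (2 * k + 2 * m - 1) ^ 2 ∧
      -(p ^ 2 * q * (p ^ 2 - 4 * q) * c m) + (∑ i ∈ Finset.range (2 * m + 2), (-1 : ℤ) ^ i * V (2 * k - 1 + 2 * i) ^ 2) =
        -(p * (p ^ 2 - 4 * q) * c m * (U (2 * k + 2 * m + 1) * V (2 * k + 2 * m - 1))) := by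
  have hq2 : q * q = 1 := by rcases hq with h | h <;> subst h <;> norm_num
  have hU : ∀ n : ℤ, U (n + 2) = p * U (n + 1) - q * U n := by
    intro n
    have h := hUrec (n + 2)
    rw [show n + 2 - 1 = n + 1 by ring, show n + 2 - 2 = n by ring] at h
    exact h
  have hV : ∀ n : ℤ, V (n + 2) = p * V (n + 1) - q * V n := by
    intro n
    have h := hVrec (n + 2)
    rw [show n + 2 - 1 = n + 1 by ring, show n + 2 - 2 = n by ring] at h
    exact h
  have hUd : ∀ n : ℤ, U n = q * (p * U (n + 1) - U (n + 2)) := by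
    intro n; linear_combination q * hU n - U n * hq2
  have hVd : ∀ n : ℤ, V n = q * (p * V (n + 1) - V (n + 2)) := by
    intro n; linear_combination q * hV n - V n * hq2
  have hU2 : U 2 = p := by
    have h := hU 0
    rw [show (0:ℤ) + 2 = 2 by norm_num, show (0:ℤ) + 1 = 1 by norm_num, hU0, hU1] at h
    linarith
  have hV2 : V 2 = p ^ 2 - 2 * q := by
    have h := hV 0
    rw [show (0:ℤ) + 2 = 2 by norm_num, show (0:ℤ) + 1 = 1 by norm_num, hV0, hV1] at h
    linear_combination h
  have hU3 : U 3 = p ^ 2 - q := by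
    have h := hU 1
    rw [show (1:ℤ) + 2 = 3 by norm_num, show (1:ℤ) + 1 = 2 by norm_num, hU1, hU2] at h
    linear_combination h
  have hU4 : U 4 = p ^ 3 - 2 * p * q := by
    have h := hU 2
    rw [show (2:ℤ) + 2 = 4 by norm_num, show (2:ℤ) + 1 = 3 by norm_num, hU2, hU3] at h
    linear_combination h
  have hpq : p ^ 2 - 2 * q ≠ 0 := by
    rcases hq with h | h <;> subst h <;> intro hc0
    · have h2 : p ≤ -2 ∨ p = -1 ∨ p = 1 ∨ 2 ≤ p := by omega
      rcases h2 with h | h | h | h <;> nlinarith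
    · nlinarith [sq_nonneg p]
  have hV2ne : V 2 ≠ 0 := by rw [hV2]; exact hpq
  have hU4ne : U 4 ≠ 0 := by
    rw [hU4, show p ^ 3 - 2 * p * q = p * (p ^ 2 - 2 * q) by ring]
    exact mul_ne_zero hp hpq
  have key1p : ∀ x : ℤ, (V x = 2 * U (x + 1) - p * U x) ∧ (V (x + 1) = 2 * U (x + 2) - p * U (x + 1)) := by
    intro x
    induction x using Int.induction_on with
    | zero =>
      constructor
      · rw [hV0, show (0:ℤ) + 1 = 1 by norm_num, hU1, hU0]; ring
      · rw [show (0:ℤ) + 1 = 1 by norm_num, show (0:ℤ) + 2 = 2 by norm_num, hV1, hU2, hU1]; ring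
    | succ i ih =>
      refine ⟨?_, ?_⟩
      · linear_combination (norm := ring_nf) ih.2
      · linear_combination (norm := ring_nf) hV i + p * ih.2 - q * ih.1 - 2 * hU (i + 1) + p * hU i
    | pred i ih =>
      refine ⟨?_, ?_⟩
      · linear_combination (norm := ring_nf) hVd (-(i:ℤ) - 1) + q * p * ih.1 - q * ih.2 - 2 * hUd (-(i:ℤ)) + p * hUd (-(i:ℤ) - 1)
      · linear_combination (norm := ring_nf) ih.1
  have key1 : ∀ x : ℤ, V x = 2 * U (x + 1) - p * U x := fun x => (key1p x).1
  have key2 : ∀ x : ℤ, (p ^ 2 - 4 * q) * U x = 2 * V (x + 1) - p * V x := by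
    intro x
    linear_combination (norm := ring_nf) (-2) * key1 (x + 1) + p * key1 x - 4 * hU x
  have addp : ∀ y : ℤ,
      (∀ x : ℤ, 2 * U (x + y) = U x * V y + U y * V x ∧
        2 * V (x + y) = V x * V y + (p ^ 2 - 4 * q) * (U x * U y)) ∧
      (∀ x : ℤ, 2 * U (x + (y + 1)) = U x * V (y + 1) + U (y + 1) * V x ∧
        2 * V (x + (y + 1)) = V x * V (y + 1) + (p ^ 2 - 4 * q) * (U x * U (y + 1))) := by
    intro y
    induction y using Int.induction_on with
    | zero =>
      constructor
      · intro x
        rw [hU0, hV0, add_zero]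
        exact ⟨by ring, by ring⟩
      · intro x
        rw [show (0:ℤ) + 1 = 1 by norm_num, hU1, hV1]
        exact ⟨by linear_combination (norm := ring_nf) (-1) * key1 x,
               by linear_combination (norm := ring_nf) (-1) * key2 x⟩
    | succ i ih =>
      refine ⟨ih.2, fun x => ⟨?_, ?_⟩⟩
      · linear_combination (norm := ring_nf) 2 * hU (x + i) + p * (ih.2 x).1 - q * (ih.1 x).1 -
          U x * hV i - V x * hU i
      · linear_combination (norm := ring_nf) 2 * hV (x + i) + p * (ih.2 x).2 - q * (ih.1 x).2 -
          V x * hV i - (p ^ 2 - 4 * q) * U x * hU i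
    | pred i ih =>
      refine ⟨fun x => ⟨?_, ?_⟩, fun x => ⟨?_, ?_⟩⟩
      · linear_combination (norm := ring_nf) 2 * hUd (x + (-(i:ℤ) - 1)) + q * p * (ih.1 x).1 -
          q * (ih.2 x).1 - U x * hVd (-(i:ℤ) - 1) - V x * hUd (-(i:ℤ) - 1)
      · linear_combination (norm := ring_nf) 2 * hVd (x + (-(i:ℤ) - 1)) + q * p * (ih.1 x).2 -
          q * (ih.2 x).2 - V x * hVd (-(i:ℤ) - 1) - (p ^ 2 - 4 * q) * U x * hUd (-(i:ℤ) - 1)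
      · linear_combination (norm := ring_nf) (ih.1 x).1
      · linear_combination (norm := ring_nf) (ih.1 x).2
  have add : ∀ x y : ℤ, 2 * U (x + y) = U x * V y + U y * V x ∧
      2 * V (x + y) = V x * V y + (p ^ 2 - 4 * q) * (U x * U y) := fun x y => (addp y).1 x
  have hE : ∀ t : ℤ, U (t + 2) ^ 2 - p * U (t + 2) * U (t + 1) + q * U (t + 1) ^ 2 =
      q * (U (t + 1) ^ 2 - p * U (t + 1) * U t + q * U t ^ 2) := by
    intro t; rw [hU t]; ring
  have hEe : ∀ t : ℤ, U (2 * t + 1) ^ 2 - p * U (2 * t + 1) * U (2 * t) + q * U (2 * t) ^ 2 = 1 := by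
    intro t
    induction t using Int.induction_on with
    | zero => rw [show 2 * (0:ℤ) + 1 = 1 by norm_num, show 2 * (0:ℤ) = 0 by norm_num, hU1, hU0]; ring
    | succ i ih =>
      linear_combination (norm := ring_nf) hE (2 * i + 1) + q * hE (2 * i) +
        (U (2 * i + 1) ^ 2 - p * U (2 * i + 1) * U (2 * i) + q * U (2 * i) ^ 2) * hq2 + ih
    | pred i ih =>
      linear_combination (norm := ring_nf) (-1) * hE (-2 * (i:ℤ) - 1) - q * hE (-2 * (i:ℤ) - 2) -
        (U (-2 * (i:ℤ) - 1) ^ 2 - p * U (-2 * (i:ℤ) - 1) * U (-2 * (i:ℤ) - 2) + q * U (-2 * (i:ℤ) - 2) ^ 2) * hq2 + ih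
  have hEo : ∀ t : ℤ, U (2 * t + 2) ^ 2 - p * U (2 * t + 2) * U (2 * t + 1) + q * U (2 * t + 1) ^ 2 = q := by
    intro t
    linear_combination (norm := ring_nf) hE (2 * t) + q * hEe t
  have normE : ∀ t : ℤ, V (2 * t) ^ 2 - (p ^ 2 - 4 * q) * U (2 * t) ^ 2 = 4 := by
    intro t
    linear_combination (norm := ring_nf)
      (V (2 * t) + 2 * U (2 * t + 1) - p * U (2 * t)) * key1 (2 * t) + 4 * hEe t
  have normO : ∀ t : ℤ, V (2 * t + 1) ^ 2 - (p ^ 2 - 4 * q) * U (2 * t + 1) ^ 2 = 4 * q := by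
    intro t
    linear_combination (norm := ring_nf)
      (V (2 * t + 1) + 2 * U (2 * t + 2) - p * U (2 * t + 1)) * key1 (2 * t + 1) + 4 * hEo t
  have mulVVe : ∀ x t : ℤ, V x * V (2 * t) = V (x + 2 * t) + V (x - 2 * t) := by
    intro x t
    have e1 : 2 * U x = U (x - 2 * t) * V (2 * t) + U (2 * t) * V (x - 2 * t) := by
      have h := (add (x - 2 * t) (2 * t)).1
      rw [show x - 2 * t + 2 * t = x by ring] at h; exact h
    have e2 : 2 * V x = V (x - 2 * t) * V (2 * t) + (p ^ 2 - 4 * q) * (U (x - 2 * t) * U (2 * t)) := by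
      have h := (add (x - 2 * t) (2 * t)).2
      rw [show x - 2 * t + 2 * t = x by ring] at h; exact h
    have e3 := (add x (2 * t)).2
    have eN := normE t
    have h4 : 4 * (V x * V (2 * t)) = 4 * (V (x + 2 * t) + V (x - 2 * t)) := by
      linear_combination (-2) * e3 + V (2 * t) * e2 - (p ^ 2 - 4 * q) * U (2 * t) * e1 +
        V (x - 2 * t) * eN
    linarith
  have mulUUe : ∀ x t : ℤ, (p ^ 2 - 4 * q) * (U x * U (2 * t)) = V (x + 2 * t) - V (x - 2 * t) := by
    intro x t
    have e1 : 2 * U x = U (x - 2 * t) * V (2 * t) + U (2 * t) * V (x - 2 * t) := by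
      have h := (add (x - 2 * t) (2 * t)).1
      rw [show x - 2 * t + 2 * t = x by ring] at h; exact h
    have e2 : 2 * V x = V (x - 2 * t) * V (2 * t) + (p ^ 2 - 4 * q) * (U (x - 2 * t) * U (2 * t)) := by
      have h := (add (x - 2 * t) (2 * t)).2
      rw [show x - 2 * t + 2 * t = x by ring] at h; exact h
    have e3 := (add x (2 * t)).2
    have eN := normE t
    have h4 : 4 * ((p ^ 2 - 4 * q) * (U x * U (2 * t))) = 4 * (V (x + 2 * t) - V (x - 2 * t)) := by
      linear_combination (-2) * e3 - V (2 * t) * e2 + (p ^ 2 - 4 * q) * U (2 * t) * e1 -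
        V (x - 2 * t) * eN
    linarith
  have mulVVo : ∀ x t : ℤ, V x * V (2 * t + 1) = V (x + (2 * t + 1)) + q * V (x - (2 * t + 1)) := by
    intro x t
    have e1 : 2 * U x = U (x - (2 * t + 1)) * V (2 * t + 1) + U (2 * t + 1) * V (x - (2 * t + 1)) := by
      have h := (add (x - (2 * t + 1)) (2 * t + 1)).1
      rw [show x - (2 * t + 1) + (2 * t + 1) = x by ring] at h; exact h
    have e2 : 2 * V x = V (x - (2 * t + 1)) * V (2 * t + 1) +
        (p ^ 2 - 4 * q) * (U (x - (2 * t + 1)) * U (2 * t + 1)) := by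
      have h := (add (x - (2 * t + 1)) (2 * t + 1)).2
      rw [show x - (2 * t + 1) + (2 * t + 1) = x by ring] at h; exact h
    have e3 := (add x (2 * t + 1)).2
    have eN := normO t
    have h4 : 4 * (V x * V (2 * t + 1)) = 4 * (V (x + (2 * t + 1)) + q * V (x - (2 * t + 1))) := by
      linear_combination (-2) * e3 + V (2 * t + 1) * e2 - (p ^ 2 - 4 * q) * U (2 * t + 1) * e1 +
        V (x - (2 * t + 1)) * eN
    linarith
  have mulUUo : ∀ x t : ℤ, (p ^ 2 - 4 * q) * (U x * U (2 * t + 1)) =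
      V (x + (2 * t + 1)) - q * V (x - (2 * t + 1)) := by
    intro x t
    have e1 : 2 * U x = U (x - (2 * t + 1)) * V (2 * t + 1) + U (2 * t + 1) * V (x - (2 * t + 1)) := by
      have h := (add (x - (2 * t + 1)) (2 * t + 1)).1
      rw [show x - (2 * t + 1) + (2 * t + 1) = x by ring] at h; exact h
    have e2 : 2 * V x = V (x - (2 * t + 1)) * V (2 * t + 1) +
        (p ^ 2 - 4 * q) * (U (x - (2 * t + 1)) * U (2 * t + 1)) := by
      have h := (add (x - (2 * t + 1)) (2 * t + 1)).2
      rw [show x - (2 * t + 1) + (2 * t + 1) = x by ring] at h; exact h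
    have e3 := (add x (2 * t + 1)).2
    have eN := normO t
    have h4 : 4 * ((p ^ 2 - 4 * q) * (U x * U (2 * t + 1))) =
        4 * (V (x + (2 * t + 1)) - q * V (x - (2 * t + 1))) := by
      linear_combination (-2) * e3 - V (2 * t + 1) * e2 + (p ^ 2 - 4 * q) * U (2 * t + 1) * e1 -
        V (x - (2 * t + 1)) * eN
    linarith
  have mulUVo : ∀ x t : ℤ, U x * V (2 * t + 1) = U (x + (2 * t + 1)) + q * U (x - (2 * t + 1)) := by
    intro x t
    have e1 : 2 * U x = U (x - (2 * t + 1)) * V (2 * t + 1) + U (2 * t + 1) * V (x - (2 * t + 1)) := by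
      have h := (add (x - (2 * t + 1)) (2 * t + 1)).1
      rw [show x - (2 * t + 1) + (2 * t + 1) = x by ring] at h; exact h
    have e2 : 2 * V x = V (x - (2 * t + 1)) * V (2 * t + 1) +
        (p ^ 2 - 4 * q) * (U (x - (2 * t + 1)) * U (2 * t + 1)) := by
      have h := (add (x - (2 * t + 1)) (2 * t + 1)).2
      rw [show x - (2 * t + 1) + (2 * t + 1) = x by ring] at h; exact h
    have e3 := (add x (2 * t + 1)).1
    have eN := normO t
    have h4 : 4 * (U x * V (2 * t + 1)) = 4 * (U (x + (2 * t + 1)) + q * U (x - (2 * t + 1))) := by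
      linear_combination (-2) * e3 + V (2 * t + 1) * e1 - U (2 * t + 1) * e2 +
        U (x - (2 * t + 1)) * eN
    linarith
  have sqVo : ∀ t : ℤ, V (2 * t + 1) ^ 2 = V (2 * (2 * t + 1)) + 2 * q := by
    intro t
    have h := mulVVo (2 * t + 1) t
    rw [show 2 * t + 1 - (2 * t + 1) = 0 by ring, hV0] at h
    linear_combination (norm := ring_nf) h
  have sqUo : ∀ t : ℤ, (p ^ 2 - 4 * q) * U (2 * t + 1) ^ 2 = V (2 * (2 * t + 1)) - 2 * q := by
    intro t
    have h := mulUUo (2 * t + 1) t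
    rw [show 2 * t + 1 - (2 * t + 1) = 0 by ring, hV0] at h
    linear_combination (norm := ring_nf) h
  have M1 : ∀ n : ℕ, V 2 * (∑ i ∈ Finset.range (2 * n + 1), (-1 : ℤ) ^ i * V (2 * k - 1 + 2 * i) ^ 2) =
      2 * q * V 2 + V (4 * (n : ℤ) + 2) * V (2 * (2 * k - 1) + 4 * (n : ℤ)) := by
    intro n
    induction n with
    | zero =>
      rw [show 2 * 0 + 1 = 1 from rfl, Finset.sum_range_one]
      push_cast
      linear_combination (norm := ring_nf) V 2 * sqVo (k - 1)
    | succ n ih =>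
      rw [show 2 * (n + 1) + 1 = 2 * n + 1 + 1 + 1 by ring, Finset.sum_range_succ,
        Finset.sum_range_succ]
      have o1 : ((-1 : ℤ)) ^ (2 * n + 1) = -1 := Odd.neg_one_pow ⟨n, by ring⟩
      have o2 : ((-1 : ℤ)) ^ (2 * n + 1 + 1) = 1 := Even.neg_one_pow ⟨n + 1, by ring⟩
      rw [o1, o2]
      set T := ∑ i ∈ Finset.range (2 * n + 1), (-1 : ℤ) ^ i * V (2 * k - 1 + 2 * i) ^ 2 with hT
      push_cast
      linear_combination (norm := ring_nf) ih - V 2 * sqVo (k + 2 * (n : ℤ)) +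
        V 2 * sqVo (k + 2 * (n : ℤ) + 1) +
        mulVVe (2 * (2 * k - 1) + 4 * (n : ℤ)) (2 * (n : ℤ) + 1) -
        mulVVe (2 * (2 * k - 1) + 4 * (n : ℤ) + 4) (2 * (n : ℤ) + 3) +
        mulVVe (2 * (2 * k - 1) + 8 * (n : ℤ) + 8) 1 -
        mulVVe (2 * (2 * k - 1) + 8 * (n : ℤ) + 4) 1
  have M2 : ∀ n : ℕ, U 4 * (∑ i ∈ Finset.range (2 * n + 2), (-1 : ℤ) ^ i * V (2 * k - 1 + 2 * i) ^ 2) =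
      -(p * (p ^ 2 - 4 * q)) * (U (4 * (n : ℤ) + 4) * U (2 * (2 * k - 1) + 4 * (n : ℤ) + 2)) := by
    intro n
    induction n with
    | zero =>
      rw [show 2 * 0 + 2 = 0 + 1 + 1 from rfl, Finset.sum_range_succ, Finset.sum_range_succ,
        Finset.sum_range_zero]
      push_cast
      linear_combination (norm := ring_nf) U 4 * sqVo (k - 1) - U 4 * sqVo k +
        U 4 * mulUUe (2 * (2 * k - 1) + 2) 1 -
        (p ^ 2 - 4 * q) * U 4 * U (2 * (2 * k - 1) + 2) * hU2
    | succ n ih =>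
      rw [show 2 * (n + 1) + 2 = 2 * n + 2 + 1 + 1 by ring, Finset.sum_range_succ,
        Finset.sum_range_succ]
      have o1 : ((-1 : ℤ)) ^ (2 * n + 2) = 1 := Even.neg_one_pow ⟨n + 1, by ring⟩
      have o2 : ((-1 : ℤ)) ^ (2 * n + 2 + 1) = -1 := Odd.neg_one_pow ⟨n + 1, by ring⟩
      rw [o1, o2]
      set T := ∑ i ∈ Finset.range (2 * n + 2), (-1 : ℤ) ^ i * V (2 * k - 1 + 2 * i) ^ 2 with hT
      push_cast
      linear_combination (norm := ring_nf) ih + U 4 * sqVo (k + 2 * (n : ℤ) + 1) -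
        U 4 * sqVo (k + 2 * (n : ℤ) + 2) +
        p * mulUUe (2 * (2 * k - 1) + 4 * (n : ℤ) + 6) (2 * (n : ℤ) + 4) -
        p * mulUUe (2 * (2 * k - 1) + 4 * (n : ℤ) + 2) (2 * (n : ℤ) + 2) -
        p * mulUUe (2 * (2 * k - 1) + 8 * (n : ℤ) + 10) 2 +
        U 4 * mulUUe (2 * (2 * k - 1) + 8 * (n : ℤ) + 10) 1 -
        (p ^ 2 - 4 * q) * U 4 * U (2 * (2 * k - 1) + 8 * (n : ℤ) + 10) * hU2
  constructor
  · have hM := M1 m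
    apply mul_left_cancel₀ hV2ne
    set T := ∑ i ∈ Finset.range (2 * m + 1), (-1 : ℤ) ^ i * V (2 * k - 1 + 2 * i) ^ 2 with hT
    linear_combination (norm := ring_nf) hM - V (2 * (2 * k - 1) + 4 * (m : ℤ)) * hd m -
      V 2 * d m * sqUo (k + (m : ℤ) - 1)
  · have hM := M2 m
    apply mul_left_cancel₀ hU4ne
    set T := ∑ i ∈ Finset.range (2 * m + 2), (-1 : ℤ) ^ i * V (2 * k - 1 + 2 * i) ^ 2 with hT
    linear_combination (norm := ring_nf) hM +
      p * (p ^ 2 - 4 * q) * U 4 * c m * mulUVo (2 * k + 2 * (m : ℤ) + 1) (k + (m : ℤ) - 1) +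
      p * (p ^ 2 - 4 * q) * U (2 * (2 * k - 1) + 4 * (m : ℤ) + 2) * hc m +
      p * q * (p ^ 2 - 4 * q) * U 4 * c m * hU2
end
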